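/- arXiv:1203.3418 — 5 statements merged into one kernel-verified Lean document; each statement's English description precedes it below -/
import Mathlib

section
/- Let G be a non-compact finite-dimensional real Lie group and let E := C^∞(G) be the space of smooth complex-valued functions on G with the compact-open C^∞-topology, made a topological G-module via π(g,γ)(x) := γ(g^{-1}x). Then neither E nor E^∞ is a topological C^∞_c(G)-module; that is, both maps (γ,v) ↦ Π(γ,v), C^∞_c(G) × E → E and C^∞_c(G) × E^∞ → E^∞, are discontinuous. -/
open Filter Topology Set MeasureTheory
open scoped Pointwise ENNReal

set_option linter.unusedSectionVars false

noncomputable section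

section MB

variable {X E : Type*} [AddCommGroup X] [Module ℝ X] [TopologicalSpace X]
  [AddCommGroup E] [Module ℝ E] [TopologicalSpace E]

/-- The (Gateaux) directional derivative of `f` at `x` in direction `v`. -/
def HasDirDerivAt (f : X → E) (x v : X) (y : E) : Prop :=
  Tendsto (fun t : ℝ => t⁻¹ • (f (x + t • v) - f x)) (𝓝[≠] (0 : ℝ)) (𝓝 y)

/-- A family of iterated directional derivatives of `f` on `U`, witnessing smoothness
in the Michal–Bastiani sense: `D j x v` represents `d^{(j)}f(x; v 0, …, v (j-1))`. -/
structure MBDerivFamily (f : X → E) (U : Set X) where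
  D : ℕ → X → (ℕ → X) → E
  d_zero : ∀ x v, D 0 x v = f x
  hasDeriv : ∀ (j : ℕ) (x : X) (v : ℕ → X), x ∈ U →
    HasDirDerivAt (fun x' => D j x' v) x (v j) (D (j + 1) x v)
  depends : ∀ (j : ℕ) (x : X) (v w : ℕ → X), (∀ i < j, v i = w i) → D j x v = D j x w
  cont : ∀ j : ℕ, ContinuousOn (fun p : X × (ℕ → X) => D j p.1 p.2)
    (U ×ˢ (univ : Set (ℕ → X)))

/-- `f` is `C^∞` on `U` in the Michal–Bastiani sense: `f` is continuous on `U` and all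
iterated directional derivatives exist on `U` and are continuous. -/
def IsMBSmoothOn (f : X → E) (U : Set X) : Prop :=
  ContinuousOn f U ∧ Nonempty (MBDerivFamily f U)

theorem HasDirDerivAt.add' [ContinuousAdd E] {f g : X → E} {x v : X} {y₁ y₂ : E}
    (hf : HasDirDerivAt f x v y₁) (hg : HasDirDerivAt g x v y₂) :
    HasDirDerivAt (fun x' => f x' + g x') x v (y₁ + y₂) := by
  have h := hf.add hg
  refine h.congr fun t => ?_
  rw [← smul_add, add_sub_add_comm]

theorem HasDirDerivAt.constSMul {R : Type*} [Semiring R] [Module R E]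
    [SMulCommClass R ℝ E] [TopologicalSpace R] [ContinuousConstSMul R E]
    (c : R) {f : X → E} {x v : X} {y : E} (hf : HasDirDerivAt f x v y) :
    HasDirDerivAt (fun x' => c • f x') x v (c • y) := by
  have h := hf.const_smul c
  refine h.congr fun t => ?_
  rw [← smul_sub, smul_comm]

theorem IsMBSmoothOn.add {f g : X → E} {U : Set X} [ContinuousAdd E]
    (hf : IsMBSmoothOn f U) (hg : IsMBSmoothOn g U) : IsMBSmoothOn (f + g) U := by
  obtain ⟨hfc, ⟨F⟩⟩ := hf
  obtain ⟨hgc, ⟨G⟩⟩ := hg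
  refine ⟨hfc.add hgc, ⟨⟨fun j x v => F.D j x v + G.D j x v, ?_, ?_, ?_, ?_⟩⟩⟩
  · intro x v; simp [F.d_zero, G.d_zero]
  · intro j x v hx
    exact (F.hasDeriv j x v hx).add' (G.hasDeriv j x v hx)
  · intro j x v w h; rw [F.depends j x v w h, G.depends j x v w h]
  · intro j; exact (F.cont j).add (G.cont j)

theorem IsMBSmoothOn.constSMul {R : Type*} [Semiring R] [Module R E]
    [SMulCommClass R ℝ E] [TopologicalSpace R] [ContinuousConstSMul R E]
    (c : R) {f : X → E} {U : Set X} (hf : IsMBSmoothOn f U) :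
    IsMBSmoothOn (c • f) U := by
  obtain ⟨hfc, ⟨F⟩⟩ := hf
  refine ⟨hfc.const_smul c, ⟨⟨fun j x v => c • F.D j x v, ?_, ?_, ?_, ?_⟩⟩⟩
  · intro x v; simp [F.d_zero]
  · intro j x v hx
    exact (F.hasDeriv j x v hx).constSMul c
  · intro j x v w h; rw [F.depends j x v w h]
  · intro j; exact (F.cont j).const_smul c

theorem isMBSmoothOn_zero (U : Set X) : IsMBSmoothOn (0 : X → E) U := by
  refine ⟨continuousOn_const, ⟨⟨fun _ _ _ => 0, fun _ _ => rfl, ?_, fun _ _ _ _ _ => rfl,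
    fun _ => continuousOn_const⟩⟩⟩
  intro j x v hx
  unfold HasDirDerivAt
  simpa using tendsto_const_nhds

end MB

section Manifold

variable (k : ℕ) {G E : Type*} [TopologicalSpace G]
  [ChartedSpace (EuclideanSpace ℝ (Fin k)) G]
  [AddCommGroup E] [Module ℝ E] [TopologicalSpace E]

/-- A map from a manifold `G` (modelled on `ℝ^k`) to a locally convex space `E` is
smooth (in the Michal–Bastiani sense) if it is continuous and `C^∞` in all charts. -/
def MBSmooth (f : G → E) : Prop :=
  Continuous f ∧ ∀ x : G,
    IsMBSmoothOn (f ∘ (chartAt (EuclideanSpace ℝ (Fin k)) x).symm)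
      (chartAt (EuclideanSpace ℝ (Fin k)) x).target

theorem MBSmooth.add [ContinuousAdd E] {f g : G → E} (hf : MBSmooth k f)
    (hg : MBSmooth k g) : MBSmooth k (f + g) :=
  ⟨hf.1.add hg.1, fun x => (hf.2 x).add (hg.2 x)⟩

theorem MBSmooth.constSMul {R : Type*} [Semiring R] [Module R E]
    [SMulCommClass R ℝ E] [TopologicalSpace R] [ContinuousConstSMul R E]
    (c : R) {f : G → E} (hf : MBSmooth k f) : MBSmooth k (c • f) :=
  ⟨hf.1.const_smul c, fun x => (hf.2 x).constSMul c⟩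

theorem mbSmooth_zero : MBSmooth k (0 : G → E) :=
  ⟨continuous_const, fun _ => isMBSmoothOn_zero _⟩

end Manifold

section Spaces

variable (k : ℕ) (G : Type*) [TopologicalSpace G]
  [ChartedSpace (EuclideanSpace ℝ (Fin k)) G]
  (E : Type*) [AddCommGroup E] [Module ℂ E] [Module ℝ E] [IsScalarTower ℝ ℂ E]
  [SMulCommClass ℂ ℝ E] [TopologicalSpace E] [IsTopologicalAddGroup E]
  [ContinuousConstSMul ℂ E]

/-- The space `C^∞(G,E)` of smooth `E`-valued maps on `G`, as a subspace of `G → E`. -/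
def smoothSubmodule : Submodule ℂ (G → E) where
  carrier := {f | MBSmooth k f}
  add_mem' hf hg := hf.add k hg
  zero_mem' := mbSmooth_zero k
  smul_mem' c _f hf := hf.constSMul k c

/-- The space `C^∞(G,E)` of smooth `E`-valued maps on `G`. -/
def SmoothMap' : Type _ := ↥(smoothSubmodule k G E)

instance : AddCommGroup (SmoothMap' k G E) :=
  inferInstanceAs (AddCommGroup ↥(smoothSubmodule k G E))

instance : Module ℂ (SmoothMap' k G E) :=
  inferInstanceAs (Module ℂ ↥(smoothSubmodule k G E))

instance : Module ℝ (SmoothMap' k G E) :=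
  inferInstanceAs (Module ℝ ↥(smoothSubmodule k G E))

/-- A choice of a family of iterated directional derivatives of `f` on `U`. -/
def mbD {X F : Type*} [AddCommGroup X] [Module ℝ X] [TopologicalSpace X]
    [AddCommGroup F] [Module ℝ F] [TopologicalSpace F]
    (f : X → F) (U : Set X) : ℕ → X → (ℕ → X) → F :=
  letI := Classical.dec (IsMBSmoothOn f U)
  if h : IsMBSmoothOn f U then h.2.some.D else fun _ _ _ => 0

/-- The `j`-th iterated derivative of `γ ∈ C^∞(G,E)` read in the chart at `x`, as a
continuous map on `(chart target) × (directions)`. -/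
def chartDMap (x : G) (j : ℕ) (γ : SmoothMap' k G E) :
    C(↥(((chartAt (EuclideanSpace ℝ (Fin k)) x).target) ×ˢ
        (univ : Set (ℕ → EuclideanSpace ℝ (Fin k)))), E) := by
  refine ⟨fun p => mbD (γ.1 ∘ (chartAt (EuclideanSpace ℝ (Fin k)) x).symm)
    (chartAt (EuclideanSpace ℝ (Fin k)) x).target j p.val.1 p.val.2, ?_⟩
  have h : IsMBSmoothOn (γ.1 ∘ (chartAt (EuclideanSpace ℝ (Fin k)) x).symm)
      (chartAt (EuclideanSpace ℝ (Fin k)) x).target := γ.2.2 x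
  simp only [mbD, dif_pos h]
  exact (h.2.some.cont j).restrict

/-- The compact-open `C^∞`-topology on `C^∞(G,E)`: the initial topology with respect
to all the chart-derivative maps (with the compact-open topology on their targets). -/
instance : TopologicalSpace (SmoothMap' k G E) :=
  ⨅ (x : G) (j : ℕ), TopologicalSpace.induced (chartDMap k G E x j) inferInstance

end Spaces

section Vectors

variable (k : ℕ) {G : Type*} [Group G] [TopologicalSpace G]
  [ChartedSpace (EuclideanSpace ℝ (Fin k)) G]

/-- The space of test functions `C^∞_c(G)` (compactly supported smooth functions),
as a subspace of `G → ℂ`. -/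
def testSubmodule : Submodule ℂ (G → ℂ) where
  carrier := {γ | MBSmooth k γ ∧ HasCompactSupport γ}
  add_mem' hf hg := ⟨hf.1.add k hg.1, hf.2.add hg.2⟩
  zero_mem' := ⟨mbSmooth_zero k, by
    simpa [HasCompactSupport, tsupport] using isCompact_empty⟩
  smul_mem' c γ hγ := ⟨hγ.1.constSMul k c,
    hγ.2.mono (Function.support_const_smul_subset c γ)⟩

variable {E : Type*} [AddCommGroup E] [Module ℂ E] [Module ℝ E]
  [IsScalarTower ℝ ℂ E] [SMulCommClass ℂ ℝ E] [TopologicalSpace E]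
  [IsTopologicalAddGroup E] [ContinuousConstSMul ℂ E]

/-- The space `E^∞` of smooth vectors of a topological `G`-module `(E,π)`. -/
def smoothVectors (π : G → E → E) (hπlin : ∀ g, IsLinearMap ℂ (π g)) :
    Submodule ℂ E where
  carrier := {v | MBSmooth k fun g => π g v}
  add_mem' {v w} hv hw := by
    have h : (fun g => π g (v + w)) = (fun g => π g v) + fun g => π g w :=
      funext fun g => (hπlin g).map_add v w
    rw [Set.mem_setOf_eq, h]
    exact hv.add k hw
  zero_mem' := by
    have h : (fun g => π g (0 : E)) = (0 : G → E) :=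
      funext fun g => (hπlin g).map_zero
    rw [Set.mem_setOf_eq, h]
    exact mbSmooth_zero k
  smul_mem' c v hv := by
    have h : (fun g => π g (c • v)) = c • fun g => π g v :=
      funext fun g => (hπlin g).map_smul c v
    rw [Set.mem_setOf_eq, h]
    exact hv.constSMul k c

end Vectors

/-- `e` is the weak integral of `f` with respect to `μ`. -/
def IsWeakIntegral {α E : Type*} [MeasurableSpace α]
    [AddCommGroup E] [Module ℂ E] [TopologicalSpace E]
    (μ : Measure α) (f : α → E) (e : E) : Prop :=
  ∀ l : E →L[ℂ] ℂ, Integrable (fun a => l (f a)) μ ∧ ∫ a, l (f a) ∂μ = l e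

/-- A locally convex space is sequentially complete if every Cauchy sequence converges. -/
def SeqComplete (E : Type*) [UniformSpace E] : Prop :=
  ∀ u : ℕ → E, CauchySeq u → ∃ x, Tendsto u atTop (𝓝 x)

/-- The metric convex compactness property: every metrizable compact subset has a
relatively compact convex hull. -/
def MetricCCP (E : Type*) [AddCommGroup E] [Module ℝ E] [TopologicalSpace E] : Prop :=
  ∀ K : Set E, IsCompact K → TopologicalSpace.MetrizableSpace K →
    IsCompact (closure (convexHull ℝ K))

section Helpers

variable (k : ℕ) {G : Type*} [Group G] [TopologicalSpace G]
  [ChartedSpace (EuclideanSpace ℝ (Fin k)) G]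

theorem mem_testSubmodule {γ : G → ℂ} :
    γ ∈ testSubmodule k (G := G) ↔ MBSmooth k γ ∧ HasCompactSupport γ :=
  Iff.rfl

/-- The inclusion `C^∞_c(G) → C^∞(G)`. -/
def toSmoothMap (γ : ↥(testSubmodule k (G := G))) : SmoothMap' k G ℂ :=
  ⟨γ.1, ((mem_testSubmodule k).mp γ.2).1⟩

variable {E : Type*} [AddCommGroup E] [Module ℂ E] [Module ℝ E]
  [IsScalarTower ℝ ℂ E] [SMulCommClass ℂ ℝ E] [TopologicalSpace E]
  [IsTopologicalAddGroup E] [ContinuousConstSMul ℂ E]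

/-- The map `Φ : E^∞ → C^∞(G,E)`, `v ↦ π_v` (the orbit map), which induces the
topology of `E^∞`. -/
def orbitMap (π : G → E → E) (hπlin : ∀ g, IsLinearMap ℂ (π g))
    (v : ↥(smoothVectors k π hπlin)) : SmoothMap' k G E :=
  ⟨fun g => π g v.1, v.2⟩

end Helpers

/-- A seminorm `p` on a topological `G`-module is `G`-continuous if the action
`π : G × (E,p) → (E,p)` is continuous. -/
def GContSeminorm {G E : Type*} [TopologicalSpace G] [AddCommGroup E] [Module ℂ E]
    (π : G → E → E) (p : Seminorm ℂ E) : Prop :=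
  ∀ (g : G) (v : E), ∀ ε > 0, ∃ U ∈ 𝓝 g, ∃ δ > 0,
    ∀ g' ∈ U, ∀ v' : E, p (v' - v) < δ → p (π g' v' - π g v) < ε

/-- A topological `G`-module is proto-Banach if its topology is defined by a set of
`G`-continuous seminorms. -/
def ProtoBanach {G E : Type*} [TopologicalSpace G] [AddCommGroup E] [Module ℂ E]
    [TopologicalSpace E] (π : G → E → E) : Prop :=
  ∃ s : Set (Seminorm ℂ E), ∃ hs : s.Nonempty,
    (letI : Nonempty s := hs.to_subtype
     WithSeminorms fun p : s => (p : Seminorm ℂ E)) ∧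
    ∀ p ∈ s, GContSeminorm π p

section MoreInstances

variable (k : ℕ) (G : Type*) [TopologicalSpace G]
  [ChartedSpace (EuclideanSpace ℝ (Fin k)) G]
  (E : Type*) [AddCommGroup E] [Module ℂ E] [Module ℝ E] [IsScalarTower ℝ ℂ E]
  [SMulCommClass ℂ ℝ E] [TopologicalSpace E] [IsTopologicalAddGroup E]
  [ContinuousConstSMul ℂ E]

instance : IsScalarTower ℝ ℂ (SmoothMap' k G E) :=
  inferInstanceAs (IsScalarTower ℝ ℂ ↥(smoothSubmodule k G E))

instance : SMulCommClass ℂ ℝ (SmoothMap' k G E) := by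
  constructor
  intro c r x
  apply Subtype.ext
  exact smul_comm c r x.1

end MoreInstances

section AuxGeneric

/-- A directional derivative from a Fréchet derivative. -/
theorem HasFDerivAt.hasDirDerivAt {X F : Type*} [NormedAddCommGroup X] [NormedSpace ℝ X]
    [NormedAddCommGroup F] [NormedSpace ℝ F] {f : X → F} {f' : X →L[ℝ] F} {x : X}
    (h : HasFDerivAt f f' x) (v : X) : HasDirDerivAt f x v (f' v) := by
  have hline : HasDerivAt (fun t : ℝ => x + t • v) v 0 := by
    simpa using ((hasDerivAt_id (0 : ℝ)).smul_const v).const_add x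
  have h' : HasFDerivAt f f' (x + (0 : ℝ) • v) := by simpa using h
  have h2 : HasDerivAt (fun t : ℝ => f (x + t • v)) (f' v) 0 :=
    h'.comp_hasDerivAt (0 : ℝ) hline
  rw [hasDerivAt_iff_tendsto_slope] at h2
  refine h2.congr fun t => ?_
  simp [slope, zero_smul, add_zero, sub_zero, vsub_eq_sub]

/-- If `ℓ ∘ f` vanishes on an open set `W ⊆ U`, then `ℓ` kills all the iterated
directional derivatives of any `MBDerivFamily` of `f` on `U`, at points of `W`. -/
theorem MBDerivFamily.ell_eq_zero {X F F' : Type*} [AddCommGroup X] [Module ℝ X]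
    [TopologicalSpace X] [IsTopologicalAddGroup X] [ContinuousSMul ℝ X]
    [AddCommGroup F] [Module ℝ F] [TopologicalSpace F]
    [AddCommGroup F'] [Module ℝ F'] [TopologicalSpace F'] [T2Space F']
    {f : X → F} {U : Set X} (Dfam : MBDerivFamily f U)
    (ℓ : F → F') (hsub : ∀ a b : F, ℓ (a - b) = ℓ a - ℓ b)
    (hsmul : ∀ (t : ℝ) (a : F), ℓ (t • a) = t • ℓ a) (hℓc : Continuous ℓ)
    {W : Set X} (hW : IsOpen W) (hWU : W ⊆ U) (hfW : ∀ x ∈ W, ℓ (f x) = 0) :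
    ∀ (j : ℕ) (x : X) (v : ℕ → X), x ∈ W → ℓ (Dfam.D j x v) = 0 := by
  intro j
  induction j with
  | zero => intro x v hx; rw [Dfam.d_zero]; exact hfW x hx
  | succ j ih =>
    intro x v hx
    have hd := Dfam.hasDeriv j x v (hWU hx)
    have h1 : Tendsto (fun t : ℝ => ℓ (t⁻¹ • (Dfam.D j (x + t • v j) v - Dfam.D j x v)))
        (𝓝[≠] (0 : ℝ)) (𝓝 (ℓ (Dfam.D (j + 1) x v))) := (hℓc.tendsto _).comp hd
    have hcont : Tendsto (fun t : ℝ => x + t • v j) (𝓝 0) (𝓝 x) := by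
      have hc : Continuous fun t : ℝ => x + t • v j :=
        continuous_const.add (continuous_id.smul continuous_const)
      simpa using hc.tendsto 0
    have hev : ∀ᶠ t : ℝ in 𝓝 0, x + t • v j ∈ W := hcont.eventually (hW.eventually_mem hx)
    have h2 : ∀ᶠ t : ℝ in 𝓝[≠] (0 : ℝ),
        ℓ (t⁻¹ • (Dfam.D j (x + t • v j) v - Dfam.D j x v)) = 0 := by
      filter_upwards [nhdsWithin_le_nhds hev] with t ht
      rw [hsmul, hsub, ih _ v ht, ih _ v hx, sub_self, smul_zero]
    have h3 : Tendsto (fun t : ℝ => ℓ (t⁻¹ • (Dfam.D j (x + t • v j) v - Dfam.D j x v)))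
        (𝓝[≠] (0 : ℝ)) (𝓝 0) :=
      Tendsto.congr' (h2.mono fun t ht => ht.symm) tendsto_const_nhds
    exact tendsto_nhds_unique h1 h3

/-- A `C^∞` function (in the usual sense) on an open set of a normed space is
Michal–Bastiani smooth there. -/
theorem ContDiffOn.isMBSmoothOn {X F : Type*} [NormedAddCommGroup X] [NormedSpace ℝ X]
    [NormedAddCommGroup F] [NormedSpace ℝ F]
    {f : X → F} {U : Set X} (hf : ContDiffOn ℝ (⊤ : ℕ∞) f U) (hU : IsOpen U) :
    IsMBSmoothOn f U := by
  have hUD : UniqueDiffOn ℝ U := hU.uniqueDiffOn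
  refine ⟨hf.continuousOn, ⟨⟨fun j x v =>
    iteratedFDerivWithin ℝ j f U x (fun i : Fin j => v (j - 1 - (i : ℕ))), ?_, ?_, ?_, ?_⟩⟩⟩
  · intro x v; exact iteratedFDerivWithin_zero_apply _
  · intro j x v hx
    show HasDirDerivAt
      (fun x' => iteratedFDerivWithin ℝ j f U x' fun i : Fin j => v (j - 1 - (i : ℕ)))
      x (v j)
      (iteratedFDerivWithin ℝ (j + 1) f U x fun i : Fin (j + 1) => v (j + 1 - 1 - (i : ℕ)))
    set m : Fin j → X := fun i => v (j - 1 - (i : ℕ)) with hm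
    have hdiff : DifferentiableOn ℝ (iteratedFDerivWithin ℝ j f U) U :=
      hf.differentiableOn_iteratedFDerivWithin (by exact_mod_cast lt_top_iff_ne_top.2 (by simp)) hUD
    have hdAt : DifferentiableAt ℝ (iteratedFDerivWithin ℝ j f U) x :=
      (hdiff x hx).differentiableAt (hU.mem_nhds hx)
    have hfd : HasFDerivAt (iteratedFDerivWithin ℝ j f U)
        (fderivWithin ℝ (iteratedFDerivWithin ℝ j f U) U x) x := by
      rw [fderivWithin_of_isOpen hU hx]; exact hdAt.hasFDerivAt
    have happ : HasDirDerivAt (fun x' => iteratedFDerivWithin ℝ j f U x' m) x (v j)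
        ((ContinuousMultilinearMap.apply ℝ (fun _ : Fin j => X) F m)
          (fderivWithin ℝ (iteratedFDerivWithin ℝ j f U) U x (v j))) := by
      have h := (((ContinuousMultilinearMap.apply ℝ (fun _ : Fin j => X) F m).hasFDerivAt).comp
        x hfd).hasDirDerivAt (v j)
      exact h
    have hval : iteratedFDerivWithin ℝ (j + 1) f U x
        (fun i : Fin (j + 1) => v (j + 1 - 1 - (i : ℕ)))
        = (ContinuousMultilinearMap.apply ℝ (fun _ : Fin j => X) F m)
          (fderivWithin ℝ (iteratedFDerivWithin ℝ j f U) U x (v j)) := by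
      rw [iteratedFDerivWithin_succ_apply_left]
      rw [ContinuousMultilinearMap.apply_apply]
      congr 1
      funext i
      simp only [Fin.tail, hm, Fin.val_succ]
      congr 1
      omega
    rw [hval]
    exact happ
  · intro j x v w h
    show iteratedFDerivWithin ℝ j f U x (fun i : Fin j => v (j - 1 - (i : ℕ)))
        = iteratedFDerivWithin ℝ j f U x (fun i : Fin j => w (j - 1 - (i : ℕ)))
    congr 1
    funext i
    exact h _ (by omega)
  · intro j
    have h1 : ContinuousOn (iteratedFDerivWithin ℝ j f U) U :=
      hf.continuousOn_iteratedFDerivWithin (by exact_mod_cast le_top) hUD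
    have h2 : ContinuousOn (fun p : X × (ℕ → X) => iteratedFDerivWithin ℝ j f U p.1)
        (U ×ˢ (univ : Set (ℕ → X))) := h1.comp continuousOn_fst fun p hp => hp.1
    have h3 : Continuous fun p : X × (ℕ → X) => fun i : Fin j => p.2 (j - 1 - (i : ℕ)) :=
      continuous_pi fun i => (continuous_apply _).comp continuous_snd
    exact continuous_eval.comp_continuousOn (h2.prodMk h3.continuousOn)

end AuxGeneric

section AuxEval

variable (k : ℕ) (G : Type*) [TopologicalSpace G]
  [ChartedSpace (EuclideanSpace ℝ (Fin k)) G]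
  (E : Type*) [AddCommGroup E] [Module ℂ E] [Module ℝ E] [IsScalarTower ℝ ℂ E]
  [SMulCommClass ℂ ℝ E] [TopologicalSpace E] [IsTopologicalAddGroup E]
  [ContinuousConstSMul ℂ E]

theorem continuous_chartDMap (x : G) (j : ℕ) :
    Continuous (chartDMap k G E x j) :=
  continuous_iff_le_induced.2 (iInf_le_of_le x (iInf_le _ j))

theorem chartDMap_apply (x : G) (j : ℕ) (w : SmoothMap' k G E)
    (p : ↥((chartAt (EuclideanSpace ℝ (Fin k)) x).target ×ˢ
      (univ : Set (ℕ → EuclideanSpace ℝ (Fin k))))) :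
    chartDMap k G E x j w p = mbD (w.1 ∘ (chartAt (EuclideanSpace ℝ (Fin k)) x).symm)
      (chartAt (EuclideanSpace ℝ (Fin k)) x).target j p.val.1 p.val.2 := rfl

theorem chartDMap_eval (x₀ : G) (w : SmoothMap' k G E) :
    chartDMap k G E x₀ 0 w ⟨(chartAt (EuclideanSpace ℝ (Fin k)) x₀ x₀, fun _ => 0),
      ⟨mem_chart_target _ x₀, mem_univ _⟩⟩ = w.1 x₀ := by
  have h : IsMBSmoothOn (w.1 ∘ (chartAt (EuclideanSpace ℝ (Fin k)) x₀).symm)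
      (chartAt (EuclideanSpace ℝ (Fin k)) x₀).target := w.2.2 x₀
  rw [chartDMap_apply]
  simp only [mbD]
  rw [dif_pos h, h.2.some.d_zero]
  simp only [Function.comp_apply]
  rw [OpenPartialHomeomorph.left_inv _ (mem_chart_source _ _)]

theorem continuous_eval_smoothMap' (x₀ : G) :
    Continuous fun w : SmoothMap' k G E => w.1 x₀ := by
  have h1 : Continuous fun w : SmoothMap' k G E => chartDMap k G E x₀ 0 w
      ⟨(chartAt (EuclideanSpace ℝ (Fin k)) x₀ x₀, fun _ => 0),
        ⟨mem_chart_target _ x₀, mem_univ _⟩⟩ :=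
    (continuous_eval_const _).comp (continuous_chartDMap k G E x₀ 0)
  simpa only [chartDMap_eval] using h1

instance [T2Space E] : T2Space (SmoothMap' k G E) :=
  T2Space.of_injective_continuous (f := fun w : SmoothMap' k G E => (w.1 : G → E))
    (fun _ _ h => Subtype.ext h) (continuous_pi fun x₀ => continuous_eval_smoothMap' k G E x₀)

/-- Evaluation at a point, as a continuous linear map on `C^∞(G,E)`. -/
def evalCLM (x₀ : G) : SmoothMap' k G E →L[ℂ] E :=
  { toFun := fun w => w.1 x₀
    map_add' := fun _ _ => rfl
    map_smul' := fun _ _ => rfl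
    cont := continuous_eval_smoothMap' k G E x₀ }

theorem evalCLM_apply (x₀ : G) (w : SmoothMap' k G E) : evalCLM k G E x₀ w = w.1 x₀ := rfl

theorem chartDMap_ell_eq_zero {F' : Type*} [AddCommGroup F'] [Module ℝ F']
    [TopologicalSpace F'] [T2Space F']
    (ℓ : E → F') (hsub : ∀ a b : E, ℓ (a - b) = ℓ a - ℓ b)
    (hsmul : ∀ (t : ℝ) (a : E), ℓ (t • a) = t • ℓ a) (hℓc : Continuous ℓ)
    (w : SmoothMap' k G E) {Z : Set G} (hZ : IsOpen Z)
    (hwZ : ∀ g ∈ Z, ℓ (w.1 g) = 0) (x : G) (j : ℕ)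
    (p : ↥((chartAt (EuclideanSpace ℝ (Fin k)) x).target ×ˢ
      (univ : Set (ℕ → EuclideanSpace ℝ (Fin k)))))
    (hp : (chartAt (EuclideanSpace ℝ (Fin k)) x).symm p.val.1 ∈ Z) :
    ℓ (chartDMap k G E x j w p) = 0 := by
  have h : IsMBSmoothOn (w.1 ∘ (chartAt (EuclideanSpace ℝ (Fin k)) x).symm)
      (chartAt (EuclideanSpace ℝ (Fin k)) x).target := w.2.2 x
  have hW : IsOpen ((chartAt (EuclideanSpace ℝ (Fin k)) x).target ∩
      (chartAt (EuclideanSpace ℝ (Fin k)) x).symm ⁻¹' Z) :=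
    ((chartAt (EuclideanSpace ℝ (Fin k)) x).continuousOn_symm).isOpen_inter_preimage
      (chartAt (EuclideanSpace ℝ (Fin k)) x).open_target hZ
  have key := MBDerivFamily.ell_eq_zero h.2.some ℓ hsub hsmul hℓc hW inter_subset_left
    (fun q hq => hwZ _ hq.2) j p.val.1 p.val.2 ⟨p.prop.1, hp⟩
  rw [chartDMap_apply]
  simp only [mbD]
  rw [dif_pos h]
  exact key

end AuxEval

section AuxNhds

theorem mem_nhds_compactOpen_zero {A F : Type*} [TopologicalSpace A] [TopologicalSpace F]
    [Zero F] {f₀ : C(A, F)} (h₀ : ∀ a, f₀ a = 0) {S : Set C(A, F)} (hS : S ∈ 𝓝 f₀) :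
    ∃ Kc : Set A, IsCompact Kc ∧ ∃ O : Set F, IsOpen O ∧ (0 : F) ∈ O ∧
      {g : C(A, F) | ∀ a ∈ Kc, g a ∈ O} ⊆ S := by
  rw [ContinuousMap.nhds_compactOpen] at hS
  have heq : (⨅ (K : Set A) (_ : IsCompact K) (U : Set F) (_ : IsOpen U) (_ : MapsTo f₀ K U),
      𝓟 {g : C(A, F) | MapsTo g K U})
      = ⨅ q ∈ {q : Set A × Set F | IsCompact q.1 ∧ IsOpen q.2 ∧ MapsTo f₀ q.1 q.2},
        𝓟 {g : C(A, F) | MapsTo g q.1 q.2} := by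
    apply le_antisymm
    · refine le_iInf fun q => le_iInf fun hq => ?_
      exact iInf_le_of_le q.1 (iInf_le_of_le hq.1 (iInf_le_of_le q.2
        (iInf_le_of_le hq.2.1 (iInf_le _ hq.2.2))))
    · refine le_iInf fun K => le_iInf fun hK => le_iInf fun U => le_iInf fun hU =>
        le_iInf fun hM => ?_
      exact iInf_le_of_le (K, U) (iInf_le _ ⟨hK, hU, hM⟩)
  rw [heq, Filter.mem_biInf_of_directed ?hdir ?hne] at hS
  case hne => exact ⟨(∅, univ), isCompact_empty, isOpen_univ, fun a ha => mem_univ _⟩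
  case hdir =>
    rintro ⟨K₁, U₁⟩ ⟨hK₁, hU₁, hM₁⟩ ⟨K₂, U₂⟩ ⟨hK₂, hU₂, hM₂⟩
    rcases K₁.eq_empty_or_nonempty with rfl | ⟨a₁, ha₁⟩
    · refine ⟨(K₂, U₂), ⟨hK₂, hU₂, hM₂⟩, ?_, le_rfl⟩
      exact Filter.principal_mono.2 fun g hg a ha => absurd ha (notMem_empty a)
    rcases K₂.eq_empty_or_nonempty with rfl | ⟨a₂, ha₂⟩
    · refine ⟨(K₁, U₁), ⟨hK₁, hU₁, hM₁⟩, le_rfl, ?_⟩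
      exact Filter.principal_mono.2 fun g hg a ha => absurd ha (notMem_empty a)
    have h0₁ : (0 : F) ∈ U₁ := by rw [← h₀ a₁]; exact hM₁ ha₁
    have h0₂ : (0 : F) ∈ U₂ := by rw [← h₀ a₂]; exact hM₂ ha₂
    refine ⟨(K₁ ∪ K₂, U₁ ∩ U₂), ⟨hK₁.union hK₂, hU₁.inter hU₂,
        fun a _ => by rw [h₀ a]; exact ⟨h0₁, h0₂⟩⟩, ?_, ?_⟩
    · exact Filter.principal_mono.2 fun g hg a ha => (hg (Or.inl ha)).1
    · exact Filter.principal_mono.2 fun g hg a ha => (hg (Or.inr ha)).2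
  obtain ⟨⟨K, U⟩, ⟨hK, hU, hM⟩, hsub⟩ := hS
  rcases K.eq_empty_or_nonempty with rfl | ⟨a, ha⟩
  · exact ⟨∅, isCompact_empty, univ, isOpen_univ, mem_univ _,
      fun g _ => hsub fun b hb => absurd hb (notMem_empty b)⟩
  · refine ⟨K, hK, U, hU, by rw [← h₀ a]; exact hM ha, fun g hg => hsub fun b hb => hg b hb⟩

variable (k : ℕ) (G : Type*) [TopologicalSpace G]
  [ChartedSpace (EuclideanSpace ℝ (Fin k)) G]
  (E : Type*) [AddCommGroup E] [Module ℂ E] [Module ℝ E] [IsScalarTower ℝ ℂ E]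
  [SMulCommClass ℂ ℝ E] [TopologicalSpace E] [IsTopologicalAddGroup E]
  [ContinuousConstSMul ℂ E]

theorem chartDMap_zero_apply [T2Space E] (x : G) (j : ℕ)
    (p : ↥((chartAt (EuclideanSpace ℝ (Fin k)) x).target ×ˢ
      (univ : Set (ℕ → EuclideanSpace ℝ (Fin k))))) :
    chartDMap k G E x j (0 : SmoothMap' k G E) p = 0 :=
  chartDMap_ell_eq_zero k G E (id : E → E) (fun _ _ => rfl) (fun _ _ => rfl)
    continuous_id (0 : SmoothMap' k G E) isOpen_univ (fun _ _ => rfl) x j p (mem_univ _)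

theorem exists_compact_of_mem_nhds_smoothMap' [T2Space E]
    {T : Set (SmoothMap' k G E)} (hT : T ∈ 𝓝 (0 : SmoothMap' k G E)) :
    ∃ C : Set G, IsCompact C ∧ ∃ O : Set E, IsOpen O ∧ (0 : E) ∈ O ∧
      ∀ w : SmoothMap' k G E,
        (∀ (x : G) (j : ℕ)
          (p : ↥((chartAt (EuclideanSpace ℝ (Fin k)) x).target ×ˢ
            (univ : Set (ℕ → EuclideanSpace ℝ (Fin k))))),
          (chartAt (EuclideanSpace ℝ (Fin k)) x).symm p.val.1 ∈ C →
            chartDMap k G E x j w p ∈ O) → w ∈ T := by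
  have hnhds : 𝓝 (0 : SmoothMap' k G E) = ⨅ q : G × ℕ,
      Filter.comap (chartDMap k G E q.1 q.2) (𝓝 (chartDMap k G E q.1 q.2 0)) := by
    have h1 : 𝓝 (0 : SmoothMap' k G E) = ⨅ x : G,
        @nhds _ (⨅ j : ℕ, TopologicalSpace.induced (chartDMap k G E x j) inferInstance) 0 :=
      nhds_iInf
    rw [h1, iInf_prod (f := fun q : G × ℕ =>
      Filter.comap (chartDMap k G E q.1 q.2) (𝓝 (chartDMap k G E q.1 q.2 0)))]
    refine iInf_congr fun x => ?_
    have h2 : @nhds _ (⨅ j : ℕ, TopologicalSpace.induced (chartDMap k G E x j) inferInstance)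
        (0 : SmoothMap' k G E) = ⨅ j : ℕ,
          @nhds _ (TopologicalSpace.induced (chartDMap k G E x j) inferInstance) 0 :=
      _root_.nhds_iInf
    rw [h2]
    exact iInf_congr fun j => nhds_induced _ _
  rw [hnhds, Filter.mem_iInf] at hT
  obtain ⟨I, hIfin, V, hV, hTeq⟩ := hT
  have hV' : ∀ i : I, ∃ S ∈ 𝓝 (chartDMap k G E (i : G × ℕ).1 (i : G × ℕ).2 0),
      chartDMap k G E (i : G × ℕ).1 (i : G × ℕ).2 ⁻¹' S ⊆ V i := fun i =>
    Filter.mem_comap.1 (hV i)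
  choose S hSmem hSsub using hV'
  have hstep : ∀ i : I, ∃ Kc, IsCompact Kc ∧ ∃ O : Set E, IsOpen O ∧ (0 : E) ∈ O ∧
      {g | ∀ a ∈ Kc, g a ∈ O} ⊆ S i := fun i =>
    mem_nhds_compactOpen_zero (fun a => chartDMap_zero_apply k G E _ _ a) (hSmem i)
  choose Kc hKc O hO h0O hOsub using hstep
  haveI : Finite ↥I := hIfin.to_subtype
  refine ⟨⋃ i : I, (chartAt (EuclideanSpace ℝ (Fin k)) (i : G × ℕ).1).symm ''
      (Prod.fst '' (Subtype.val '' Kc i)), ?_, ⋂ i : I, O i, isOpen_iInter_of_finite hO,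
      mem_iInter.2 fun i => h0O i, ?_⟩
  · refine isCompact_iUnion fun i => ?_
    refine IsCompact.image_of_continuousOn ?_ ((chartAt (EuclideanSpace ℝ (Fin k))
      (i : G × ℕ).1).continuousOn_symm.mono ?_)
    · exact ((hKc i).image continuous_subtype_val).image continuous_fst
    · rintro q ⟨q', ⟨a, _, rfl⟩, rfl⟩
      exact a.prop.1
  · intro w hw
    rw [hTeq]
    refine mem_iInter.2 fun i => hSsub i (hOsub i fun a ha => ?_)
    have hmem : (chartAt (EuclideanSpace ℝ (Fin k)) (i : G × ℕ).1).symm a.val.1 ∈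
        ⋃ i : I, (chartAt (EuclideanSpace ℝ (Fin k)) (i : G × ℕ).1).symm ''
          (Prod.fst '' (Subtype.val '' Kc i)) :=
      mem_iUnion.2 ⟨i, ⟨a.val.1, ⟨a.val, ⟨a, ha, rfl⟩, rfl⟩, rfl⟩⟩
    exact mem_iInter.1 (hw (i : G × ℕ).1 (i : G × ℕ).2 a hmem) i

theorem exists_compact_vanish_of_mem_nhds {T : Set (SmoothMap' k G ℂ)}
    (hT : T ∈ 𝓝 (0 : SmoothMap' k G ℂ)) :
    ∃ C : Set G, IsCompact C ∧ ∀ w : SmoothMap' k G ℂ, ∀ Z : Set G, IsOpen Z → C ⊆ Z →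
      (∀ g ∈ Z, w.1 g = 0) → w ∈ T := by
  obtain ⟨C, hC, O, hO, h0O, hcrit⟩ := exists_compact_of_mem_nhds_smoothMap' k G ℂ hT
  refine ⟨C, hC, fun w Z hZ hCZ hvan => hcrit w fun x j p hp => ?_⟩
  have h := chartDMap_ell_eq_zero k G ℂ (id : ℂ → ℂ) (fun _ _ => rfl) (fun _ _ => rfl)
    continuous_id w hZ hvan x j p (hCZ hp)
  have h' : chartDMap k G ℂ x j w p = 0 := h
  rw [h']; exact h0O

end AuxNhds

section AuxT2G

theorem t2space_of_charted (k : ℕ) (G : Type*) [Group G] [TopologicalSpace G]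
    [IsTopologicalGroup G] [ChartedSpace (EuclideanSpace ℝ (Fin k)) G] : T2Space G := by
  apply IsTopologicalGroup.t2Space_of_one_sep
  intro x hx
  by_cases hxs : x ∈ (chartAt (EuclideanSpace ℝ (Fin k)) (1 : G)).source
  · set c := chartAt (EuclideanSpace ℝ (Fin k)) (1 : G) with hc
    have hne : c 1 ≠ c x := fun h => hx (c.injOn hxs (mem_chart_source _ _) h.symm)
    refine ⟨c.source ∩ c ⁻¹' {y | y ≠ c x}, ?_, fun h => h.2 rfl⟩
    exact (c.continuousOn.isOpen_inter_preimage c.open_source isOpen_ne).mem_nhds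
      ⟨mem_chart_source _ _, hne⟩
  · exact ⟨(chartAt (EuclideanSpace ℝ (Fin k)) (1 : G)).source,
      (chartAt (EuclideanSpace ℝ (Fin k)) (1 : G)).open_source.mem_nhds
        (mem_chart_source _ _), hxs⟩

end AuxT2G

section AuxBump

open scoped Manifold

theorem exists_mb_bump (k : ℕ) {G : Type*} [TopologicalSpace G] [T2Space G]
    [ChartedSpace (EuclideanSpace ℝ (Fin k)) G]
    [IsManifold (𝓘(ℝ, EuclideanSpace ℝ (Fin k))) ((⊤ : ℕ∞) : WithTop ℕ∞) G]
    (z : G) (O : Set G) (hO : IsOpen O) (hzO : z ∈ O) :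
    ∃ r : G → ℝ, Continuous r ∧ MBSmooth k (fun g => (r g : ℂ)) ∧
      HasCompactSupport r ∧ tsupport r ⊆ O ∧ (∀ g, 0 ≤ r g) ∧ (∀ g, r g ≤ 1) ∧
      ∃ O₃ : Set G, IsOpen O₃ ∧ z ∈ O₃ ∧ ∀ g ∈ O₃, r g = 1 := by
  classical
  set c := chartAt (EuclideanSpace ℝ (Fin k)) z with hc
  have hzsrc : z ∈ c.source := mem_chart_source _ z
  have hV₀ : IsOpen (c.target ∩ c.symm ⁻¹' O) :=
    c.continuousOn_symm.isOpen_inter_preimage c.open_target hO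
  have hczV₀ : c z ∈ c.target ∩ c.symm ⁻¹' O := ⟨c.map_source hzsrc, by
    rw [mem_preimage, c.left_inv hzsrc]; exact hzO⟩
  obtain ⟨ε, hε, hball⟩ := Metric.nhds_basis_closedBall.mem_iff.1 (hV₀.mem_nhds hczV₀)
  set b : ContDiffBump (c z) := ⟨ε / 2, ε, by positivity, by linarith⟩ with hb
  set S : Set G := c.symm '' Metric.closedBall (c z) ε with hS
  have hSc : IsCompact S := (isCompact_closedBall _ _).image_of_continuousOn
    (c.continuousOn_symm.mono fun q hq => (hball hq).1)
  have hSsrc : S ⊆ c.source := by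
    rintro _ ⟨q, hq, rfl⟩; exact c.map_target (hball hq).1
  have hSO : S ⊆ O := by rintro _ ⟨q, hq, rfl⟩; exact (hball hq).2
  set r : G → ℝ := fun g => if g ∈ c.source then b (c g) else 0 with hr
  have hsupp : Function.support r ⊆ S := by
    intro g hg
    rw [Function.mem_support] at hg
    by_cases hgs : g ∈ c.source
    · have hbne : b (c g) ≠ 0 := by simpa [hr, hgs] using hg
      have hball' : c g ∈ Metric.ball (c z) ε := by
        rw [← b.support_eq]; exact hbne
      exact ⟨c g, Metric.ball_subset_closedBall hball', c.left_inv hgs⟩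
    · exact absurd (by simp [hr, hgs]) hg
  have hrS0 : ∀ g, g ∉ S → r g = 0 := fun g hg => by
    by_contra h; exact hg (hsupp h)
  have hts : tsupport r ⊆ S := closure_minimal hsupp hSc.isClosed
  have hcont : Continuous r := by
    rw [continuous_iff_continuousAt]
    intro g
    by_cases hgs : g ∈ c.source
    · have hev : ∀ᶠ g' in 𝓝 g, b (c g') = r g' := by
        filter_upwards [c.open_source.mem_nhds hgs] with g' hg'
        simp [hr, hg']
      exact (b.continuous.continuousAt.comp (c.continuousAt hgs)).congr hev
    · have hgS : g ∉ S := fun h => hgs (hSsrc h)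
      have hev : ∀ᶠ g' in 𝓝 g, (0 : ℝ) = r g' := by
        filter_upwards [hSc.isClosed.isOpen_compl.mem_nhds hgS] with g' hg'
        exact (hrS0 g' hg').symm
      exact continuousAt_const.congr hev
  have hmb : MBSmooth k fun g => ((r g : ℝ) : ℂ) := by
    refine ⟨Complex.continuous_ofReal.comp hcont, fun x => ?_⟩
    set cx := chartAt (EuclideanSpace ℝ (Fin k)) x with hcx
    refine ContDiffOn.isMBSmoothOn ?_ cx.open_target
    intro q hq
    by_cases hgs : cx.symm q ∈ c.source
    · have htrans := HasGroupoid.compatible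
        (G := contDiffGroupoid ((⊤ : ℕ∞) : WithTop ℕ∞) (𝓘(ℝ, EuclideanSpace ℝ (Fin k))))
        (chart_mem_atlas (EuclideanSpace ℝ (Fin k)) x) (chart_mem_atlas (EuclideanSpace ℝ (Fin k)) z)
      rw [contDiffGroupoid, mem_groupoid_of_pregroupoid, contDiffPregroupoid] at htrans
      have h2 : ContDiffOn ℝ (⊤ : ℕ∞) (cx.symm ≫ₕ c) (cx.symm ≫ₕ c).source := by
        have h := htrans.1
        simpa only [modelWithCornersSelf_coe, modelWithCornersSelf_coe_symm, Function.comp_id,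
          Function.id_comp, CompTriple.comp_eq, preimage_id_eq, id_eq, range_id, inter_univ,
          preimage_id] using h
      have hV : IsOpen (cx.symm ≫ₕ c).source := (cx.symm ≫ₕ c).open_source
      have hqV : q ∈ (cx.symm ≫ₕ c).source := by
        rw [OpenPartialHomeomorph.trans_source]
        exact ⟨hq, hgs⟩
      have h1 : ContDiffOn ℝ (⊤ : ℕ∞) (fun y => ((b ((cx.symm ≫ₕ c) y) : ℝ) : ℂ))
          (cx.symm ≫ₕ c).source :=
        Complex.ofRealCLM.contDiff.comp_contDiffOn
          ((b.contDiff (n := (⊤ : ℕ∞))).comp_contDiffOn h2)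
      have h3 : ContDiffAt ℝ (⊤ : ℕ∞) (fun y => ((b ((cx.symm ≫ₕ c) y) : ℝ) : ℂ)) q :=
        (h1 q hqV).contDiffAt (hV.mem_nhds hqV)
      have h4 : (fun y => ((r (cx.symm y) : ℝ) : ℂ)) =ᶠ[𝓝 q]
          fun y => ((b ((cx.symm ≫ₕ c) y) : ℝ) : ℂ) := by
        filter_upwards [hV.mem_nhds hqV] with y hy
        rw [OpenPartialHomeomorph.trans_source] at hy
        have hy2 : cx.symm y ∈ c.source := hy.2
        simp [hr, hy2, OpenPartialHomeomorph.trans_apply]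
      exact (h3.congr_of_eventuallyEq h4).contDiffWithinAt
    · have hnS : cx.symm q ∉ S := fun h => hgs (hSsrc h)
      have hV2 : IsOpen (cx.target ∩ cx.symm ⁻¹' Sᶜ) :=
        cx.continuousOn_symm.isOpen_inter_preimage cx.open_target hSc.isClosed.isOpen_compl
      have h4 : (fun y => ((r (cx.symm y) : ℝ) : ℂ)) =ᶠ[𝓝 q] fun _ => (0 : ℂ) := by
        filter_upwards [hV2.mem_nhds ⟨hq, hnS⟩] with y hy
        simp [hrS0 _ hy.2]
      exact ((contDiffAt_const (c := (0 : ℂ))).congr_of_eventuallyEq h4).contDiffWithinAt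
  refine ⟨r, hcont, hmb, hSc.of_isClosed_subset (isClosed_tsupport r) hts,
    hts.trans hSO, ?_, ?_, c.source ∩ c ⁻¹' Metric.ball (c z) (ε / 2), ?_, ?_, ?_⟩
  · intro g; by_cases hgs : g ∈ c.source <;> simp [hr, hgs, b.nonneg]
  · intro g; by_cases hgs : g ∈ c.source <;> simp [hr, hgs, b.le_one]
  · exact c.continuousOn.isOpen_inter_preimage c.open_source Metric.isOpen_ball
  · exact ⟨hzsrc, Metric.mem_ball_self (by positivity)⟩
  · intro g hg
    have : b (c g) = 1 := b.one_of_mem_closedBall (Metric.ball_subset_closedBall hg.2)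
    simp [hr, hg.1, this]

end AuxBump

open scoped Manifold

set_option maxHeartbeats 2000000

/-- **Proposition A.** Let `G` be a non-compact Lie group and `E := C^∞(G)` with the
compact-open `C^∞`-topology, made a topological `G`-module via left translation,
`π(g,γ)(x) = γ(g⁻¹x)`.  Then neither `E` nor `E^∞` is a topological
`C^∞_c(G)`-module: both maps `Π : C^∞_c(G) × E → E` and
`Π : C^∞_c(G) × E^∞ → E^∞` are discontinuous. -/
theorem statement0
    {k : ℕ} {G : Type*} [Group G] [TopologicalSpace G] [IsTopologicalGroup G]
    [ChartedSpace (EuclideanSpace ℝ (Fin k)) G]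
    [LieGroup 𝓘(ℝ, EuclideanSpace ℝ (Fin k)) (⊤ : ℕ∞) G]
    [LocallyCompactSpace G] [MeasurableSpace G] [BorelSpace G]
    -- `G` is not compact
    (hG : ¬ CompactSpace G)
    -- a left Haar measure on `G`
    (μ : MeasureTheory.Measure G) [μ.IsHaarMeasure]
    -- `E = C^∞(G)` (with the compact-open `C^∞`-topology) is a topological vector
    -- space (true facts about the compact-open `C^∞`-topology):
    [IsTopologicalAddGroup (SmoothMap' k G ℂ)] [ContinuousSMul ℂ (SmoothMap' k G ℂ)]
    [LocallyConvexSpace ℝ (SmoothMap' k G ℂ)]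
    -- the left translation action `π(g,γ)(x) = γ(g⁻¹ x)` of `G` on `E = C^∞(G)`,
    -- a continuous action by continuous linear maps:
    (π : G → SmoothMap' k G ℂ → SmoothMap' k G ℂ)
    (hπ : ∀ (g : G) (γ : SmoothMap' k G ℂ) (x : G), (π g γ).1 x = γ.1 (g⁻¹ * x))
    (hπlin : ∀ g : G, IsLinearMap ℂ (π g))
    (hπcont : Continuous fun p : G × SmoothMap' k G ℂ => π p.1 p.2)
    (hπone : ∀ γ, π 1 γ = γ)
    (hπmul : ∀ (g h : G) (γ : SmoothMap' k G ℂ), π (g * h) γ = π g (π h γ))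
    -- the LF-topology on `C^∞_c(G)`
    (τTF : TopologicalSpace ↥(testSubmodule k (G := G)))
    (hτTF : IsLeast {t : TopologicalSpace ↥(testSubmodule k (G := G)) |
        @IsTopologicalAddGroup _ t _ ∧ @ContinuousSMul ℂ _ _ _ t ∧
        @LocallyConvexSpace ℝ _ _ _ _ _ t ∧
        ∀ K : Set G, IsCompact K →
          @Continuous {γ : ↥(testSubmodule k (G := G)) // tsupport (γ.1 : G → ℂ) ⊆ K}
            _ (TopologicalSpace.induced (fun γ => toSmoothMap k γ.1) inferInstance) t
            Subtype.val} τTF)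
    -- the action `Π(γ,v) = ∫_G γ(x) π(x,v) dλ_G(x)` of `C^∞_c(G)` on `E = C^∞(G)`,
    -- leaving the space `E^∞` of smooth vectors invariant:
    (Pi : ↥(testSubmodule k (G := G)) → SmoothMap' k G ℂ → SmoothMap' k G ℂ)
    (hPi : ∀ γ v, IsWeakIntegral μ (fun x : G => γ.1 x • π x v) (Pi γ v))
    (hPimem : ∀ γ v, Pi γ v ∈ smoothVectors k π hπlin) :
    -- `Π : C^∞_c(G) × E → E` is discontinuous ...
    ¬ @Continuous _ _ (@instTopologicalSpaceProd _ _ τTF _) _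
        (fun p : ↥(testSubmodule k (G := G)) × SmoothMap' k G ℂ => Pi p.1 p.2) ∧
    -- ... and `Π : C^∞_c(G) × E^∞ → E^∞` is discontinuous (`E^∞` carrying the
    -- initial topology with respect to `Φ : E^∞ → C^∞(G, E)`)
    ¬ @Continuous _ _ (@instTopologicalSpaceProd _ _ τTF
          (TopologicalSpace.induced (orbitMap k π hπlin) inferInstance))
        (TopologicalSpace.induced (orbitMap k π hπlin) inferInstance)
        (fun p : ↥(testSubmodule k (G := G)) × ↥(smoothVectors k π hπlin) =>
          (⟨Pi p.1 p.2.1, hPimem p.1 p.2.1⟩ : ↥(smoothVectors k π hπlin))) := by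
  letI : TopologicalSpace ↥(testSubmodule k (G := G)) := τTF
  haveI hTAG : @IsTopologicalAddGroup ↥(testSubmodule k (G := G)) τTF _ := hτTF.1.1
  haveI hCSM : @ContinuousSMul ℂ ↥(testSubmodule k (G := G)) _ _ τTF := hτTF.1.2.1
  haveI : T2Space G := t2space_of_charted k G
  -- the evaluation formula for `Pi`
  have keyPi : ∀ (x₀ : G) (γ : ↥(testSubmodule k (G := G))) (v : SmoothMap' k G ℂ),
      (Pi γ v).1 x₀ = ∫ x, γ.1 x * v.1 (x⁻¹ * x₀) ∂μ := by
    intro x₀ γ v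
    have h := (hPi γ v (evalCLM k G ℂ x₀)).2
    have h2 : ∀ x : G, evalCLM k G ℂ x₀ (γ.1 x • π x v) = γ.1 x * v.1 (x⁻¹ * x₀) := by
      intro x
      rw [_root_.map_smul, smul_eq_mul, evalCLM_apply, hπ]
    calc (Pi γ v).1 x₀ = evalCLM k G ℂ x₀ (Pi γ v) := rfl
      _ = ∫ x, evalCLM k G ℂ x₀ (γ.1 x • π x v) ∂μ := h.symm
      _ = ∫ x, γ.1 x * v.1 (x⁻¹ * x₀) ∂μ := by simp_rw [h2]
  have h00 : (Pi (0 : ↥(testSubmodule k (G := G))) (0 : SmoothMap' k G ℂ)).1 1 = 0 := by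
    rw [keyPi]
    simp
  -- absorbency in `τTF`
  have habs : ∀ (γ₀ : ↥(testSubmodule k (G := G))) (W : Set ↥(testSubmodule k (G := G))),
      W ∈ @nhds _ τTF 0 → ∃ t : ℝ, 0 < t ∧ ((t : ℂ) • γ₀) ∈ W := by
    intro γ₀ W hW
    have hc : Continuous fun cc : ℂ => cc • γ₀ := continuous_id.smul continuous_const
    have hpre : (fun cc : ℂ => cc • γ₀) ⁻¹' W ∈ 𝓝 (0 : ℂ) :=
      hc.continuousAt (show W ∈ 𝓝 ((0 : ℂ) • γ₀) by rw [zero_smul]; exact hW)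
    obtain ⟨δ, hδ, hsub⟩ := Metric.mem_nhds_iff.1 hpre
    refine ⟨δ / 2, by positivity, hsub ?_⟩
    rw [Metric.mem_ball, dist_zero_right]
    have hn : ‖((δ / 2 : ℝ) : ℂ)‖ = δ / 2 := by
      rw [Complex.norm_real, Real.norm_eq_abs, abs_of_pos (by positivity)]
    rw [hn]
    linarith
  -- points outside compacta
  have hout : ∀ Kp : Set G, IsCompact Kp → ∃ z : G, z ∉ Kp := by
    intro Kp hKp
    by_contra h
    push_neg at h
    have : Kp = univ := eq_univ_of_forall h
    exact hG (isCompact_univ_iff.1 (this ▸ hKp))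
  constructor
  · -- claim 1 : `Π : C_c^∞(G) × E → E` is discontinuous
    intro hcont
    have hF : Continuous fun p : ↥(testSubmodule k (G := G)) × SmoothMap' k G ℂ =>
        (Pi p.1 p.2).1 1 := (continuous_eval_smoothMap' k G ℂ 1).comp hcont
    have hmem : ((fun p : ↥(testSubmodule k (G := G)) × SmoothMap' k G ℂ =>
        (Pi p.1 p.2).1 1) ⁻¹' Metric.ball 0 1) ∈ 𝓝 ((0, 0) :
          ↥(testSubmodule k (G := G)) × SmoothMap' k G ℂ) := by
      refine hF.continuousAt ?_
      rw [h00]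
      exact Metric.ball_mem_nhds _ one_pos
    rw [mem_nhds_prod_iff] at hmem
    obtain ⟨U, hU, V, hV, hUV⟩ := hmem
    obtain ⟨K, hK, hcrit⟩ := exists_compact_vanish_of_mem_nhds k G hV
    obtain ⟨K₁, hK₁, hKsub⟩ := exists_compact_superset hK
    obtain ⟨z, hz⟩ := hout K₁ hK₁
    obtain ⟨ru, hruc, hrumb, hrucs, hruts, hrunn, hrule, O₃, hO₃, hzO₃, hru1⟩ :=
      exists_mb_bump k z K₁ᶜ hK₁.isClosed.isOpen_compl hz
    set u : SmoothMap' k G ℂ := ⟨fun g => (ru g : ℂ), hrumb⟩ with hu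
    have hO₅ : IsOpen {x : G | x⁻¹ ∈ O₃} := hO₃.preimage continuous_inv
    have hzO₅ : z⁻¹ ∈ {x : G | x⁻¹ ∈ O₃} := by simp [hzO₃]
    obtain ⟨rγ, hrγc, hrγmb, hrγcs, hrγts, hrγnn, hrγle, O₆, hO₆, hzO₆, hrγ1⟩ :=
      exists_mb_bump k z⁻¹ {x : G | x⁻¹ ∈ O₃} hO₅ hzO₅
    have hγcs : HasCompactSupport fun g => ((rγ g : ℝ) : ℂ) :=
      hrγcs.comp_left (g := fun t : ℝ => (t : ℂ)) Complex.ofReal_zero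
    set γ₀ : ↥(testSubmodule k (G := G)) := ⟨fun g => (rγ g : ℂ), ⟨hrγmb, hγcs⟩⟩ with hγ₀
    obtain ⟨t, ht, htU⟩ := habs γ₀ U hU
    have hInt_rγ : Integrable rγ μ := hrγc.integrable_of_hasCompactSupport hrγcs
    set A : ℝ := ∫ x, rγ x ∂μ with hA
    have hA₁ : 0 < A := by
      rw [hA, integral_pos_iff_support_of_nonneg (fun x => hrγnn x) hInt_rγ]
      have hop : IsOpen (Function.support rγ) := by
        rw [Function.support_eq_preimage]
        exact hrγc.isOpen_preimage _ isOpen_compl_singleton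
      refine hop.measure_pos μ ⟨z⁻¹, ?_⟩
      rw [Function.mem_support, hrγ1 _ hzO₆]
      norm_num
    have hcomp : ∀ cc : ℂ, (Pi ((t : ℂ) • γ₀) (cc • u)).1 1 = (t : ℂ) * cc * (A : ℂ) := by
      intro cc
      rw [keyPi]
      have hintegrand : ∀ x : G,
          (((t : ℂ) • γ₀).1 x) * ((cc • u).1 (x⁻¹ * 1)) = ((t : ℂ) * cc) * (rγ x : ℂ) := by
        intro x
        have h1 : ((t : ℂ) • γ₀).1 x = (t : ℂ) * (rγ x : ℂ) := rfl
        have h2 : (cc • u).1 (x⁻¹ * 1) = cc * (ru (x⁻¹ * 1) : ℂ) := rfl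
        rw [h1, h2, mul_one]
        by_cases hx : rγ x = 0
        · simp [hx]
        · have hxO : x ∈ {x : G | x⁻¹ ∈ O₃} :=
            hrγts (subset_closure (Function.mem_support.2 hx))
          rw [hru1 _ hxO]
          push_cast
          ring
      simp_rw [hintegrand]
      have hio : ∫ x, ((rγ x : ℝ) : ℂ) ∂μ = ((A : ℝ) : ℂ) := by
        rw [hA]; exact integral_ofReal
      rw [MeasureTheory.integral_const_mul, hio]
    set cc : ℂ := 2 / ((t : ℂ) * (A : ℂ)) with hcc
    have htne : (t : ℂ) ≠ 0 := by exact_mod_cast ht.ne'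
    have hAne : (A : ℂ) ≠ 0 := by exact_mod_cast hA₁.ne'
    have hval : (Pi ((t : ℂ) • γ₀) (cc • u)).1 1 = 2 := by
      rw [hcomp cc, hcc]
      field_simp
    have hcuV : (cc • u) ∈ V := by
      refine hcrit (cc • u) (interior K₁) isOpen_interior hKsub fun g hg => ?_
      have hgu : ru g = 0 :=
        image_eq_zero_of_notMem_tsupport fun hmem => (hruts hmem) (interior_subset hg)
      show cc * (ru g : ℂ) = 0
      rw [hgu]
      simp
    have hfinal := hUV (Set.mk_mem_prod htU hcuV)
    rw [Set.mem_preimage, Metric.mem_ball, dist_zero_right] at hfinal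
    rw [hval] at hfinal
    norm_num at hfinal
  · -- claim 2 : `Π : C_c^∞(G) × E^∞ → E^∞` is discontinuous
    intro hcont
    letI τE : TopologicalSpace ↥(smoothVectors k π hπlin) :=
      TopologicalSpace.induced (orbitMap k π hπlin) inferInstance
    have horb : Continuous (orbitMap k π hπlin) := continuous_induced_dom
    have hev1 : Continuous fun w : SmoothMap' k G (SmoothMap' k G ℂ) => w.1 1 :=
      continuous_eval_smoothMap' k G (SmoothMap' k G ℂ) 1
    have hevE : Continuous fun v : ↥(smoothVectors k π hπlin) => (v.1).1 1 := by
      have h : Continuous fun v : ↥(smoothVectors k π hπlin) => (π 1 v.1).1 1 :=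
        (continuous_eval_smoothMap' k G ℂ 1).comp (hev1.comp horb)
      exact h.congr fun v => by rw [hπone]
    have hF : Continuous fun p : ↥(testSubmodule k (G := G)) × ↥(smoothVectors k π hπlin) =>
        (Pi p.1 p.2.1).1 1 := hevE.comp hcont
    have hmem : ((fun p : ↥(testSubmodule k (G := G)) × ↥(smoothVectors k π hπlin) =>
        (Pi p.1 p.2.1).1 1) ⁻¹' Metric.ball 0 1) ∈ 𝓝 ((0, 0) :
          ↥(testSubmodule k (G := G)) × ↥(smoothVectors k π hπlin)) := by
      refine hF.continuousAt ?_
      show Metric.ball (0 : ℂ) 1 ∈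
        𝓝 ((Pi 0 ((0 : ↥(smoothVectors k π hπlin)) : SmoothMap' k G ℂ)).1 1)
      rw [show ((0 : ↥(smoothVectors k π hπlin)) : SmoothMap' k G ℂ) = 0 from rfl, h00]
      exact Metric.ball_mem_nhds _ one_pos
    rw [mem_nhds_prod_iff] at hmem
    obtain ⟨U, hU, V, hV, hUV⟩ := hmem
    rw [nhds_induced] at hV
    obtain ⟨T, hT, hTV⟩ := Filter.mem_comap.1 hV
    have horb0 : orbitMap k π hπlin 0 = 0 := Subtype.ext (funext fun g => (hπlin g).map_zero)
    rw [horb0] at hT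
    obtain ⟨C, hC, O, hO, h0O, hcritF⟩ :=
      exists_compact_of_mem_nhds_smoothMap' k G (SmoothMap' k G ℂ) hT
    obtain ⟨K, hK, hcritE⟩ := exists_compact_vanish_of_mem_nhds k G (hO.mem_nhds h0O)
    obtain ⟨K₁, hK₁, hKsub⟩ := exists_compact_superset hK
    set P : Set G := C⁻¹ * K₁ with hP
    have hPc : IsCompact P := hC.inv.mul hK₁
    obtain ⟨Q₁, hQ₁c, hQ₁mem⟩ := exists_compact_mem_nhds (1 : G)
    set R : Set G := Q₁⁻¹ * P with hR
    have hRc : IsCompact R := hQ₁c.inv.mul hPc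
    obtain ⟨z, hz⟩ := hout R hRc
    obtain ⟨ru, hruc, hrumb, hrucs, hruts, hrunn, hrule, O₃, hO₃, hzO₃, hru1⟩ :=
      exists_mb_bump k z Rᶜ hRc.isClosed.isOpen_compl hz
    set u : SmoothMap' k G ℂ := ⟨fun g => (ru g : ℂ), hrumb⟩ with hudef
    set Qo : Set G := interior Q₁ ∩ {y : G | y⁻¹ * z ∈ O₃} with hQo
    have hQoo : IsOpen Qo :=
      isOpen_interior.inter (hO₃.preimage (continuous_inv.mul continuous_const))
    have h1Qo : (1 : G) ∈ Qo := ⟨mem_interior_iff_mem_nhds.2 hQ₁mem, by simpa using hzO₃⟩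
    obtain ⟨r₂, hr₂c, hr₂mb, hr₂cs, hr₂ts, hr₂nn, hr₂le, O₆, hO₆, h1O₆, hr₂1⟩ :=
      exists_mb_bump k 1 Qo hQoo h1Qo
    have hγ₂cs : HasCompactSupport fun g => ((r₂ g : ℝ) : ℂ) :=
      hr₂cs.comp_left (g := fun t : ℝ => (t : ℂ)) Complex.ofReal_zero
    set γ₂ : ↥(testSubmodule k (G := G)) := ⟨fun g => (r₂ g : ℂ), ⟨hr₂mb, hγ₂cs⟩⟩ with hγ₂
    set u₀ : SmoothMap' k G ℂ := Pi γ₂ u with hu₀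
    set vI : ↥(smoothVectors k π hπlin) := ⟨u₀, hPimem γ₂ u⟩ with hv
    have hval_u₀ : ∀ x : G, u₀.1 x = ∫ y, (r₂ y : ℂ) * (ru (y⁻¹ * x) : ℂ) ∂μ :=
      fun x => keyPi x γ₂ u
    -- the vanishing region of `u₀`
    set D : Set G := closure Qo * tsupport ru with hD
    have hQclos : closure Qo ⊆ Q₁ :=
      closure_minimal (fun y hy => interior_subset hy.1) hQ₁c.isClosed
    have hDc : IsCompact D := (hQ₁c.of_isClosed_subset isClosed_closure hQclos).mul hrucs
    have hPD : P ⊆ Dᶜ := by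
      intro p hpP hpD
      obtain ⟨q, hq, s, hs, rfl⟩ := hpD
      have hsR : s ∈ R := by
        have h1 : q⁻¹ * (q * s) ∈ Q₁⁻¹ * P := Set.mul_mem_mul (Set.inv_mem_inv.2 (hQclos hq)) hpP
        rwa [inv_mul_cancel_left] at h1
      exact (hruts hs) hsR
    have hu₀van : ∀ x ∈ Dᶜ, u₀.1 x = 0 := by
      intro x hx
      rw [hval_u₀]
      have hzero : ∀ y : G, (r₂ y : ℂ) * (ru (y⁻¹ * x) : ℂ) = 0 := by
        intro y
        by_cases hy : r₂ y = 0
        · simp [hy]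
        by_cases hru0 : ru (y⁻¹ * x) = 0
        · simp [hru0]
        exfalso
        apply hx
        have hyQ : y ∈ closure Qo := subset_closure (hr₂ts (subset_closure
          (Function.mem_support.2 hy)))
        have hsT : y⁻¹ * x ∈ tsupport ru := subset_closure (Function.mem_support.2 hru0)
        have := Set.mul_mem_mul hyQ hsT
        rwa [mul_inv_cancel_left] at this
      simp_rw [hzero]
      exact integral_zero _ _
    -- `u₀` is close to `A₂` near `z`
    have hA₂int : Integrable r₂ μ := hr₂c.integrable_of_hasCompactSupport hr₂cs
    set A₂ : ℝ := ∫ y, r₂ y ∂μ with hA₂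
    have hA₂pos : 0 < A₂ := by
      rw [hA₂, integral_pos_iff_support_of_nonneg (fun x => hr₂nn x) hA₂int]
      have hop : IsOpen (Function.support r₂) := by
        rw [Function.support_eq_preimage]
        exact hr₂c.isOpen_preimage _ isOpen_compl_singleton
      refine hop.measure_pos μ ⟨1, ?_⟩
      rw [Function.mem_support, hr₂1 _ h1O₆]
      norm_num
    have hu₀z : u₀.1 z = (A₂ : ℂ) := by
      rw [hval_u₀]
      have hone : ∀ y : G, (r₂ y : ℂ) * (ru (y⁻¹ * z) : ℂ) = (r₂ y : ℂ) := by
        intro y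
        by_cases hy : r₂ y = 0
        · simp [hy]
        · have hyQ : y ∈ Qo := hr₂ts (subset_closure (Function.mem_support.2 hy))
          rw [hru1 _ hyQ.2, Complex.ofReal_one, mul_one]
      simp_rw [hone]
      rw [hA₂]
      exact integral_ofReal
    have hu₀cont : Continuous (u₀.1 : G → ℂ) := u₀.2.1
    set O₄ : Set G := {x : G | ‖u₀.1 x⁻¹ - (A₂ : ℂ)‖ < A₂ / 2} with hO₄
    have hO₄o : IsOpen O₄ := by
      have hc : Continuous fun x : G => ‖u₀.1 x⁻¹ - (A₂ : ℂ)‖ :=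
        ((hu₀cont.comp continuous_inv).sub continuous_const).norm
      exact isOpen_lt hc continuous_const
    have hzO₄ : z⁻¹ ∈ O₄ := by
      show ‖u₀.1 (z⁻¹)⁻¹ - (A₂ : ℂ)‖ < A₂ / 2
      rw [inv_inv, hu₀z, sub_self, norm_zero]
      positivity
    obtain ⟨r₃, hr₃c, hr₃mb, hr₃cs, hr₃ts, hr₃nn, hr₃le, O₇, hO₇, hzO₇, hr₃1⟩ :=
      exists_mb_bump k z⁻¹ O₄ hO₄o hzO₄
    have hγ₃cs : HasCompactSupport fun g => ((r₃ g : ℝ) : ℂ) :=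
      hr₃cs.comp_left (g := fun t : ℝ => (t : ℂ)) Complex.ofReal_zero
    set γ₃ : ↥(testSubmodule k (G := G)) := ⟨fun g => (r₃ g : ℂ), ⟨hr₃mb, hγ₃cs⟩⟩ with hγ₃
    -- the pairing integral is nonzero
    set Iv : ℂ := ∫ x, (r₃ x : ℂ) * u₀.1 x⁻¹ ∂μ with hIv
    have hIvInt : Integrable (fun x => (r₃ x : ℂ) * u₀.1 x⁻¹) μ := by
      apply Continuous.integrable_of_hasCompactSupport
      · exact (Complex.continuous_ofReal.comp hr₃c).mul (hu₀cont.comp continuous_inv)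
      · exact hγ₃cs.mul_right
    have hA₃int : Integrable r₃ μ := hr₃c.integrable_of_hasCompactSupport hr₃cs
    set A₃ : ℝ := ∫ x, r₃ x ∂μ with hA₃
    have hA₃pos : 0 < A₃ := by
      rw [hA₃, integral_pos_iff_support_of_nonneg (fun x => hr₃nn x) hA₃int]
      have hop : IsOpen (Function.support r₃) := by
        rw [Function.support_eq_preimage]
        exact hr₃c.isOpen_preimage _ isOpen_compl_singleton
      refine hop.measure_pos μ ⟨z⁻¹, ?_⟩
      rw [Function.mem_support, hr₃1 _ hzO₇]
      norm_num
    have hre : A₂ / 2 * A₃ ≤ Iv.re := by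
      have h1 : Iv.re = ∫ x, ((r₃ x : ℂ) * u₀.1 x⁻¹).re ∂μ :=
        (Complex.reCLM.integral_comp_comm hIvInt).symm
      rw [h1]
      have h2 : ∫ x, A₂ / 2 * r₃ x ∂μ = A₂ / 2 * A₃ := by
        rw [hA₃]; exact MeasureTheory.integral_const_mul _ _
      rw [← h2]
      refine integral_mono (hA₃int.const_mul _) hIvInt.re fun x => ?_
      by_cases hx : r₃ x = 0
      · simp [hx]
      · have hxO : x ∈ O₄ := hr₃ts (subset_closure (Function.mem_support.2 hx))
        have hb : |((u₀.1 x⁻¹ - (A₂ : ℂ)).re)| ≤ ‖u₀.1 x⁻¹ - (A₂ : ℂ)‖ :=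
          Complex.abs_re_le_norm _
        have hxO' : ‖u₀.1 x⁻¹ - (A₂ : ℂ)‖ < A₂ / 2 := hxO
        have hre2 : A₂ / 2 ≤ (u₀.1 x⁻¹).re := by
          have h3 : (u₀.1 x⁻¹ - (A₂ : ℂ)).re = (u₀.1 x⁻¹).re - A₂ := by
            simp [Complex.sub_re]
          rw [h3] at hb
          have := abs_le.1 (le_of_lt (lt_of_le_of_lt hb hxO'))
          linarith [this.1]
        show A₂ / 2 * r₃ x ≤ ((r₃ x : ℂ) * u₀.1 x⁻¹).re
        have h4 : ((r₃ x : ℂ) * u₀.1 x⁻¹).re = r₃ x * (u₀.1 x⁻¹).re := by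
          simp [Complex.mul_re]
        rw [h4, mul_comm (A₂ / 2) (r₃ x)]
        exact mul_le_mul_of_nonneg_left hre2 (hr₃nn x)
    have hIvne : Iv ≠ 0 := by
      intro h
      rw [h] at hre
      simp only [Complex.zero_re] at hre
      nlinarith [hA₂pos, hA₃pos]
    -- all multiples of `vI` lie in `V`
    have hvV : ∀ cc : ℂ, (cc • vI) ∈ V := by
      intro cc
      apply hTV
      show orbitMap k π hπlin (cc • vI) ∈ T
      apply hcritF
      intro x j p hp
      apply hcritE _ (interior K₁) isOpen_interior hKsub
      intro x₀ hx₀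
      have hZo : IsOpen {g : G | g⁻¹ * x₀ ∈ Dᶜ} :=
        hDc.isClosed.isOpen_compl.preimage (continuous_inv.mul continuous_const)
      have hgo : (chartAt (EuclideanSpace ℝ (Fin k)) x).symm p.val.1 ∈
          {g : G | g⁻¹ * x₀ ∈ Dᶜ} := by
        show _⁻¹ * x₀ ∈ Dᶜ
        exact hPD (Set.mul_mem_mul (Set.inv_mem_inv.2 hp) (interior_subset hx₀))
      have hvan : ∀ g ∈ {g : G | g⁻¹ * x₀ ∈ Dᶜ},
          evalCLM k G ℂ x₀ ((orbitMap k π hπlin (cc • vI)).1 g) = 0 := by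
        intro g hg
        have h1 : (orbitMap k π hπlin (cc • vI)).1 g = cc • π g u₀ := by
          show π g ((cc • vI : ↥(smoothVectors k π hπlin)) : SmoothMap' k G ℂ) = cc • π g u₀
          rw [show ((cc • vI : ↥(smoothVectors k π hπlin)) : SmoothMap' k G ℂ) = cc • u₀
            from rfl]
          exact (hπlin g).map_smul cc u₀
        rw [h1, _root_.map_smul, smul_eq_mul, evalCLM_apply, hπ, hu₀van _ hg, mul_zero]
      exact chartDMap_ell_eq_zero k G (SmoothMap' k G ℂ)
        (fun w : SmoothMap' k G ℂ => evalCLM k G ℂ x₀ w)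
        (fun a b => map_sub _ a b)
        (fun t a => (evalCLM k G ℂ x₀).toLinearMap.map_smul_of_tower t a)
        (evalCLM k G ℂ x₀).continuous (orbitMap k π hπlin (cc • vI)) hZo hvan x j p hgo
    obtain ⟨t, ht, htU⟩ := habs γ₃ U hU
    have hcomp : ∀ cc : ℂ,
        (Pi ((t : ℂ) • γ₃) ((cc • vI : ↥(smoothVectors k π hπlin)) : SmoothMap' k G ℂ)).1 1
          = (t : ℂ) * cc * Iv := by
      intro cc
      rw [keyPi]
      have hintegrand : ∀ x : G,
          (((t : ℂ) • γ₃).1 x) *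
            (((cc • vI : ↥(smoothVectors k π hπlin)) : SmoothMap' k G ℂ).1 (x⁻¹ * 1))
            = ((t : ℂ) * cc) * ((r₃ x : ℂ) * u₀.1 x⁻¹) := by
        intro x
        have h1 : ((t : ℂ) • γ₃).1 x = (t : ℂ) * (r₃ x : ℂ) := rfl
        have h2 : ((cc • vI : ↥(smoothVectors k π hπlin)) : SmoothMap' k G ℂ).1 (x⁻¹ * 1)
            = cc * u₀.1 (x⁻¹ * 1) := rfl
        rw [h1, h2, mul_one]
        ring
      simp_rw [hintegrand]
      rw [MeasureTheory.integral_const_mul, hIv]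
    set cc : ℂ := 2 / ((t : ℂ) * Iv) with hcc
    have htne : (t : ℂ) ≠ 0 := by exact_mod_cast ht.ne'
    have hval : (Pi ((t : ℂ) • γ₃)
        ((cc • vI : ↥(smoothVectors k π hπlin)) : SmoothMap' k G ℂ)).1 1 = 2 := by
      rw [hcomp cc, hcc]
      field_simp
    have hfinal := hUV (Set.mk_mem_prod htU (hvV cc))
    rw [Set.mem_preimage, Metric.mem_ball, dist_zero_right] at hfinal
    rw [show ((cc • vI : ↥(smoothVectors k π hπlin)) : SmoothMap' k G ℂ)
      = ((cc • vI : ↥(smoothVectors k π hπlin)) : SmoothMap' k G ℂ) from rfl] at hval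
    rw [hval] at hfinal
    norm_num at hfinal
end
end

section
/- Let G_1 ⊆ G_2 ⊆ ⋯ be metrizable topological groups such that all inclusion maps G_n → G_{n+1} are continuous homomorphisms, and let O_DL be the direct limit topology on G := ⋃_{n∈ℕ} G_n (a set is open iff its intersection with each G_n is open in G_n). Assume: (a) for each n ∈ ℕ there is m > n such that the set G_n is not open in G_m; (b) there exists n ∈ ℕ such that for all identity neighbourhoods U ⊆ G_n and all m > n, the closure of U in G_m is not compact; (c) there exists a Hausdorff topology 𝒯 on G making each inclusion G_n → G continuous and such that every sequentially compact subset of (G,𝒯) is contained in some G_n and compact there. Then O_DL does not make the group multiplication G × G → G continuous; in particular O_DL differs from the topology O_TG making G the direct limit of the G_n in the category of topological groups. -/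
open Topology TopologicalSpace


open Topology TopologicalSpace Filter Set

section YamAux

variable {G : Type*} [Group G] (H : ℕ → Subgroup G) (τ : ∀ n, TopologicalSpace (H n))

/-- The coinduced topology on `G` from level `n`. -/
abbrev tGY (n : ℕ) : TopologicalSpace G :=
  TopologicalSpace.coinduced (fun x : H n => (x : G)) (τ n)

/-- Convergence of a sequence in `G` w.r.t. the level-`n` coinduced topology. -/
abbrev TendGY (n : ℕ) (f : ℕ → G) (p : G) : Prop :=
  Filter.Tendsto f Filter.atTop (@nhds G (tGY H τ n) p)

theorem TendGY.push {n : ℕ} {fs : ℕ → H n} {a : H n}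
    (h : Filter.Tendsto fs Filter.atTop (@nhds (H n) (τ n) a)) :
    TendGY H τ n (fun i => (fs i : G)) (a : G) := by
  have hc : @Continuous (H n) G (τ n) (tGY H τ n) (fun x : H n => (x : G)) :=
    continuous_coinduced_rng
  exact (@Continuous.tendsto _ _ (τ n) (tGY H τ n) _ hc a).comp h

theorem TendGY.memLim {n : ℕ} {f : ℕ → G} {p : G} (h : TendGY H τ n f p)
    (hf : ∀ i, f i ∈ H n) : p ∈ H n := by
  by_contra hp
  letI : TopologicalSpace G := tGY H τ n
  have hUopen : IsOpen ({g : G | g ∉ H n} ∪ {p}) := by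
    rw [isOpen_coinduced]
    have he : (fun x : H n => (x : G)) ⁻¹' ({g : G | g ∉ H n} ∪ {p}) = ∅ := by
      ext a
      simp only [Set.mem_preimage, Set.mem_union, Set.mem_setOf_eq, Set.mem_singleton_iff,
        Set.mem_empty_iff_false, iff_false]
      rintro (ha | ha)
      · exact ha a.2
      · exact hp (ha ▸ a.2)
    rw [he]
    exact isOpen_empty
  have hpm : p ∈ ({g : G | g ∉ H n} ∪ {p}) := Or.inr rfl
  have hev : ∀ᶠ i in Filter.atTop, f i ∈ ({g : G | g ∉ H n} ∪ {p}) :=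
    tendsto_nhds.mp h _ hUopen hpm
  obtain ⟨i, hi⟩ := hev.exists
  rcases hi with hi | hi
  · exact hi (hf i)
  · exact hp (hi ▸ hf i)

theorem TendGY.pull {n : ℕ} {f : ℕ → G} {p : G} (h : TendGY H τ n f p)
    (hf : ∀ i, f i ∈ H n) (hp : p ∈ H n) :
    Filter.Tendsto (fun i => (⟨f i, hf i⟩ : H n)) Filter.atTop
      (@nhds (H n) (τ n) ⟨p, hp⟩) := by
  letI : TopologicalSpace G := tGY H τ n
  letI := τ n
  rw [tendsto_nhds]
  intro s hs hps
  have hUopen : IsOpen (((fun x : H n => (x : G)) '' s) ∪ (↑(H n) : Set G)ᶜ) := by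
    rw [isOpen_coinduced]
    have he : (fun x : H n => (x : G)) ⁻¹'
        (((fun x : H n => (x : G)) '' s) ∪ (↑(H n) : Set G)ᶜ) = s := by
      ext a
      simp only [Set.mem_preimage, Set.mem_union, Set.mem_image, Set.mem_compl_iff,
        SetLike.mem_coe]
      constructor
      · rintro (⟨b, hb, hbe⟩ | ha)
        · have : b = a := Subtype.ext hbe
          exact this ▸ hb
        · exact absurd a.2 ha
      · intro ha; exact Or.inl ⟨a, ha, rfl⟩
    rw [he]; exact hs
  have hpm : p ∈ (((fun x : H n => (x : G)) '' s) ∪ (↑(H n) : Set G)ᶜ) :=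
    Or.inl ⟨⟨p, hp⟩, hps, rfl⟩
  have hev : ∀ᶠ i in Filter.atTop,
      f i ∈ (((fun x : H n => (x : G)) '' s) ∪ (↑(H n) : Set G)ᶜ) :=
    tendsto_nhds.mp h _ hUopen hpm
  filter_upwards [hev] with i hi
  show (⟨f i, hf i⟩ : H n) ∈ s
  rcases hi with ⟨b, hb, hbe⟩ | hi
  · have hba : b = ⟨f i, hf i⟩ := Subtype.ext hbe
    exact hba ▸ hb
  · exact absurd (hf i) hi

theorem TendGY.mono {n m : ℕ} {f : ℕ → G} {p : G} (hle : tGY H τ n ≤ tGY H τ m)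
    (h : TendGY H τ n f p) : TendGY H τ m f p :=
  h.mono_right (nhds_mono hle)

theorem TendGY.toTop {n : ℕ} {f : ℕ → G} {p : G} {t : TopologicalSpace G}
    (hle : tGY H τ n ≤ t) (h : TendGY H τ n f p) :
    Filter.Tendsto f Filter.atTop (@nhds G t p) :=
  h.mono_right (nhds_mono hle)

theorem TendGY.mul (htg : ∀ k, @IsTopologicalGroup (H k) (τ k) _) {n : ℕ} {f g : ℕ → G}
    {p q : G} (hf : ∀ i, f i ∈ H n) (hg : ∀ i, g i ∈ H n)
    (h1 : TendGY H τ n f p) (h2 : TendGY H τ n g q) :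
    TendGY H τ n (fun i => f i * g i) (p * q) := by
  letI := τ n
  haveI := htg n
  have hp := h1.memLim H τ hf
  have hq := h2.memLim H τ hg
  have H1 := h1.pull H τ hf hp
  have H2 := h2.pull H τ hg hq
  have hmul : Filter.Tendsto (fun i => (⟨f i, hf i⟩ : H n) * ⟨g i, hg i⟩) Filter.atTop
      (𝓝 (⟨p, hp⟩ * ⟨q, hq⟩)) := H1.mul H2
  have := TendGY.push H τ hmul
  simpa using this

theorem TendGY.inv (htg : ∀ k, @IsTopologicalGroup (H k) (τ k) _) {n : ℕ} {f : ℕ → G}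
    {p : G} (hf : ∀ i, f i ∈ H n) (h : TendGY H τ n f p) :
    TendGY H τ n (fun i => (f i)⁻¹) p⁻¹ := by
  letI := τ n
  haveI := htg n
  have hp := h.memLim H τ hf
  have H1 := h.pull H τ hf hp
  have hinv : Filter.Tendsto (fun i => (⟨f i, hf i⟩ : H n)⁻¹) Filter.atTop
      (𝓝 (⟨p, hp⟩⁻¹)) := H1.inv
  have := TendGY.push H τ hinv
  simpa using this

end YamAux

section Combin

open Filter

theorem natSeq_tendsto_atTop_of_not_freq {l : ℕ → ℕ}
    (h : ∀ v, ¬ ∃ᶠ i in atTop, l i = v) : Tendsto l atTop atTop := by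
  rw [tendsto_atTop]
  intro b
  have h' : ∀ v, ∀ᶠ i in atTop, l i ≠ v := fun v => not_frequently.mp (h v)
  have Hb : ∀ᶠ i in atTop, ∀ v ∈ Finset.range b, l i ≠ v :=
    (eventually_all_finset _).mpr fun v _ => h' v
  filter_upwards [Hb] with i hi
  by_contra hb
  push_neg at hb
  exact hi (l i) (Finset.mem_range.mpr hb) rfl

theorem exists_strictMono_comp_strictMono {r : ℕ → ℕ} (h : Tendsto r atTop atTop) :
    ∃ χ : ℕ → ℕ, StrictMono χ ∧ StrictMono (r ∘ χ) := by
  have key : ∀ a b : ℕ, ∃ c, a < c ∧ b < r c := by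
    intro a b
    obtain ⟨c, hc1, hc2⟩ := ((tendsto_atTop.mp h (b + 1)).and (eventually_gt_atTop a)).exists
    exact ⟨c, hc2, by omega⟩
  choose step h1 h2 using key
  let χ : ℕ → ℕ := fun k => Nat.rec 0 (fun _ prev => step prev (r prev)) k
  have hsucc : ∀ k, χ (k + 1) = step (χ k) (r (χ k)) := fun k => rfl
  refine ⟨χ, strictMono_nat_of_lt_succ fun k => ?_, strictMono_nat_of_lt_succ fun k => ?_⟩
  · rw [hsucc]; exact h1 _ _
  · show r (χ k) < r (χ (k + 1))
    rw [hsucc]; exact h2 _ _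

theorem tendsto_of_antitoneBasis {X : Type*} {F : Filter X} {B : ℕ → Set X}
    (hB : F.HasAntitoneBasis B) {s : ℕ → X} (hs : ∀ i, s i ∈ B i) :
    Tendsto s atTop F := by
  rw [hB.toHasBasis.tendsto_right_iff]
  intro i _
  filter_upwards [eventually_ge_atTop i] with k hk
  exact hB.antitone hk (hs k)

theorem exists_freq_eq_of_bounded {l : ℕ → ℕ} {m : ℕ} (h : ∀ i, l i < m) :
    ∃ v, ∃ᶠ i in atTop, l i = v := by
  by_contra hc
  push_neg at hc
  obtain ⟨i, hi⟩ := (tendsto_atTop.mp (natSeq_tendsto_atTop_of_not_freq (fun v => Filter.not_frequently.mpr (hc v))) m).exists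
  exact absurd (h i) (by omega)

end Combin

set_option maxHeartbeats 2000000 in
/-- **Proposition (variant of Yamasaki's theorem).**
Let `G₁ ⊆ G₂ ⊆ ⋯` be metrizable topological groups with continuous inclusion
homomorphisms, and let `O_DL` be the direct limit topology on the union `G`.
Assume (a) for each `n` there is `m > n` such that `Gₙ` is not open in `Gₘ`;
(b) there is `n` such that for all identity neighbourhoods `U ⊆ Gₙ` and all `m > n`
the closure of `U` in `Gₘ` is not compact; and (c) there is a Hausdorff topology `𝒯`
on `G` making each inclusion `Gₙ → G` continuous such that every sequentially compact
subset of `(G,𝒯)` is contained in some `Gₙ` and compact there.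
Then `O_DL` does not make multiplication `G × G → G` continuous, and in particular
`O_DL` differs from the topology `O_TG` making `G` the direct limit of the `Gₙ`
as a topological group (the finest group topology making all inclusions continuous). -/
theorem statement5
    (G : Type*) [Group G]
    -- the ascending sequence of subgroups, exhausting G
    (H : ℕ → Subgroup G) (hmono : Monotone H) (hexh : ∀ x : G, ∃ n, x ∈ H n)
    -- topologies making each step a metrizable topological group
    (τ : (n : ℕ) → TopologicalSpace (H n))
    (htg : ∀ n, @IsTopologicalGroup (H n) (τ n) _)
    (hmet : ∀ n, @TopologicalSpace.MetrizableSpace (H n) (τ n))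
    -- continuity of the inclusion maps Gₙ → Gₙ₊₁
    (hincl : ∀ n, @Continuous (H n) (H (n + 1)) (τ n) (τ (n + 1))
      (Subgroup.inclusion (hmono (Nat.le_succ n))))
    -- the direct limit topology O_DL on G (final topology for the inclusions)
    (ODL : TopologicalSpace G)
    (hODL : ODL = ⨆ n, TopologicalSpace.coinduced (fun x : H n => (x : G)) (τ n))
    -- the finest group topology on G making all inclusions continuous
    (OTG : TopologicalSpace G)
    (hOTG : OTG = (sInf {t : GroupTopology G |
      ∀ n, @Continuous (H n) G (τ n) t.toTopologicalSpace Subtype.val}).toTopologicalSpace)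
    -- hypothesis (a)
    (ha : ∀ n, ∃ m, n < m ∧ ¬ @IsOpen (H m) (τ m) {x : H m | (x : G) ∈ H n})
    -- hypothesis (b)
    (hb : ∃ n, ∀ U : Set (H n), U ∈ @nhds (H n) (τ n) 1 → ∀ m, (hnm : n < m) →
      ¬ @IsCompact (H m) (τ m) (@closure (H m) (τ m)
        ((Subgroup.inclusion (hmono hnm.le)) '' U)))
    -- hypothesis (c)
    (hc : ∃ 𝒯 : TopologicalSpace G, @T2Space G 𝒯 ∧
      (∀ n, @Continuous (H n) G (τ n) 𝒯 Subtype.val) ∧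
      (∀ K : Set G, @IsSeqCompact G 𝒯 K →
        ∃ n, K ⊆ (H n : Set G) ∧ @IsCompact (H n) (τ n) (Subtype.val ⁻¹' K))) :
    ¬ @Continuous (G × G) G (@instTopologicalSpaceProd G G ODL ODL) ODL
        (fun p => p.1 * p.2)
    ∧ ODL ≠ OTG := by
  classical
  obtain ⟨nb, hnb⟩ := hb
  obtain ⟨𝒯, h𝒯2, h𝒯c, h𝒯k⟩ := hc
  -- continuity of all inclusions
  have hincl2 : ∀ n m (h : n ≤ m),
      @Continuous (H n) (H m) (τ n) (τ m) (Subgroup.inclusion (hmono h)) := by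
    intro n m h
    induction m, h using Nat.le_induction with
    | base =>
      have hfe : ⇑(Subgroup.inclusion (hmono (le_refl n))) = id :=
        funext fun a => Subtype.ext rfl
      rw [hfe]; exact continuous_id
    | succ k hk ih =>
      have hfe : ⇑(Subgroup.inclusion (hmono (Nat.le_succ_of_le hk)))
          = (Subgroup.inclusion (hmono (Nat.le_succ k))) ∘ (Subgroup.inclusion (hmono hk)) :=
        funext fun a => Subtype.ext rfl
      have : @Continuous (H n) (H (k+1)) (τ n) (τ (k+1))
          ((Subgroup.inclusion (hmono (Nat.le_succ k))) ∘ (Subgroup.inclusion (hmono hk))) :=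
        Continuous.comp (hincl k) ih
      rw [hfe]; exact this
  have htGle : ∀ n m, n ≤ m → tGY H τ n ≤ tGY H τ m := by
    intro n m h
    have hfe : (fun a : H n => (a : G))
        = (fun a : H m => (a : G)) ∘ (Subgroup.inclusion (hmono h)) :=
      funext fun a => rfl
    calc tGY H τ n
        = TopologicalSpace.coinduced ((fun a : H m => (a : G)) ∘ (Subgroup.inclusion (hmono h)))
            (τ n) := by rw [← hfe]
      _ = TopologicalSpace.coinduced (fun a : H m => (a : G))
            (TopologicalSpace.coinduced (Subgroup.inclusion (hmono h)) (τ n)) :=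
          (coinduced_compose).symm
      _ ≤ tGY H τ m :=
          coinduced_mono (continuous_iff_coinduced_le.mp (hincl2 n m h))
  have hτ𝒯 : ∀ n, tGY H τ n ≤ 𝒯 := fun n => continuous_iff_coinduced_le.mp (h𝒯c n)
  -- neighbourhood bases
  have hbex : ∀ n : ℕ, ∃ B : ℕ → Set (H n), (@nhds (H n) (τ n) 1).HasAntitoneBasis B := by
    intro n
    letI := τ n
    haveI := hmet n
    letI : MetricSpace (H n) := TopologicalSpace.metrizableSpaceMetric (H n)
    exact (𝓝 1).exists_antitone_basis
  choose Bas hBas using hbex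
  have hBasMem : ∀ n i, Bas n i ∈ @nhds (H n) (τ n) 1 := fun n i =>
    (hBas n).toHasBasis.mem_of_mem trivial
  have hBasSub : ∀ n, ∀ U ∈ @nhds (H n) (τ n) 1, ∃ i, Bas n i ⊆ U := by
    intro n U hU
    obtain ⟨i, -, h⟩ := (hBas n).toHasBasis.mem_iff.mp hU
    exact ⟨i, h⟩
  -- Part 1 : multiplication is not continuous
  have part1 : ¬ @Continuous (G × G) G (@instTopologicalSpaceProd G G ODL ODL) ODL
      (fun p => p.1 * p.2) := by
    intro hcont
    letI : TopologicalSpace G := ODL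
    -- the chain of levels from (a)
    let Nf : ℕ → ℕ := fun j => Nat.rec nb (fun _ prev => (ha prev).choose) j
    have hNfs : ∀ j, Nf (j + 1) = (ha (Nf j)).choose := fun j => rfl
    have hNlt : ∀ j, Nf j < Nf (j + 1) := fun j => (ha (Nf j)).choose_spec.1
    have hNsm : StrictMono Nf := strictMono_nat_of_lt_succ hNlt
    have hNop : ∀ j, ¬ @IsOpen (H (Nf (j + 1))) (τ (Nf (j + 1)))
        {a : H (Nf (j + 1)) | (a : G) ∈ H (Nf j)} := fun j => (ha (Nf j)).choose_spec.2
    have hNle : ∀ j, j ≤ Nf j := fun j => hNsm.le_apply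
    have hnbN : ∀ j, nb ≤ Nf j := fun j => by
      have : Nf 0 ≤ Nf j := hNsm.monotone (Nat.zero_le j)
      exact this
    -- escapers
    have hxex : ∀ j r, ∃ a : H (Nf (j + 1)), a ∈ Bas (Nf (j + 1)) r ∧ (a : G) ∉ H (Nf j) := by
      intro j r
      by_contra hno
      push_neg at hno
      apply hNop j
      letI := τ (Nf (j + 1))
      haveI := htg (Nf (j + 1))
      have hsg : {a : H (Nf (j + 1)) | (a : G) ∈ H (Nf j)}
          = ((Subgroup.comap ((H (Nf (j + 1))).subtype) (H (Nf j))
              : Subgroup (H (Nf (j + 1)))) : Set (H (Nf (j + 1)))) := rfl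
      rw [hsg]
      exact Subgroup.isOpen_of_mem_nhds _
        (Filter.mem_of_superset (hBasMem _ r) fun a ha' => hno a ha')
    choose xe hxB hxNot using hxex
    have hxT : ∀ j, Filter.Tendsto (fun r => xe j r) Filter.atTop
        (@nhds (H (Nf (j + 1))) (τ (Nf (j + 1))) 1) := fun j =>
      tendsto_of_antitoneBasis (hBas _) (hxB j)
    -- wild families
    have hfam : ∀ j : ℕ, ∃ σ : ℕ → H nb,
        (∀ r, σ r ∈ Bas nb j) ∧
        (∀ n, n ≤ nb + j + 1 → ∀ y : G, ∀ ψ : ℕ → ℕ, StrictMono ψ →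
          ¬ TendGY H τ n (fun i => ((σ (ψ i) : H nb) : G)) y) ∧
        (∀ g : G,
          (∃ n ψ, StrictMono ψ ∧ TendGY H τ n (fun i => ((σ (ψ i) : H nb) : G)) g) →
          g ≠ 1 ∧ (∃ n', TendGY H τ n' (fun i => ((σ i : H nb) : G)) g) ∧
          (∀ g', (∃ n ψ, StrictMono ψ ∧
            TendGY H τ n (fun i => ((σ (ψ i) : H nb) : G)) g') → g' = g)) := by
      intro j
      set φj := nb + j + 1 with hφdef
      have hφlt : nb < φj := by omega
      have hφle : nb ≤ φj := le_of_lt hφlt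
      set B := Bas nb j with hBdef
      have hBmem : B ∈ @nhds (H nb) (τ nb) 1 := hBasMem nb j
      set C := @closure (H φj) (τ φj) ((Subgroup.inclusion (hmono hφlt.le)) '' B) with hCdef
      set K : Set G := (fun a : H φj => (a : G)) '' C with hKdef
      have hCcl : @IsClosed (H φj) (τ φj) C := by
        letI := τ φj; exact isClosed_closure
      have h1B : (1 : H nb) ∈ B := by
        letI := τ nb; exact mem_of_mem_nhds hBmem
      have h1K : (1 : G) ∈ K := by
        refine ⟨1, ?_, by simp⟩
        letI := τ φj
        exact subset_closure ⟨(1 : H nb), h1B, map_one _⟩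
      have hKnsc : ¬ @IsSeqCompact G 𝒯 K := by
        intro hsc
        obtain ⟨n, hKn, hcpt⟩ := h𝒯k K hsc
        set n2 := max n (nb + 1) with hn2def
        have hn2n : n ≤ n2 := le_max_left _ _
        have hnbn2 : nb < n2 := lt_of_lt_of_le (Nat.lt_succ_self nb) (le_max_right _ _)
        have htr : (Subtype.val ⁻¹' K : Set (H n2))
            = (Subgroup.inclusion (hmono hn2n)) '' (Subtype.val ⁻¹' K : Set (H n)) := by
          ext a
          constructor
          · intro haK
            exact ⟨⟨(a : G), hKn haK⟩, haK, Subtype.ext rfl⟩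
          · rintro ⟨b, hb, rfl⟩
            show ((Subgroup.inclusion (hmono hn2n) b : H n2) : G) ∈ K
            simpa [Subgroup.coe_inclusion] using hb
        have hcpt2 : @IsCompact (H n2) (τ n2) (Subtype.val ⁻¹' K) := by
          rw [htr]
          exact @IsCompact.image _ _ (τ n) (τ n2) _ _ hcpt (hincl2 n n2 hn2n)
        letI := τ n2
        haveI := hmet n2
        letI : MetricSpace (H n2) := TopologicalSpace.metrizableSpaceMetric (H n2)
        have hclosed : IsClosed (Subtype.val ⁻¹' K : Set (H n2)) := hcpt2.isClosed
        have hsubset : (Subgroup.inclusion (hmono hnbn2.le)) '' B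
            ⊆ (Subtype.val ⁻¹' K : Set (H n2)) := by
          rintro _ ⟨b, hbB, rfl⟩
          show ((Subgroup.inclusion (hmono hnbn2.le) b : H n2) : G) ∈ K
          have hbC : (Subgroup.inclusion (hmono hφlt.le) b : H φj) ∈ C := by
            letI := τ φj
            exact subset_closure ⟨b, hbB, rfl⟩
          exact ⟨_, hbC, by simp [Subgroup.coe_inclusion]⟩
        have hclsub : @closure (H n2) (τ n2) ((Subgroup.inclusion (hmono hnbn2.le)) '' B)
            ⊆ (Subtype.val ⁻¹' K) := closure_minimal hsubset hclosed
        exact hnb B hBmem n2 hnbn2 (hcpt2.of_isClosed_subset isClosed_closure hclsub)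
      have hKex : ∃ u : ℕ → G, (∀ i, u i ∈ K) ∧ ∀ a ∈ K, ∀ ψ : ℕ → ℕ, StrictMono ψ →
          ¬ Filter.Tendsto (fun i => u (ψ i)) Filter.atTop (@nhds G 𝒯 a) := by
        by_contra hno
        push_neg at hno
        apply hKnsc
        intro u hu
        obtain ⟨a, ha', ψ, hψ, hT⟩ := hno u hu
        exact ⟨a, ha', ψ, hψ, hT⟩
      obtain ⟨u, hu, hwild⟩ := hKex
      have hlift : ∀ i, ∃ c : H φj, c ∈ C ∧ (c : G) = u i := fun i => by
        obtain ⟨c, hcC, hce⟩ := hu i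
        exact ⟨c, hcC, hce⟩
      choose uc hucC hucval using hlift
      have happrox : ∀ i, ∃ b : H nb, b ∈ B ∧
          (uc i)⁻¹ * (Subgroup.inclusion (hmono hφlt.le) b) ∈ Bas φj i := by
        intro i
        letI := τ φj
        haveI := htg φj
        obtain ⟨O₁, hO₁sub, hO₁open, hO₁mem⟩ := mem_nhds_iff.mp (hBasMem φj i)
        have hopen2 : IsOpen ((fun v : H φj => (uc i)⁻¹ * v) ⁻¹' O₁) :=
          hO₁open.preimage (continuous_const.mul continuous_id)
        have hmem2 : uc i ∈ (fun v : H φj => (uc i)⁻¹ * v) ⁻¹' O₁ := by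
          simp [hO₁mem]
        obtain ⟨v, hvO, hvB⟩ := (mem_closure_iff.mp (hucC i)) _ hopen2 hmem2
        obtain ⟨b, hbB, rfl⟩ := hvB
        exact ⟨b, hbB, hO₁sub hvO⟩
      choose ut hutB hutQ using happrox
      set vt : ℕ → G := fun i => ((ut i : H nb) : G) with hvt
      set eps : ℕ → H φj := fun i => (uc i)⁻¹ * (Subgroup.inclusion (hmono hφlt.le) (ut i))
        with heps
      have hepsT : Filter.Tendsto eps Filter.atTop (@nhds (H φj) (τ φj) 1) :=
        tendsto_of_antitoneBasis (hBas φj) hutQ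
      have hepsG : TendGY H τ φj (fun i => ((eps i : H φj) : G)) 1 := by
        have := TendGY.push H τ hepsT
        simpa using this
      have hval : ∀ i, vt i = u i * ((eps i : H φj) : G) := by
        intro i
        show ((ut i : H nb) : G) = u i * ((eps i : H φj) : G)
        simp [heps, Subgroup.coe_inclusion, hucval i, mul_inv_cancel_left]
      have hT1 : ∀ (ψ : ℕ → ℕ), StrictMono ψ → ∀ n (y : G),
          TendGY H τ n (fun i => vt (ψ i)) y →
          TendGY H τ (max n φj) (fun i => u (ψ i)) y := by
        intro ψ hψ n y hT
        have h1 : TendGY H τ (max n φj) (fun i => vt (ψ i)) y :=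
          TendGY.mono H τ (htGle n _ (le_max_left _ _)) hT
        have h2 : TendGY H τ (max n φj) (fun i => ((eps (ψ i) : H φj) : G)) 1 := by
          have hcc : TendGY H τ φj (fun i => ((eps (ψ i) : H φj) : G)) 1 := by
            have h6 := Filter.Tendsto.comp hepsG hψ.tendsto_atTop
            exact h6
          exact TendGY.mono H τ (htGle φj _ (le_max_right _ _)) hcc
        have h3 : TendGY H τ (max n φj) (fun i => (((eps (ψ i) : H φj) : G))⁻¹) 1⁻¹ :=
          TendGY.inv H τ htg
            (fun i => hmono (le_max_right n φj) (SetLike.coe_mem _)) h2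
        have h4 := TendGY.mul H τ htg
            (fun i => hmono (le_trans hφle (le_max_right n φj)) (SetLike.coe_mem _))
            (fun i => (H (max n φj)).inv_mem
              (hmono (le_max_right n φj) (SetLike.coe_mem _))) h1 h3
        have hfe : (fun i => u (ψ i))
            = fun i => vt (ψ i) * (((eps (ψ i) : H φj) : G))⁻¹ := by
          funext i
          rw [hval (ψ i), mul_inv_cancel_right]
        rw [hfe]
        simpa using h4
      have humem : ∀ i, u i ∈ H φj := fun i => (hucval i) ▸ SetLike.coe_mem (uc i)
      have hcap : ∀ (ψ : ℕ → ℕ), StrictMono ψ → ∀ n (y : G), n ≤ φj →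
          ¬ TendGY H τ n (fun i => vt (ψ i)) y := by
        intro ψ hψ n y hn hT
        have hU := hT1 ψ hψ n y hT
        rw [max_eq_right hn] at hU
        have hym : y ∈ H φj := TendGY.memLim H τ hU (fun i => humem (ψ i))
        have hpull := TendGY.pull H τ hU (fun i => humem (ψ i)) hym
        have hlift2 : (fun i => (⟨u (ψ i), humem (ψ i)⟩ : H φj)) = fun i => uc (ψ i) :=
          funext fun i => Subtype.ext (hucval (ψ i)).symm
        rw [hlift2] at hpull
        letI := τ φj
        have hyC : (⟨y, hym⟩ : H φj) ∈ C :=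
          hCcl.mem_of_tendsto hpull (Filter.Eventually.of_forall fun i => hucC (ψ i))
        have hyK : y ∈ K := ⟨⟨y, hym⟩, hyC, rfl⟩
        exact hwild y hyK ψ hψ (TendGY.toTop H τ (hτ𝒯 φj) hU)
      have hkill : ∀ (ψ : ℕ → ℕ), StrictMono ψ → ∀ n (y : G),
          TendGY H τ n (fun i => vt (ψ i)) y → y ∈ K → False := by
        intro ψ hψ n y hT hyK
        exact hwild y hyK ψ hψ (TendGY.toTop H τ (hτ𝒯 _) (hT1 ψ hψ n y hT))
      by_cases hdi : ∃ n, ∃ y : G, ∃ ψ : ℕ → ℕ, StrictMono ψ ∧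
          TendGY H τ n (fun i => vt (ψ i)) y
      · obtain ⟨y₀, ψ₀, hψ₀, hT₀⟩ := Nat.find_spec hdi
        have hfind : φj < Nat.find hdi := by
          rcases le_or_gt (Nat.find hdi) φj with hle2 | hgt
          · exact (hcap ψ₀ hψ₀ _ y₀ hle2 hT₀).elim
          · exact hgt
        have hmemb : ∀ r, ut (ψ₀ r) ∈ Bas nb j := fun r => hutB (ψ₀ r)
        have huniq : ∀ (g' : G) n' (ψ' : ℕ → ℕ), StrictMono ψ' →
            TendGY H τ n' (fun i => vt (ψ₀ (ψ' i))) g' → g' = y₀ := by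
          intro g' n' ψ' hψ' hT'
          rcases lt_or_ge n' (Nat.find hdi) with hlt | hge
          · exact absurd ⟨g', ψ₀ ∘ ψ', hψ₀.comp hψ', hT'⟩ (Nat.find_min hdi hlt)
          · have hz : TendGY H τ n' (fun i => vt (ψ₀ (ψ' i))) y₀ := by
              have h5 : TendGY H τ n' (fun i => vt (ψ₀ i)) y₀ :=
                TendGY.mono H τ (htGle _ n' hge) hT₀
              have h7 := Filter.Tendsto.comp h5 hψ'.tendsto_atTop
              exact h7
            have hnbn' : nb ≤ n' := le_trans hφle (le_trans hfind.le hge)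
            have hmb : ∀ i, vt (ψ₀ (ψ' i)) ∈ H n' := fun i =>
              hmono hnbn' (SetLike.coe_mem _)
            letI := τ n'
            haveI := hmet n'
            letI : MetricSpace (H n') := TopologicalSpace.metrizableSpaceMetric (H n')
            have e := tendsto_nhds_unique
              (TendGY.pull H τ hT' hmb (TendGY.memLim H τ hT' hmb))
              (TendGY.pull H τ hz hmb (TendGY.memLim H τ hz hmb))
            exact congrArg Subtype.val e
        have hy₀ne : y₀ ≠ 1 := by
          intro h1
          exact hkill ψ₀ hψ₀ _ y₀ hT₀ (h1 ▸ h1K)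
        refine ⟨fun r => ut (ψ₀ r), hmemb, ?_, ?_⟩
        · intro n hn y ψ hψ hT
          exact hcap (ψ₀ ∘ ψ) (hψ₀.comp hψ) n y hn hT
        · rintro g ⟨n, ψ, hψ, hT⟩
          have hg : g = y₀ := huniq g n ψ hψ hT
          refine ⟨hg ▸ hy₀ne, ⟨Nat.find hdi, hg ▸ hT₀⟩, ?_⟩
          rintro g' ⟨n'', ψ'', hψ'', hT''⟩
          exact (huniq g' n'' ψ'' hψ'' hT'').trans hg.symm
      · push_neg at hdi
        refine ⟨ut, hutB, ?_, ?_⟩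
        · intro n _ y ψ hψ hT
          exact hdi n y ψ hψ hT
        · rintro g ⟨n, ψ, hψ, hT⟩
          exact absurd hT (hdi n g ψ hψ)
    choose σf hσB hσW2 hσkey using hfam
    -- the sets S, D, A
    set vσ : ℕ → ℕ → G := fun j r => ((σf j r : H nb) : G) with hvσ
    set vx : ℕ → ℕ → G := fun j r => ((xe j r : H (Nf (j + 1))) : G) with hvx
    set S : Set G := {g : G | ∃ j r, g = vσ j r * vx j r} with hS
    set D : Set G := {g : G | ∃ j n ψ, StrictMono ψ ∧
      TendGY H τ n (fun i => vσ j (ψ i)) g} with hD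
    set A : Set G := S ∪ D with hA
    have hkeyD : ∀ j (g : G),
        (∃ n ψ, StrictMono ψ ∧ TendGY H τ n (fun i => vσ j (ψ i)) g) →
        g ≠ 1 ∧ (∃ n', TendGY H τ n' (fun i => vσ j i) g) ∧
        (∀ g', (∃ n ψ, StrictMono ψ ∧ TendGY H τ n (fun i => vσ j (ψ i)) g') → g' = g) :=
      fun j g h => hσkey j g h
    have hSnotin : ∀ j r, vσ j r * vx j r ∉ H (Nf j) := by
      intro j r hmem
      have h1 : vσ j r ∈ H (Nf j) := hmono (hnbN j) (SetLike.coe_mem _)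
      have h2 : vx j r ∈ H (Nf j) := by
        have := (H (Nf j)).mul_mem ((H (Nf j)).inv_mem h1) hmem
        simpa [inv_mul_cancel_left] using this
      exact hxNot j r h2
    have h1A : (1 : G) ∉ A := by
      rintro (⟨j, r, hE⟩ | hDm)
      · have : vσ j r * vx j r ∈ H (Nf j) := by
          rw [← hE]; exact Subgroup.one_mem _
        exact hSnotin j r this
      · obtain ⟨j, n, ψ, hψ, hT⟩ := hDm
        exact (hkeyD j 1 ⟨n, ψ, hψ, hT⟩).1 rfl
    -- a helper for 𝒯-convergence to 1
    have hconst𝒯 : ∀ c : G, Filter.Tendsto (fun _ : ℕ => c) Filter.atTop (@nhds G 𝒯 c) := by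
      intro c
      letI := 𝒯
      exact tendsto_const_nhds
    have h𝒯tend1 : ∀ w : ℕ → G,
        (∀ s : Set G, IsOpen[𝒯] s → (1 : G) ∈ s → ∀ᶠ i in Filter.atTop, w i ∈ s) →
        Filter.Tendsto w Filter.atTop (@nhds G 𝒯 1) := by
      intro w hw
      exact (@nhds_basis_opens G 𝒯 1).tendsto_right_iff.mpr fun s hs => hw s hs.2 hs.1
    -- A has closed traces
    have hAop : @IsOpen G ODL Aᶜ := by
      rw [hODL, isOpen_iSup_iff]
      intro m
      rw [isOpen_coinduced]
      letI := τ m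
      haveI := hmet m
      haveI := htg m
      letI : MetricSpace (H m) := TopologicalSpace.metrizableSpaceMetric (H m)
      have hseq : IsSeqClosed ((fun a : H m => (a : G)) ⁻¹' A) := by
        intro f p hfA hfp
        show (p : G) ∈ A
        by_cases hfreqD : ∃ᶠ i in Filter.atTop, ((f i : G)) ∈ D
        · -- D branch
          obtain ⟨χ, hχ, hχD⟩ := Filter.extraction_of_frequently_atTop hfreqD
          have hfp2 : Filter.Tendsto (fun i => f (χ i)) Filter.atTop (𝓝 p) :=
            hfp.comp hχ.tendsto_atTop
          have hW : ∀ i, ∃ jj, ∃ n ψ, StrictMono ψ ∧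
              TendGY H τ n (fun i' => vσ jj (ψ i')) ((f (χ i) : G)) := fun i => hχD i
          choose lf hlw using hW
          by_cases hlconst : ∃ v, ∃ᶠ i in Filter.atTop, lf i = v
          · obtain ⟨v, hv⟩ := hlconst
            obtain ⟨χ₂, hχ₂, hχ₂v⟩ := Filter.extraction_of_frequently_atTop hv
            have hw0 : ∃ n ψ, StrictMono ψ ∧
                TendGY H τ n (fun i' => vσ v (ψ i')) ((f (χ (χ₂ 0)) : G)) := by
              have hh := hlw (χ₂ 0); rw [hχ₂v 0] at hh; exact hh
            have hk0 := hkeyD v _ hw0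
            have hallEq : ∀ i, ((f (χ (χ₂ i)) : G)) = ((f (χ (χ₂ 0)) : G)) := by
              intro i
              have hh := hlw (χ₂ i); rw [hχ₂v i] at hh
              exact hk0.2.2 _ hh
            have hconstseq : ∀ i, f (χ (χ₂ i)) = f (χ (χ₂ 0)) := fun i =>
              Subtype.ext (hallEq i)
            have htend2 : Filter.Tendsto (fun i => f (χ (χ₂ i))) Filter.atTop (𝓝 p) :=
              hfp2.comp hχ₂.tendsto_atTop
            have hpe : p = f (χ (χ₂ 0)) := by
              refine tendsto_nhds_unique htend2 ?_
              simp only [hconstseq]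
              exact tendsto_const_nhds
            right
            show (p : G) ∈ D
            rw [hpe]
            obtain ⟨n, ψ, hψ, hT⟩ := hw0
            exact ⟨v, n, ψ, hψ, hT⟩
          · push_neg at hlconst
            exfalso
            have hltop : Filter.Tendsto lf Filter.atTop Filter.atTop :=
              natSeq_tendsto_atTop_of_not_freq (fun v => Filter.not_frequently.mpr (hlconst v))
            set Kst : Set G := insert (1 : G) (insert ((p : G))
              ((Set.range fun i => ((f (χ i) : G)))
                ∪ (Set.range fun q : ℕ × ℕ => vσ (lf q.1) q.2))) with hKst
            have hf𝒯 : Filter.Tendsto (fun i => ((f (χ i) : G))) Filter.atTop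
                (@nhds G 𝒯 (p : G)) :=
              TendGY.toTop H τ (hτ𝒯 m) (TendGY.push H τ hfp2)
            have hKsc : @IsSeqCompact G 𝒯 Kst := by
              intro y hy
              have hycases : ∀ i, y i = 1 ∨ y i = (p : G) ∨
                  (∃ i', y i = ((f (χ i') : G))) ∨
                  (∃ q : ℕ × ℕ, y i = vσ (lf q.1) q.2) := by
                intro i
                have hyi := hy i
                simp only [hKst, Set.mem_insert_iff, Set.mem_union, Set.mem_range] at hyi
                tauto
              by_cases h1 : ∃ᶠ i in Filter.atTop, y i = 1
              · obtain ⟨ψ, hψ, hval1⟩ := Filter.extraction_of_frequently_atTop h1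
                refine ⟨1, by simp [hKst], ψ, hψ, ?_⟩
                have hce : (fun i => y (ψ i)) = fun _ => (1 : G) := funext hval1
                show Filter.Tendsto (fun i => y (ψ i)) Filter.atTop (@nhds G 𝒯 1)
                rw [hce]; exact hconst𝒯 1
              · by_cases h2 : ∃ᶠ i in Filter.atTop, y i = (p : G)
                · obtain ⟨ψ, hψ, hvalp⟩ := Filter.extraction_of_frequently_atTop h2
                  refine ⟨(p : G), by simp [hKst], ψ, hψ, ?_⟩
                  have hce : (fun i => y (ψ i)) = fun _ => ((p : G)) := funext hvalp
                  show Filter.Tendsto (fun i => y (ψ i)) Filter.atTop (@nhds G 𝒯 (p : G))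
                  rw [hce]; exact hconst𝒯 _
                · by_cases h3 : ∃ᶠ i in Filter.atTop, ∃ i', y i = ((f (χ i') : G))
                  · obtain ⟨ψ, hψ, hvf⟩ := Filter.extraction_of_frequently_atTop h3
                    choose af haf using hvf
                    by_cases haconst : ∃ v, ∃ᶠ i in Filter.atTop, af i = v
                    · obtain ⟨v, hv2⟩ := haconst
                      obtain ⟨χ₃, hχ₃, hχ₃v⟩ := Filter.extraction_of_frequently_atTop hv2
                      have hmemv : ((f (χ v) : G)) ∈ Kst := by
                        simp only [hKst, Set.mem_insert_iff, Set.mem_union, Set.mem_range]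
                        right; right; left; exact ⟨v, rfl⟩
                      refine ⟨_, hmemv, ψ ∘ χ₃, hψ.comp hχ₃, ?_⟩
                      have hce : (fun i => y ((ψ ∘ χ₃) i)) = fun _ => ((f (χ v) : G)) := by
                        funext i
                        show y (ψ (χ₃ i)) = _
                        rw [haf (χ₃ i), hχ₃v i]
                      show Filter.Tendsto (fun i => y ((ψ ∘ χ₃) i)) Filter.atTop
                        (@nhds G 𝒯 ((f (χ v) : G)))
                      rw [hce]; exact hconst𝒯 _
                    · push_neg at haconst
                      have hatop := natSeq_tendsto_atTop_of_not_freq (fun v => Filter.not_frequently.mpr (haconst v))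
                      refine ⟨(p : G), by simp [hKst], ψ, hψ, ?_⟩
                      have hce : (fun i => y (ψ i)) = fun i => ((f (χ (af i)) : G)) :=
                        funext haf
                      show Filter.Tendsto (fun i => y (ψ i)) Filter.atTop (@nhds G 𝒯 (p : G))
                      rw [hce]
                      exact hf𝒯.comp hatop
                  · have hev4 : ∀ᶠ i in Filter.atTop,
                        ∃ q : ℕ × ℕ, y i = vσ (lf q.1) q.2 := by
                      have e1 := Filter.not_frequently.mp h1
                      have e2 := Filter.not_frequently.mp h2
                      have e3 := Filter.not_frequently.mp h3
                      filter_upwards [e1, e2, e3] with i h1' h2' h3'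
                      rcases hycases i with h | h | h | h
                      · exact absurd h h1'
                      · exact absurd h h2'
                      · exact absurd h h3'
                      · exact h
                    obtain ⟨ψ, hψ, hq⟩ := Filter.extraction_of_eventually_atTop hev4
                    choose qf hqf using hq
                    by_cases hbconst : ∃ v, ∃ᶠ i in Filter.atTop, lf (qf i).1 = v
                    · obtain ⟨v, hv3⟩ := hbconst
                      obtain ⟨χ₄, hχ₄, hχ₄v⟩ := Filter.extraction_of_frequently_atTop hv3
                      have hwit : ∃ n ψ', StrictMono ψ' ∧
                          TendGY H τ n (fun i' => vσ v (ψ' i'))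
                            ((f (χ ((qf (χ₄ 0)).1)) : G)) := by
                        have hh := hlw ((qf (χ₄ 0)).1)
                        rw [hχ₄v 0] at hh
                        exact hh
                      have hkk := hkeyD v _ hwit
                      by_cases hcconst : ∃ w, ∃ᶠ i in Filter.atTop, (qf (χ₄ i)).2 = w
                      · obtain ⟨w, hv4⟩ := hcconst
                        obtain ⟨χ₅, hχ₅, hχ₅v⟩ := Filter.extraction_of_frequently_atTop hv4
                        have hmemw : vσ v w ∈ Kst := by
                          simp only [hKst, Set.mem_insert_iff, Set.mem_union, Set.mem_range]
                          right; right; right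
                          refine ⟨((qf (χ₄ (χ₅ 0))).1, w), ?_⟩
                          rw [hχ₄v (χ₅ 0)]
                        refine ⟨vσ v w, hmemw, ψ ∘ (χ₄ ∘ χ₅), hψ.comp (hχ₄.comp hχ₅), ?_⟩
                        have hce : (fun i => y ((ψ ∘ (χ₄ ∘ χ₅)) i)) = fun _ => vσ v w := by
                          funext i
                          show y (ψ (χ₄ (χ₅ i))) = _
                          rw [hqf (χ₄ (χ₅ i)), hχ₄v (χ₅ i), hχ₅v i]
                        show Filter.Tendsto (fun i => y ((ψ ∘ (χ₄ ∘ χ₅)) i)) Filter.atTop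
                          (@nhds G 𝒯 (vσ v w))
                        rw [hce]; exact hconst𝒯 _
                      · push_neg at hcconst
                        have hctop := natSeq_tendsto_atTop_of_not_freq (fun v => Filter.not_frequently.mpr (hcconst v))
                        obtain ⟨nf, hnf⟩ := hkk.2.1
                        have hmemg : ((f (χ ((qf (χ₄ 0)).1)) : G)) ∈ Kst := by
                          simp only [hKst, Set.mem_insert_iff, Set.mem_union, Set.mem_range]
                          right; right; left; exact ⟨(qf (χ₄ 0)).1, rfl⟩
                        refine ⟨_, hmemg, ψ ∘ χ₄, hψ.comp hχ₄, ?_⟩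
                        have hTf : Filter.Tendsto (fun i' => vσ v i') Filter.atTop
                            (@nhds G 𝒯 ((f (χ ((qf (χ₄ 0)).1)) : G))) :=
                          TendGY.toTop H τ (hτ𝒯 nf) hnf
                        have hcomp := hTf.comp hctop
                        have hce : (fun i => y ((ψ ∘ χ₄) i))
                            = fun i => vσ v ((qf (χ₄ i)).2) := by
                          funext i
                          show y (ψ (χ₄ i)) = _
                          rw [hqf (χ₄ i), hχ₄v i]
                        show Filter.Tendsto (fun i => y ((ψ ∘ χ₄) i)) Filter.atTop
                          (@nhds G 𝒯 ((f (χ ((qf (χ₄ 0)).1)) : G)))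
                        rw [hce]
                        exact hcomp
                    · push_neg at hbconst
                      have hbtop : Filter.Tendsto (fun i => lf (qf i).1)
                          Filter.atTop Filter.atTop :=
                        natSeq_tendsto_atTop_of_not_freq (fun v => Filter.not_frequently.mpr (hbconst v))
                      refine ⟨1, by simp [hKst], ψ, hψ, ?_⟩
                      apply h𝒯tend1
                      intro s hs h1s
                      have hop : IsOpen[τ nb] (Subtype.val ⁻¹' s : Set (H nb)) :=
                        continuous_def.mp (h𝒯c nb) s hs
                      have h1p : (1 : H nb) ∈ (Subtype.val ⁻¹' s : Set (H nb)) := by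
                        show ((1 : H nb) : G) ∈ s
                        simpa using h1s
                      have hnh : (Subtype.val ⁻¹' s : Set (H nb)) ∈ @nhds (H nb) (τ nb) 1 := by
                        letI := τ nb
                        exact hop.mem_nhds h1p
                      obtain ⟨q₀, hq₀⟩ := hBasSub nb _ hnh
                      have hev : ∀ᶠ i in Filter.atTop, q₀ ≤ lf (qf i).1 :=
                        hbtop.eventually (eventually_ge_atTop q₀)
                      filter_upwards [hev] with i hi
                      show y (ψ i) ∈ s
                      rw [hqf i]
                      have hmm2 : σf (lf (qf i).1) ((qf i).2) ∈ Bas nb q₀ :=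
                        (hBas nb).antitone hi (hσB _ _)
                      exact hq₀ hmm2
            obtain ⟨n, hKn, hcpt⟩ := h𝒯k Kst hKsc
            obtain ⟨i₂, hi₂⟩ := (Filter.tendsto_atTop.mp hltop n).exists
            letI := τ n
            haveI := hmet n
            letI : MetricSpace (H n) := TopologicalSpace.metrizableSpaceMetric (H n)
            have hmemKst : ∀ r : ℕ, vσ (lf i₂) r ∈ Kst := by
              intro r
              simp only [hKst, Set.mem_insert_iff, Set.mem_union, Set.mem_range]
              right; right; right
              exact ⟨(i₂, r), rfl⟩
            have hseqm : ∀ r : ℕ, (⟨vσ (lf i₂) r, hKn (hmemKst r)⟩ : H n)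
                ∈ (Subtype.val ⁻¹' Kst : Set (H n)) := fun r => hmemKst r
            obtain ⟨a, haK, ψ, hψ, hT⟩ := hcpt.isSeqCompact hseqm
            have hTG : TendGY H τ n (fun i => vσ (lf i₂) (ψ i)) ((a : H n) : G) := by
              have := TendGY.push H τ hT
              exact this
            exact hσW2 (lf i₂) n (by omega) _ ψ hψ hTG
        · -- S branch
          have hevS : ∀ᶠ i in Filter.atTop, ((f i : G)) ∈ S := by
            have e := Filter.not_frequently.mp hfreqD
            filter_upwards [e] with i hi
            rcases hfA i with h | h
            · exact h
            · exact absurd h hi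
          obtain ⟨χ, hχ, hχS⟩ := Filter.extraction_of_eventually_atTop hevS
          have hfp2 : Filter.Tendsto (fun i => f (χ i)) Filter.atTop (𝓝 p) :=
            hfp.comp hχ.tendsto_atTop
          choose jf rf hjr using hχS
          have hjb : ∀ i, jf i < m := by
            intro i
            by_contra hge
            push_neg at hge
            have h1 : ((f (χ i) : G)) ∉ H (Nf (jf i)) := by
              rw [hjr i]; exact hSnotin (jf i) (rf i)
            have h2 : ((f (χ i) : G)) ∈ H (Nf (jf i)) :=
              hmono (le_trans hge (hNle (jf i))) (SetLike.coe_mem _)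
            exact h1 h2
          obtain ⟨j₀, hj₀⟩ := exists_freq_eq_of_bounded hjb
          obtain ⟨χ₂, hχ₂, hχ₂v⟩ := Filter.extraction_of_frequently_atTop hj₀
          have hfp3 : Filter.Tendsto (fun i => f (χ (χ₂ i))) Filter.atTop (𝓝 p) :=
            hfp2.comp hχ₂.tendsto_atTop
          have hjr2 : ∀ i, ((f (χ (χ₂ i)) : G)) = vσ j₀ (rf (χ₂ i)) * vx j₀ (rf (χ₂ i)) := by
            intro i
            have hh := hjr (χ₂ i)
            rw [hχ₂v i] at hh
            exact hh
          by_cases hrconst : ∃ v, ∃ᶠ i in Filter.atTop, rf (χ₂ i) = v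
          · obtain ⟨v, hv⟩ := hrconst
            obtain ⟨χ₃, hχ₃, hχ₃v⟩ := Filter.extraction_of_frequently_atTop hv
            have hconstseq : ∀ i, f (χ (χ₂ (χ₃ i))) = f (χ (χ₂ (χ₃ 0))) := by
              intro i
              apply Subtype.ext
              rw [hjr2 (χ₃ i), hjr2 (χ₃ 0), hχ₃v i, hχ₃v 0]
            have htend3 : Filter.Tendsto (fun i => f (χ (χ₂ (χ₃ i)))) Filter.atTop (𝓝 p) :=
              hfp3.comp hχ₃.tendsto_atTop
            have hpe : p = f (χ (χ₂ (χ₃ 0))) := by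
              refine tendsto_nhds_unique htend3 ?_
              simp only [hconstseq]
              exact tendsto_const_nhds
            left
            show (p : G) ∈ S
            rw [hpe]
            exact ⟨j₀, rf (χ₂ (χ₃ 0)), hjr2 (χ₃ 0)⟩
          · push_neg at hrconst
            have hrtop : Filter.Tendsto (fun i => rf (χ₂ i)) Filter.atTop Filter.atTop :=
              natSeq_tendsto_atTop_of_not_freq (fun v => Filter.not_frequently.mpr (hrconst v))
            set M := max m (Nf (j₀ + 1)) with hM
            have hvT : TendGY H τ M (fun i => ((f (χ (χ₂ i)) : G))) (p : G) :=
              TendGY.mono H τ (htGle m M (le_max_left _ _)) (TendGY.push H τ hfp3)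
            have hxTG : TendGY H τ M (fun i => vx j₀ (rf (χ₂ i))) 1 := by
              have hfull : TendGY H τ (Nf (j₀ + 1)) (fun r => vx j₀ r) 1 := by
                have := TendGY.push H τ (hxT j₀)
                simpa using this
              have hcomp := Filter.Tendsto.comp hfull hrtop
              exact TendGY.mono H τ (htGle _ M (le_max_right _ _)) hcomp
            have hσT : TendGY H τ M (fun i => vσ j₀ (rf (χ₂ i))) (p : G) := by
              have hinv : TendGY H τ M (fun i => (vx j₀ (rf (χ₂ i)))⁻¹) 1⁻¹ :=
                TendGY.inv H τ htg
                  (fun i => hmono (le_max_right m (Nf (j₀ + 1))) (SetLike.coe_mem _)) hxTG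
              have hmul := TendGY.mul H τ htg
                (fun i => hmono (le_max_left m (Nf (j₀ + 1))) (SetLike.coe_mem _))
                (fun i => (H M).inv_mem
                  (hmono (le_max_right m (Nf (j₀ + 1))) (SetLike.coe_mem _)))
                hvT hinv
              have hfe : (fun i => vσ j₀ (rf (χ₂ i)))
                  = fun i => ((f (χ (χ₂ i)) : G)) * (vx j₀ (rf (χ₂ i)))⁻¹ := by
                funext i
                rw [hjr2 i, mul_inv_cancel_right]
              rw [hfe]
              simpa using hmul
            obtain ⟨χ₄, hχ₄, hrmono⟩ := exists_strictMono_comp_strictMono hrtop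
            right
            refine ⟨j₀, M, fun i => rf (χ₂ (χ₄ i)), hrmono, ?_⟩
            have hcomp := Filter.Tendsto.comp hσT hχ₄.tendsto_atTop
            exact hcomp
      have hcl : IsClosed ((fun a : H m => (a : G)) ⁻¹' A) := hseq.isClosed
      have hpc : (fun a : H m => (a : G)) ⁻¹' Aᶜ = ((fun a : H m => (a : G)) ⁻¹' A)ᶜ :=
        Set.preimage_compl
      rw [hpc]
      exact hcl.isOpen_compl
    -- final contradiction
    have h1O : (1 : G) ∈ Aᶜ := h1A
    have hOnhds : Aᶜ ∈ @nhds G ODL 1 := by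
      exact hAop.mem_nhds h1O
    have hT2 : Filter.Tendsto (fun p : G × G => p.1 * p.2)
        (@nhds (G × G) (@instTopologicalSpaceProd G G ODL ODL) (1, 1)) (@nhds G ODL 1) := by
      have := @Continuous.tendsto _ _ (@instTopologicalSpaceProd G G ODL ODL) ODL _ hcont (1, 1)
      simpa using this
    have hpre : (fun p : G × G => p.1 * p.2) ⁻¹' Aᶜ
        ∈ @nhds (G × G) (@instTopologicalSpaceProd G G ODL ODL) (1, 1) := hT2 hOnhds
    rw [@nhds_prod_eq G G ODL ODL 1 1] at hpre
    obtain ⟨V₁, hV₁, V₂, hV₂, hVsub⟩ := Filter.mem_prod_iff.mp hpre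
    have hvalc : ∀ n, @Continuous (H n) G (τ n) ODL (fun a : H n => (a : G)) := by
      intro n
      rw [hODL, continuous_iff_coinduced_le]
      exact le_iSup (fun k => TopologicalSpace.coinduced (fun x : H k => (x : G)) (τ k)) n
    have htr1 : (fun a : H nb => (a : G)) ⁻¹' V₁ ∈ @nhds (H nb) (τ nb) 1 := by
      have ht : Filter.Tendsto (fun a : H nb => (a : G)) (@nhds (H nb) (τ nb) 1)
          (@nhds G ODL 1) := by
        have := @Continuous.tendsto _ _ (τ nb) ODL _ (hvalc nb) 1
        simpa using this
      exact ht hV₁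
    obtain ⟨j, hj⟩ := hBasSub nb _ htr1
    have htr2 : (fun a : H (Nf (j + 1)) => (a : G)) ⁻¹' V₂
        ∈ @nhds (H (Nf (j + 1))) (τ (Nf (j + 1))) 1 := by
      have ht : Filter.Tendsto (fun a : H (Nf (j + 1)) => (a : G))
          (@nhds (H (Nf (j + 1))) (τ (Nf (j + 1))) 1) (@nhds G ODL 1) := by
        have := @Continuous.tendsto _ _ (τ (Nf (j + 1))) ODL _ (hvalc (Nf (j + 1))) 1
        simpa using this
      exact ht hV₂
    obtain ⟨r₀, hr₀⟩ := hBasSub (Nf (j + 1)) _ htr2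
    have hσV : vσ j r₀ ∈ V₁ := hj (hσB j r₀)
    have hxV : vx j r₀ ∈ V₂ := hr₀ (hxB j r₀)
    have hinAC : vσ j r₀ * vx j r₀ ∈ Aᶜ := hVsub (Set.mk_mem_prod hσV hxV)
    exact hinAC (Or.inl ⟨j, r₀, rfl⟩)
  refine ⟨part1, ?_⟩
  intro hEq
  apply part1
  rw [hEq, hOTG]
  exact (sInf {t : GroupTopology G |
    ∀ n, @Continuous (H n) G (τ n) t.toTopologicalSpace Subtype.val}).continuous_mul'
end

section
/- Let G be a connected Lie group with G ⊆ G_ℂ and V_n a relatively compact open identity neighbourhood in G_ℂ. If K ⊆ GV_n is compact, then there exists a compact set L ⊆ V_n such that GK ⊆ GL. -/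
open scoped Pointwise

/-- **Lemma.** Let `G` be a connected Lie group contained in its complexification
`G_ℂ` (modelled here as a subgroup `H` of a complex Lie group `Gc`), and let `Vₙ`
be a relatively compact open identity neighbourhood in `Gc`. If `K ⊆ G·Vₙ` is
compact, then there is a compact set `L ⊆ Vₙ` with `G·K ⊆ G·L`. -/
theorem statement11
    {kc : ℕ} (Gc : Type*) [Group Gc] [TopologicalSpace Gc] [IsTopologicalGroup Gc]
    [ChartedSpace (EuclideanSpace ℂ (Fin kc)) Gc] [LocallyCompactSpace Gc]
    (H : Subgroup Gc) [ConnectedSpace H]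
    (Vn : Set Gc) (hVopen : IsOpen Vn) (hV1 : (1 : Gc) ∈ Vn)
    (hVrc : IsCompact (closure Vn))
    (K : Set Gc) (hK : IsCompact K) (hKsub : K ⊆ (H : Set Gc) * Vn) :
    ∃ L : Set Gc, L ⊆ Vn ∧ IsCompact L ∧ (H : Set Gc) * K ⊆ (H : Set Gc) * L := by
  -- For each `k ∈ K`, choose `h k ∈ H`, `v k ∈ Vn` with `k = h k * v k`,
  -- and a compact `C k ⊆ Vn` with `v k ∈ interior (C k)`.
  have hchoice : ∀ k : K, ∃ h ∈ (H : Set Gc), ∃ C : Set Gc,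
      IsCompact C ∧ C ⊆ Vn ∧ (k : Gc) ∈ h • interior C := by
    rintro ⟨k, hk⟩
    obtain ⟨h, hh, v, hv, hkv⟩ := hKsub hk
    obtain ⟨C, hCcomp, hvint, hCsub⟩ := exists_compact_subset hVopen hv
    exact ⟨h, hh, C, hCcomp, hCsub, ⟨v, hvint, hkv⟩⟩
  choose h hh C hCcomp hCsub hkmem using hchoice
  -- finite subcover of `K` by the open sets `h k • interior (C k)`
  have hcover : K ⊆ ⋃ k : K, h k • interior (C k) := fun x hx =>
    Set.mem_iUnion.2 ⟨⟨x, hx⟩, hkmem ⟨x, hx⟩⟩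
  obtain ⟨t, ht⟩ := hK.elim_finite_subcover (fun k : K => h k • interior (C k))
    (fun k => (isOpen_interior).smul (h k)) hcover
  refine ⟨⋃ k ∈ t, C k, ?_, ?_, ?_⟩
  · exact Set.iUnion₂_subset fun k _ => hCsub k
  · exact t.isCompact_biUnion fun k _ => hCcomp k
  · rintro x ⟨g, hg, y, hy, rfl⟩
    obtain ⟨i, hit, hyi⟩ := Set.mem_iUnion₂.1 (ht hy)
    obtain ⟨c, hc, rfl⟩ := hyi
    refine ⟨g * h i, mul_mem hg (hh i), c, ?_, by simp [smul_eq_mul, mul_assoc]⟩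
    exact Set.mem_biUnion hit (interior_subset hc)
end

section
/- Let G be a connected Lie group with G ⊆ G_ℂ, V_n a relatively compact open identity neighbourhood in G_ℂ, and K, L ⊆ GV_n compact sets with GK ⊆ GL. Set θ := max{d(h) : h ∈ KL^{-1} ∩ G} < ∞. Then ‖γ‖_{K,N} ≤ e^{Nθ}‖γ‖_{L,N} for all γ ∈ 𝒜_n(G) and N ∈ ℕ₀. -/
open Filter Topology Set MeasureTheory
open scoped Pointwise ENNReal

set_option linter.unusedSectionVars false

noncomputable section

/-- ℂ-analytic on a set: continuous and locally a pointwise convergent series of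
continuous homogeneous complex polynomials. -/
def IsCAnalyticOn {Z E : Type*} [AddCommGroup Z] [Module ℂ Z] [TopologicalSpace Z]
    [AddCommGroup E] [Module ℂ E] [TopologicalSpace E]
    (f : Z → E) (U : Set Z) : Prop :=
  ContinuousOn f U ∧ ∀ x ∈ U, ∃ V ∈ 𝓝 x, V ⊆ U ∧
    ∃ p : (n : ℕ) → ContinuousMultilinearMap ℂ (fun _ : Fin n => Z) E,
      ∀ y ∈ V, HasSum (fun n => p n fun _ => y - x) (f y)

section CAnalytic

variable {Z E : Type*} [AddCommGroup Z] [Module ℂ Z] [TopologicalSpace Z]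
  [AddCommGroup E] [Module ℂ E] [TopologicalSpace E]

theorem IsCAnalyticOn.add [IsTopologicalAddGroup E] {f g : Z → E} {U : Set Z}
    (hf : IsCAnalyticOn f U) (hg : IsCAnalyticOn g U) : IsCAnalyticOn (f + g) U := by
  refine ⟨hf.1.add hg.1, fun x hx => ?_⟩
  obtain ⟨V1, hV1, hV1U, p, hp⟩ := hf.2 x hx
  obtain ⟨V2, hV2, hV2U, q, hq⟩ := hg.2 x hx
  refine ⟨V1 ∩ V2, Filter.inter_mem hV1 hV2, Set.inter_subset_left.trans hV1U,
    fun n => p n + q n, fun y hy => ?_⟩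
  simpa [ContinuousMultilinearMap.add_apply] using (hp y hy.1).add (hq y hy.2)

theorem IsCAnalyticOn.smul [IsTopologicalAddGroup E] [ContinuousConstSMul ℂ E]
    (c : ℂ) {f : Z → E} {U : Set Z} (hf : IsCAnalyticOn f U) :
    IsCAnalyticOn (c • f) U := by
  refine ⟨hf.1.const_smul c, fun x hx => ?_⟩
  obtain ⟨V1, hV1, hV1U, p, hp⟩ := hf.2 x hx
  refine ⟨V1, hV1, hV1U, fun n => c • p n, fun y hy => ?_⟩
  simpa [ContinuousMultilinearMap.smul_apply] using (hp y hy).const_smul c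

theorem IsCAnalyticOn.zero {U : Set Z} (hU : IsOpen U) :
    IsCAnalyticOn (0 : Z → E) U := by
  refine ⟨continuousOn_const, fun x hx => ?_⟩
  exact ⟨U, hU.mem_nhds hx, le_refl U, fun _ => 0, fun y _ => by
    simpa [ContinuousMultilinearMap.zero_apply] using hasSum_zero⟩

theorem IsCAnalyticOn.mono {f : Z → E} {U U' : Set Z} (hf : IsCAnalyticOn f U)
    (hsub : U' ⊆ U) (hU' : IsOpen U') : IsCAnalyticOn f U' := by
  refine ⟨hf.1.mono hsub, fun x hx => ?_⟩
  obtain ⟨V1, hV1, hV1U, p, hp⟩ := hf.2 x (hsub hx)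
  exact ⟨V1 ∩ U', Filter.inter_mem hV1 (hU'.mem_nhds hx), Set.inter_subset_right,
    p, fun y hy => hp y hy.1⟩

end CAnalytic

/-- ℂ-analytic (holomorphic) map on a subset of a manifold charted over a complex
locally convex space `X`. -/
def HolomorphicOnM (X : Type*) {Gc E : Type*} [AddCommGroup X] [Module ℂ X]
    [TopologicalSpace X] [TopologicalSpace Gc] [ChartedSpace X Gc]
    [AddCommGroup E] [Module ℂ E] [TopologicalSpace E]
    (f : Gc → E) (S : Set Gc) : Prop :=
  ∀ x ∈ S, IsCAnalyticOn (f ∘ (chartAt X x).symm)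
    ((chartAt X x).target ∩ (chartAt X x).symm ⁻¹' S)

section Holo

variable (X : Type*) {Gc E : Type*} [AddCommGroup X] [Module ℂ X]
  [TopologicalSpace X] [TopologicalSpace Gc] [ChartedSpace X Gc]
  [AddCommGroup E] [Module ℂ E] [TopologicalSpace E]

theorem HolomorphicOnM.add' [IsTopologicalAddGroup E] {f g : Gc → E} {S : Set Gc}
    (hf : HolomorphicOnM X f S) (hg : HolomorphicOnM X g S) :
    HolomorphicOnM X (f + g) S :=
  fun x hx => (hf x hx).add (hg x hx)

theorem HolomorphicOnM.smul' [IsTopologicalAddGroup E] [ContinuousConstSMul ℂ E]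
    (c : ℂ) {f : Gc → E} {S : Set Gc} (hf : HolomorphicOnM X f S) :
    HolomorphicOnM X (c • f) S :=
  fun x hx => (hf x hx).smul c

theorem HolomorphicOnM.zero' {S : Set Gc} (hS : IsOpen S) :
    HolomorphicOnM X (0 : Gc → E) S :=
  fun x _ => IsCAnalyticOn.zero
    ((chartAt X x).symm.isOpen_inter_preimage hS)

theorem HolomorphicOnM.mono' {f : Gc → E} {S S' : Set Gc}
    (hf : HolomorphicOnM X f S) (hsub : S' ⊆ S) (hS' : IsOpen S') :
    HolomorphicOnM X f S' :=
  fun x hx => (hf x (hsub hx)).mono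
    (Set.inter_subset_inter_right _ (Set.preimage_mono hsub))
    ((chartAt X x).symm.isOpen_inter_preimage hS')

end Holo

/-- The `E`-valued integral of `f` converges absolutely: `∫ q ∘ f dμ < ∞` for every
continuous seminorm `q`. -/
def AbsolutelyConvergent {α E : Type*} [MeasurableSpace α]
    [AddCommGroup E] [Module ℂ E] [TopologicalSpace E]
    (μ : Measure α) (f : α → E) : Prop :=
  ∀ q : Seminorm ℂ E, Continuous q → ∫⁻ a, ENNReal.ofReal (q (f a)) ∂μ < ⊤

section Groups

variable (X : Type*) [AddCommGroup X] [Module ℂ X] [TopologicalSpace X]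
variable {Gc : Type*} [Group Gc] [TopologicalSpace Gc] [IsTopologicalGroup Gc]
  [ChartedSpace X Gc]

/-- `η : G_ℂ → ℂ` is a superdecaying ℂ-analytic extension of `γ : G → ℂ` relative to
the identity neighbourhood `V ⊆ G_ℂ`:  `η` is holomorphic on `V·G`, restricts to `γ`
on `G`, and `sup{ |η(z⁻¹g)| e^{N d(g)} : z ∈ K, g ∈ G } < ∞` for every compact
`K ⊆ V` and every `N ∈ ℕ₀`. -/
def AnalExt (H : Subgroup Gc) (d : H → ℝ) (V : Set Gc) (γ : H → ℂ) (η : Gc → ℂ) :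
    Prop :=
  HolomorphicOnM X η (V * (H : Set Gc)) ∧ (∀ x : H, η ↑x = γ x) ∧
    ∀ K : Set Gc, K ⊆ V → IsCompact K → ∀ N : ℕ, ∃ C : ℝ,
      ∀ z ∈ K, ∀ g : H, ‖η (z⁻¹ * ↑g)‖ * Real.exp (N * d g) ≤ C

/-- The space `𝒜ₙ(G)` of superdecaying analytic functions on `G = H`, realized as a
subspace of `G → ℂ`: functions admitting a superdecaying ℂ-analytic extension to
`Vₙ·G ⊆ G_ℂ`. -/
def Anal (H : Subgroup Gc) (d : H → ℝ) (V : Set Gc) (hV : IsOpen V) :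
    Submodule ℂ (H → ℂ) where
  carrier := {γ | ∃ η, AnalExt X H d V γ η}
  add_mem' := by
    rintro γ₁ γ₂ ⟨η₁, h₁, e₁, b₁⟩ ⟨η₂, h₂, e₂, b₂⟩
    refine ⟨η₁ + η₂, h₁.add' X h₂, fun x => by simp [e₁ x, e₂ x], ?_⟩
    intro K hKV hK N
    obtain ⟨C₁, hC₁⟩ := b₁ K hKV hK N
    obtain ⟨C₂, hC₂⟩ := b₂ K hKV hK N
    refine ⟨C₁ + C₂, fun z hz g => ?_⟩
    calc ‖(η₁ + η₂) (z⁻¹ * ↑g)‖ * Real.exp (N * d g)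
        ≤ (‖η₁ (z⁻¹ * ↑g)‖ + ‖η₂ (z⁻¹ * ↑g)‖) * Real.exp (N * d g) := by
          gcongr
          exact norm_add_le _ _
      _ = ‖η₁ (z⁻¹ * ↑g)‖ * Real.exp (N * d g) + ‖η₂ (z⁻¹ * ↑g)‖ * Real.exp (N * d g) := by
          ring
      _ ≤ C₁ + C₂ := add_le_add (hC₁ z hz g) (hC₂ z hz g)
  zero_mem' := by
    refine ⟨0, HolomorphicOnM.zero' X (hV.mul_right), fun x => rfl, ?_⟩
    intro K _ _ N
    exact ⟨0, fun z _ g => by simp⟩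
  smul_mem' := by
    rintro c γ ⟨η, h, e, b⟩
    refine ⟨c • η, h.smul' X c, fun x => by simp [e x], ?_⟩
    intro K hKV hK N
    obtain ⟨C, hC⟩ := b K hKV hK N
    refine ⟨‖c‖ * C, fun z hz g => ?_⟩
    calc ‖(c • η) (z⁻¹ * ↑g)‖ * Real.exp (N * d g)
        = ‖c‖ * (‖η (z⁻¹ * ↑g)‖ * Real.exp (N * d g)) := by
          simp [norm_smul, mul_assoc]
      _ ≤ ‖c‖ * C := by
          have := hC z hz g
          exact mul_le_mul_of_nonneg_left this (norm_nonneg c)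

theorem mem_Anal {H : Subgroup Gc} {d : H → ℝ} {V : Set Gc} {hV : IsOpen V}
    {γ : H → ℂ} : γ ∈ Anal X H d V hV ↔ ∃ η, AnalExt X H d V γ η :=
  Iff.rfl

/-- A chosen superdecaying analytic extension of `γ ∈ 𝒜ₙ(G)` to `G_ℂ`
(unique on `Vₙ·G` by the identity theorem). -/
def extA {H : Subgroup Gc} {d : H → ℝ} {V : Set Gc} {hV : IsOpen V}
    (γ : Anal X H d V hV) : Gc → ℂ :=
  ((mem_Anal X).mp γ.2).choose

/-- The norm `‖γ‖_{K,N} = sup{ |γ̃(z⁻¹g)| e^{N d(g)} : z ∈ K, g ∈ G }` on `𝒜ₙ(G)`. -/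
def Anorm {H : Subgroup Gc} {d : H → ℝ} {V : Set Gc} {hV : IsOpen V}
    (K : Set Gc) (N : ℕ) (γ : Anal X H d V hV) : ℝ :=
  ⨆ (z : K) (g : H), ‖extA X γ ((z : Gc)⁻¹ * ↑g)‖ * Real.exp (N * d g)

/-- Distance version of the norms `‖·‖_{K,N}`, applied to the (pointwise) difference
of the analytic extensions of `γ` and `γ₀`. -/
def AnormDiff {H : Subgroup Gc} {d : H → ℝ} {V : Set Gc} {hV : IsOpen V}
    (K : Set Gc) (N : ℕ) (γ γ₀ : Anal X H d V hV) : ℝ :=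
  ⨆ (z : K) (g : H),
    ‖extA X γ ((z : Gc)⁻¹ * ↑g) - extA X γ₀ ((z : Gc)⁻¹ * ↑g)‖ * Real.exp (N * d g)

end Groups

section Vectors

variable (X : Type*) [AddCommGroup X] [Module ℂ X] [TopologicalSpace X]
variable {Gc : Type*} [Group Gc] [TopologicalSpace Gc] [IsTopologicalGroup Gc]
  [ChartedSpace X Gc]
variable {E : Type*} [AddCommGroup E] [Module ℂ E] [TopologicalSpace E]

/-- `f : G_ℂ → E` is a ℂ-analytic extension of the orbit map `g ↦ π(g)v` to `S`. -/
def OrbitExtends (H : Subgroup Gc) (π : H → E → E) (S : Set Gc) (v : E)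
    (f : Gc → E) : Prop :=
  HolomorphicOnM X f S ∧ ∀ g : H, f ↑g = π g v

/-- The space `Eₙ` of vectors whose orbit map extends ℂ-analytically to `S = G·Vₙ`. -/
def AnVec [IsTopologicalAddGroup E] [ContinuousConstSMul ℂ E]
    (H : Subgroup Gc) (π : H → E → E) (hπ : ∀ g : H, IsLinearMap ℂ (π g))
    (S : Set Gc) (hS : IsOpen S) : Submodule ℂ E where
  carrier := {v | ∃ f, OrbitExtends X H π S v f}
  add_mem' := by
    rintro v w ⟨f₁, h₁, e₁⟩ ⟨f₂, h₂, e₂⟩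
    exact ⟨f₁ + f₂, h₁.add' X h₂, fun g => by simp [e₁ g, e₂ g, (hπ g).map_add]⟩
  zero_mem' := by
    refine ⟨0, HolomorphicOnM.zero' X hS, fun g => ?_⟩
    have : π g (0 : E) = 0 := by
      simpa using (hπ g).map_smul 0 0
    simp [this]
  smul_mem' := by
    rintro c v ⟨f, h, e⟩
    exact ⟨c • f, h.smul' X c, fun g => by simp [e g, (hπ g).map_smul]⟩

theorem mem_AnVec [IsTopologicalAddGroup E] [ContinuousConstSMul ℂ E]
    {H : Subgroup Gc} {π : H → E → E} {hπ : ∀ g : H, IsLinearMap ℂ (π g)}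
    {S : Set Gc} {hS : IsOpen S} {v : E} :
    v ∈ AnVec X H π hπ S hS ↔ ∃ f, OrbitExtends X H π S v f :=
  Iff.rfl

/-- A chosen ℂ-analytic extension `π̃_v` of the orbit map of `v ∈ Eₙ`. -/
def extV [IsTopologicalAddGroup E] [ContinuousConstSMul ℂ E]
    {H : Subgroup Gc} {π : H → E → E} {hπ : ∀ g : H, IsLinearMap ℂ (π g)}
    {S : Set Gc} {hS : IsOpen S} (v : AnVec X H π hπ S hS) : Gc → E :=
  ((mem_AnVec X).mp v.2).choose

variable [IsTopologicalAddGroup E] [ContinuousConstSMul ℂ E]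

theorem AnVec_mono {H : Subgroup Gc} {π : H → E → E}
    {hπ : ∀ g : H, IsLinearMap ℂ (π g)} {S S' : Set Gc} {hS : IsOpen S}
    {hS' : IsOpen S'} (hsub : S' ⊆ S) :
    AnVec X H π hπ S hS ≤ AnVec X H π hπ S' hS' := by
  rintro v ⟨f, h, e⟩
  exact ⟨f, h.mono' X hsub hS', e⟩

/-- The space `E^ω = ⋃ₙ Eₙ` of analytic vectors (with `Sₙ = G·Vₙ` decreasing). -/
def AnVecU (H : Subgroup Gc) (π : H → E → E) (hπ : ∀ g : H, IsLinearMap ℂ (π g))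
    (S : ℕ → Set Gc) (hS : ∀ n, IsOpen (S n)) (hdec : ∀ n, S (n + 1) ⊆ S n) :
    Submodule ℂ E where
  carrier := ⋃ n, (AnVec X H π hπ (S n) (hS n) : Set E)
  add_mem' := by
    have mono : ∀ {n m : ℕ}, n ≤ m →
        AnVec X H π hπ (S n) (hS n) ≤ AnVec X H π hπ (S m) (hS m) := by
      intro n m hnm
      induction hnm with
      | refl => exact le_rfl
      | step h ih => exact ih.trans (AnVec_mono X (hdec _))
    rintro v w hv hw
    simp only [Set.mem_iUnion, SetLike.mem_coe] at hv hw ⊢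
    obtain ⟨n, hn⟩ := hv
    obtain ⟨m, hm⟩ := hw
    exact ⟨max n m, Submodule.add_mem _ (mono (le_max_left n m) hn)
      (mono (le_max_right n m) hm)⟩
  zero_mem' := by
    simp only [Set.mem_iUnion, SetLike.mem_coe]
    exact ⟨0, Submodule.zero_mem _⟩
  smul_mem' := by
    rintro c v hv
    simp only [Set.mem_iUnion, SetLike.mem_coe] at hv ⊢
    obtain ⟨n, hn⟩ := hv
    exact ⟨n, Submodule.smul_mem _ c hn⟩

theorem Anal_mono {H : Subgroup Gc} {d : H → ℝ} {V V' : Set Gc} {hV : IsOpen V}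
    {hV' : IsOpen V'} (hsub : V' ⊆ V) :
    Anal X H d V hV ≤ Anal X H d V' hV' := by
  rintro γ ⟨η, h, e, b⟩
  refine ⟨η, h.mono' X (Set.mul_subset_mul_right hsub) (hV'.mul_right), e, ?_⟩
  intro K hKV hK N
  exact b K (hKV.trans hsub) hK N

/-- The space `𝒜(G) = ⋃ₙ 𝒜ₙ(G)` of superdecaying analytic functions
(with `Vₙ` a decreasing sequence of identity neighbourhoods). -/
def AnalU (H : Subgroup Gc) (d : H → ℝ) (V : ℕ → Set Gc) (hV : ∀ n, IsOpen (V n))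
    (hdec : ∀ n, V (n + 1) ⊆ V n) : Submodule ℂ (H → ℂ) where
  carrier := ⋃ n, (Anal X H d (V n) (hV n) : Set (H → ℂ))
  add_mem' := by
    have mono : ∀ {n m : ℕ}, n ≤ m →
        Anal X H d (V n) (hV n) ≤ Anal X H d (V m) (hV m) := by
      intro n m hnm
      induction hnm with
      | refl => exact le_rfl
      | step h ih => exact ih.trans (Anal_mono X (hdec _))
    rintro γ₁ γ₂ h1 h2
    simp only [Set.mem_iUnion, SetLike.mem_coe] at h1 h2 ⊢
    obtain ⟨n, hn⟩ := h1
    obtain ⟨m, hm⟩ := h2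
    exact ⟨max n m, Submodule.add_mem _ (mono (le_max_left n m) hn)
      (mono (le_max_right n m) hm)⟩
  zero_mem' := by
    simp only [Set.mem_iUnion, SetLike.mem_coe]
    exact ⟨0, Submodule.zero_mem _⟩
  smul_mem' := by
    rintro c γ h
    simp only [Set.mem_iUnion, SetLike.mem_coe] at h ⊢
    obtain ⟨n, hn⟩ := h
    exact ⟨n, Submodule.smul_mem _ c hn⟩

end Vectors

/-- The distance function of a left-invariant Riemannian metric on a Lie group `G`:
a left-invariant, proper distance function defining the topology of `G`. -/
structure LeftInvDist (G : Type*) [Group G] [TopologicalSpace G] where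
  dist : G → G → ℝ
  dist_self : ∀ x, dist x x = 0
  dist_pos : ∀ x y, x ≠ y → 0 < dist x y
  dist_comm : ∀ x y, dist x y = dist y x
  dist_triangle : ∀ x y z, dist x z ≤ dist x y + dist y z
  left_invariant : ∀ g x y, dist (g * x) (g * y) = dist x y
  induces : ∀ (x : G) (s : Set G), s ∈ 𝓝 x ↔ ∃ ε > 0, {y | dist x y < ε} ⊆ s
  proper : ∀ (x : G) (R : ℝ), IsCompact {y | dist x y ≤ R}

/-- The function `d(g) = 𝐝(g,1)` associated to a left-invariant distance. -/
def LeftInvDist.d {G : Type*} [Group G] [TopologicalSpace G] (D : LeftInvDist G)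
    (g : G) : ℝ :=
  D.dist g 1

open scoped Manifold

section Aux

variable {k : ℕ} {Gc : Type*} [Group Gc] [TopologicalSpace Gc] [IsTopologicalGroup Gc]

/-- A topological group charted over a Euclidean space is Hausdorff. -/
theorem aux_t2 [ChartedSpace (EuclideanSpace ℂ (Fin k)) Gc] : T2Space Gc := by
  apply IsTopologicalGroup.t2Space_iff_one_closed.mpr
  rw [← isOpen_compl_iff, isOpen_iff_mem_nhds]
  intro x hx
  have hx1 : x ≠ 1 := by simpa using hx
  set e := chartAt (EuclideanSpace ℂ (Fin k)) x with he
  by_cases hy : (1 : Gc) ∈ e.source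
  · have hne : e x ≠ e 1 := fun h => hx1 (e.injOn (mem_chart_source _ x) hy h)
    have hU : IsOpen (e.source ∩ e ⁻¹' Metric.ball (e x) (dist (e x) (e 1))) :=
      e.isOpen_inter_preimage Metric.isOpen_ball
    refine Filter.mem_of_superset (hU.mem_nhds ⟨mem_chart_source _ x, by
      simp [Metric.mem_ball, dist_pos.mpr hne]⟩) ?_
    rintro y ⟨-, hball⟩ (rfl : y = 1)
    rw [Set.mem_preimage, Metric.mem_ball, dist_comm] at hball
    exact lt_irrefl _ hball
  · exact Filter.mem_of_superset (e.open_source.mem_nhds (mem_chart_source _ x))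
      (fun y hyU (hy1 : y = 1) => hy (hy1 ▸ hyU))

/-- The function `d` of a left-invariant distance is continuous. -/
theorem auxd_cont {G : Type*} [Group G] [TopologicalSpace G] (D : LeftInvDist G) :
    Continuous D.d := by
  rw [continuous_iff_continuousAt]
  intro x s hs
  obtain ⟨ε, hε, hball⟩ := Metric.mem_nhds_iff.mp hs
  rw [Filter.mem_map, D.induces]
  refine ⟨ε, hε, fun y (hy : D.dist x y < ε) => hball ?_⟩
  have h1 : D.d y ≤ D.dist y x + D.d x := D.dist_triangle y x 1
  have h2 : D.d x ≤ D.dist x y + D.d y := D.dist_triangle x y 1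
  have h3 : D.dist y x = D.dist x y := D.dist_comm y x
  rw [Metric.mem_ball, Real.dist_eq, abs_sub_lt_iff]
  unfold LeftInvDist.d at *
  constructor <;> linarith

/-- The triangle inequality for `d` on products. -/
theorem auxd_tri {G : Type*} [Group G] [TopologicalSpace G] (D : LeftInvDist G)
    (h g : G) : D.d (h * g) ≤ D.d h + D.d g := by
  have t := D.dist_triangle (h * g) h 1
  have li : D.dist (h * g) (h * 1) = D.dist g 1 := D.left_invariant h g 1
  rw [mul_one] at li
  unfold LeftInvDist.d at *
  linarith

theorem auxd_exp {G : Type*} [Group G] [TopologicalSpace G] (D : LeftInvDist G)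
    (N : ℕ) (h g : G) : Real.exp (N * D.d (h * g)) ≤
      Real.exp (N * D.d h) * Real.exp (N * D.d g) := by
  rw [← Real.exp_add]
  apply Real.exp_le_exp.mpr
  have h1 := auxd_tri D h g
  have hN : (0 : ℝ) ≤ N := Nat.cast_nonneg N
  nlinarith

/-- A subgroup carrying a proper left-invariant distance inducing its topology is
closed. -/
theorem aux_closed [ChartedSpace (EuclideanSpace ℂ (Fin k)) Gc]
    (H : Subgroup Gc) (D : LeftInvDist H) :
    IsClosed (H : Set Gc) := by
  haveI : T2Space Gc := aux_t2 (k := k)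
  set B : Set H := {y : H | D.dist 1 y ≤ 1} with hB
  have hBc : IsCompact B := D.proper 1 1
  have hBn : B ∈ 𝓝 (1 : H) :=
    (D.induces 1 B).mpr ⟨1, one_pos, fun y hy => le_of_lt (show D.dist 1 y < 1 from hy)⟩
  obtain ⟨t, ht, hsub⟩ : ∃ t ∈ 𝓝 ((1 : H) : Gc), Subtype.val ⁻¹' t ⊆ B := by
    rw [nhds_subtype] at hBn
    exact Filter.mem_comap.mp hBn
  obtain ⟨O, hOt, hOo, hO1⟩ := mem_nhds_iff.mp ht
  have hO1' : (1 : Gc) ∈ O := by simpa using hO1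
  have key : closure (H : Set Gc) ∩ O ⊆ (H : Set Gc) := by
    intro x hx
    have hx' : x ∈ closure ((H : Set Gc) ∩ O) := IsOpen.closure_inter hOo hx
    have hsub2 : (H : Set Gc) ∩ O ⊆ Subtype.val '' B := by
      rintro y ⟨hyH, hyO⟩
      exact ⟨⟨y, hyH⟩, hsub (hOt hyO), rfl⟩
    have hcl : IsClosed (Subtype.val '' B) :=
      (hBc.image continuous_subtype_val).isClosed
    have hmem := (closure_mono hsub2).trans hcl.closure_eq.subset hx'
    obtain ⟨b, -, rfl⟩ := hmem
    exact b.2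
  rw [← closure_subset_iff_isClosed]
  intro x hx
  have hxO : x ∈ x • O := by
    rw [Set.mem_smul_set_iff_inv_smul_mem, smul_eq_mul, inv_mul_cancel]
    exact hO1'
  obtain ⟨h, hh1, hh2⟩ := mem_closure_iff.mp hx (x • O) (hOo.smul x) hxO
  obtain ⟨o, hoO, hwo⟩ := hh1
  simp only [smul_eq_mul] at hwo
  subst hwo
  have hxcl : x⁻¹ * (x * o) ∈ closure (H : Set Gc) := by
    have h1 : x ∈ H.topologicalClosure := hx
    have h2 : (x * o : Gc) ∈ H.topologicalClosure :=
      Subgroup.le_topologicalClosure H hh2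
    exact mul_mem (inv_mem h1) h2
  have hoH : o ∈ (H : Set Gc) := key ⟨by simpa using hxcl, hoO⟩
  have hfin : (x * o) * o⁻¹ ∈ H := mul_mem hh2 (inv_mem hoH)
  simpa [mul_assoc] using hfin

end Aux


/-- **Lemma.** Let `G ⊆ G_ℂ` be a connected Lie group, `Vₙ` a relatively compact,
symmetric, open identity neighbourhood in `G_ℂ`, and `K, L ⊆ G·Vₙ` compact sets with
`G·K ⊆ G·L`.  Set `θ := sup{ d(h) : h ∈ KL⁻¹ ∩ G }`.  Then
`‖γ‖_{K,N} ≤ e^{Nθ} ‖γ‖_{L,N}` for all `γ ∈ 𝒜ₙ(G)` and `N ∈ ℕ₀`. -/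
theorem statement12
    {kc : ℕ} {Gc : Type*} [Group Gc] [TopologicalSpace Gc] [IsTopologicalGroup Gc]
    [ChartedSpace (EuclideanSpace ℂ (Fin kc)) Gc]
    [LieGroup 𝓘(ℂ, EuclideanSpace ℂ (Fin kc)) (⊤ : ℕ∞) Gc]
    (H : Subgroup Gc) [ConnectedSpace H]
    -- `d` comes from a left-invariant Riemannian distance on `G`
    (D : LeftInvDist H)
    -- the relatively compact, symmetric, connected open identity neighbourhood `Vₙ`
    (Vn : Set Gc) (hVo : IsOpen Vn) (hV1 : (1 : Gc) ∈ Vn) (hVsym : Vn⁻¹ = Vn)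
    (hVc : IsConnected Vn) (hVrc : IsCompact (closure Vn))
    -- compact sets `K, L ⊆ G·Vₙ` with `G·K ⊆ G·L`
    (K L : Set Gc) (hK : IsCompact K) (hL : IsCompact L)
    (hKsub : K ⊆ (H : Set Gc) * Vn) (hLsub : L ⊆ (H : Set Gc) * Vn)
    (hKL : (H : Set Gc) * K ⊆ (H : Set Gc) * L)
    -- `θ = max{d(h) : h ∈ K L⁻¹ ∩ G}`
    (θ : ℝ) (hθ : θ = sSup (D.d '' {h : H | (h : Gc) ∈ K * L⁻¹})) :
    ∀ (γ : Anal (EuclideanSpace ℂ (Fin kc)) H D.d Vn hVo) (N : ℕ),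
      Anorm (EuclideanSpace ℂ (Fin kc)) K N γ ≤
        Real.exp (N * θ) * Anorm (EuclideanSpace ℂ (Fin kc)) L N γ := by
  intro γ N
  haveI : T2Space Gc := aux_t2 (k := kc)
  haveI : LocallyCompactSpace Gc :=
    ChartedSpace.locallyCompactSpace (EuclideanSpace ℂ (Fin kc)) Gc
  unfold Anorm
  set η := extA (EuclideanSpace ℂ (Fin kc)) γ with hη_def
  have hη : AnalExt (EuclideanSpace ℂ (Fin kc)) H D.d Vn (↑γ) η :=
    ((mem_Anal (EuclideanSpace ℂ (Fin kc))).mp γ.2).choose_spec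
  have hbnd := hη.2.2
  -- `d ≤ θ` on `K L⁻¹ ∩ H`
  have hHcl : IsClosed (H : Set Gc) := aux_closed (k := kc) H D
  have hdθ : ∀ h : H, (h : Gc) ∈ K * L⁻¹ → D.d h ≤ θ := by
    intro h hh
    have h1 : IsCompact ((K * L⁻¹) ∩ (H : Set Gc)) :=
      (hK.mul hL.inv).inter_right hHcl
    have h2 : IsCompact {h : H | (h : Gc) ∈ K * L⁻¹} := by
      rw [Topology.IsEmbedding.subtypeVal.isCompact_iff]
      have himg : Subtype.val '' {h : H | (h : Gc) ∈ K * L⁻¹} =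
          (K * L⁻¹) ∩ (H : Set Gc) := by
        ext y
        constructor
        · rintro ⟨b, hb, rfl⟩
          exact ⟨hb, b.2⟩
        · rintro ⟨hy1, hy2⟩
          exact ⟨⟨y, hy2⟩, hy1, rfl⟩
      rw [himg]
      exact h1
    have h3 : BddAbove (D.d '' {h : H | (h : Gc) ∈ K * L⁻¹}) :=
      (h2.image (auxd_cont D)).bddAbove
    exact hθ ▸ le_csSup h3 ⟨h, hh, rfl⟩
  -- uniform bound on the `L`-side family
  have hchoice : ∀ z₀ : Gc, ∃ (h : H) (W : Set Gc) (C : ℝ), z₀ ∈ L →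
      (W ⊆ Vn ∧ z₀ ∈ (h : Gc) • interior W ∧
        ∀ u ∈ W, ∀ g : H, ‖η (u⁻¹ * ↑g)‖ * Real.exp (N * D.d g) ≤ C) := by
    intro z₀
    by_cases hz : z₀ ∈ L
    · obtain ⟨a, haH, v, hv, hav⟩ := hLsub hz
      obtain ⟨W, hWc, hvint, hWV⟩ := exists_compact_subset hVo hv
      obtain ⟨C, hC⟩ := hbnd W hWV hWc N
      exact ⟨⟨a, haH⟩, W, C, fun _ => ⟨hWV,
        Set.mem_smul_set.mpr ⟨v, hvint, by rw [smul_eq_mul]; exact hav⟩, hC⟩⟩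
    · exact ⟨1, ∅, 0, fun h => absurd h hz⟩
  choose hf Wf Cf hspec using hchoice
  have hcover : L ⊆ ⋃ z₀ ∈ L, ((hf z₀ : Gc) • interior (Wf z₀)) :=
    fun w hw => Set.mem_biUnion hw (hspec w hw).2.1
  obtain ⟨b, hbL, hbfin, hbcov⟩ := hL.elim_finite_subcover_image
    (fun z₀ _ => (isOpen_interior.smul _)) hcover
  set M : Set ℝ :=
    insert 0 ((fun z₀ => Real.exp (N * D.d (hf z₀)) * Cf z₀) '' b) with hM
  have hMbdd : BddAbove M := ((hbfin.image _).insert 0).bddAbove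
  set C₁ := sSup M with hC₁def
  have hC₁0 : 0 ≤ C₁ := le_csSup hMbdd (Set.mem_insert _ _)
  have hunif : ∀ w ∈ L, ∀ g : H,
      ‖η (w⁻¹ * ↑g)‖ * Real.exp (N * D.d g) ≤ C₁ := by
    intro w hw g
    obtain ⟨z₀, hz₀b, hmem⟩ := Set.mem_iUnion₂.mp (hbcov hw)
    obtain ⟨hWV, -, hCb⟩ := hspec z₀ (hbL hz₀b)
    obtain ⟨u, hu, hwu⟩ := Set.mem_smul_set.mp hmem
    rw [smul_eq_mul] at hwu
    set h₀ := hf z₀ with hh₀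
    set g' := h₀⁻¹ * g with hg'
    have hgdecomp : h₀ * g' = g := mul_inv_cancel_left _ _
    have heq : w⁻¹ * (↑g : Gc) = u⁻¹ * ↑g' := by
      rw [← hwu, hg']
      push_cast
      simp [mul_inv_rev, mul_assoc]
    have hCu : ‖η (u⁻¹ * ↑g')‖ * Real.exp (N * D.d g') ≤ Cf z₀ :=
      hCb u (interior_subset hu) g'
    have hd : Real.exp (N * D.d g) ≤
        Real.exp (N * D.d h₀) * Real.exp (N * D.d g') := by
      conv_lhs => rw [← hgdecomp]
      exact auxd_exp D N h₀ g'
    calc ‖η (w⁻¹ * ↑g)‖ * Real.exp (N * D.d g)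
        = ‖η (u⁻¹ * ↑g')‖ * Real.exp (N * D.d g) := by rw [heq]
      _ ≤ ‖η (u⁻¹ * ↑g')‖ *
            (Real.exp (N * D.d h₀) * Real.exp (N * D.d g')) :=
          mul_le_mul_of_nonneg_left hd (norm_nonneg _)
      _ = Real.exp (N * D.d h₀) *
            (‖η (u⁻¹ * ↑g')‖ * Real.exp (N * D.d g')) := by ring
      _ ≤ Real.exp (N * D.d h₀) * Cf z₀ :=
          mul_le_mul_of_nonneg_left hCu (Real.exp_pos _).le
      _ ≤ C₁ := le_csSup hMbdd (Set.mem_insert_of_mem _ ⟨z₀, hz₀b, rfl⟩)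
  -- facts about the `L` norm
  have hAL0 : 0 ≤ ⨆ (z : L) (g : H),
      ‖η ((z : Gc)⁻¹ * ↑g)‖ * Real.exp (N * D.d g) :=
    Real.iSup_nonneg fun w => Real.iSup_nonneg fun g =>
      mul_nonneg (norm_nonneg _) (Real.exp_pos _).le
  have hALge : ∀ (w : L) (g : H),
      ‖η ((w : Gc)⁻¹ * ↑g)‖ * Real.exp (N * D.d g) ≤
        ⨆ (z : L) (g : H), ‖η ((z : Gc)⁻¹ * ↑g)‖ * Real.exp (N * D.d g) := by
    intro w g
    have hbd1 : BddAbove (Set.range fun g : H =>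
        ‖η ((w : Gc)⁻¹ * ↑g)‖ * Real.exp (N * D.d g)) := by
      refine ⟨C₁, ?_⟩
      rintro _ ⟨g, rfl⟩
      exact hunif w w.2 g
    have hbd2 : BddAbove (Set.range fun w : L =>
        ⨆ g : H, ‖η ((w : Gc)⁻¹ * ↑g)‖ * Real.exp (N * D.d g)) := by
      refine ⟨C₁, ?_⟩
      rintro _ ⟨w, rfl⟩
      exact Real.iSup_le (fun g => hunif w w.2 g) hC₁0
    exact (le_ciSup hbd1 g).trans (le_ciSup hbd2 w)
  -- main estimate
  have hR0 : 0 ≤ Real.exp (N * θ) * ⨆ (z : L) (g : H),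
      ‖η ((z : Gc)⁻¹ * ↑g)‖ * Real.exp (N * D.d g) :=
    mul_nonneg (Real.exp_pos _).le hAL0
  refine Real.iSup_le (fun z => Real.iSup_le (fun g => ?_) hR0) hR0
  have hzHL : (z : Gc) ∈ (H : Set Gc) * L := by
    apply hKL
    have := Set.mul_mem_mul (show (1 : Gc) ∈ (H : Set Gc) from H.one_mem) z.2
    simpa using this
  obtain ⟨a, haH, w, hwL, haw⟩ := hzHL
  set h : H := ⟨a, haH⟩ with hh
  set g' := h⁻¹ * g with hg'
  have hgdecomp : h * g' = g := mul_inv_cancel_left _ _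
  have heq : (z : Gc)⁻¹ * ↑g = w⁻¹ * ↑g' := by
    rw [← haw, hg']
    push_cast
    simp [mul_inv_rev, mul_assoc, hh]
  have hmemh : (h : Gc) ∈ K * L⁻¹ := by
    have ha : a = (z : Gc) * w⁻¹ := by rw [← haw]; exact (mul_inv_cancel_right a w).symm
    rw [show (h : Gc) = a from rfl, ha]
    exact Set.mul_mem_mul z.2 (Set.inv_mem_inv.mpr hwL)
  have hdh : Real.exp ((N : ℝ) * D.d h) ≤ Real.exp (N * θ) :=
    Real.exp_le_exp.mpr (mul_le_mul_of_nonneg_left (hdθ h hmemh) (Nat.cast_nonneg N))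
  have hd : Real.exp ((N : ℝ) * D.d g) ≤
      Real.exp (N * D.d h) * Real.exp (N * D.d g') := by
    conv_lhs => rw [← hgdecomp]
    exact auxd_exp D N h g'
  calc ‖η ((z : Gc)⁻¹ * ↑g)‖ * Real.exp (N * D.d g)
      = ‖η (w⁻¹ * ↑g')‖ * Real.exp (N * D.d g) := by rw [heq]
    _ ≤ ‖η (w⁻¹ * ↑g')‖ * (Real.exp (N * D.d h) * Real.exp (N * D.d g')) :=
        mul_le_mul_of_nonneg_left hd (norm_nonneg _)
    _ = Real.exp (N * D.d h) * (‖η (w⁻¹ * ↑g')‖ * Real.exp (N * D.d g')) := by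
        ring
    _ ≤ Real.exp (N * θ) * (‖η (w⁻¹ * ↑g')‖ * Real.exp (N * D.d g')) :=
        mul_le_mul_of_nonneg_right hdh
          (mul_nonneg (norm_nonneg _) (Real.exp_pos _).le)
    _ ≤ Real.exp (N * θ) * ⨆ (z : L) (g : H),
          ‖η ((z : Gc)⁻¹ * ↑g)‖ * Real.exp (N * D.d g) :=
        mul_le_mul_of_nonneg_left (hALge ⟨w, hwL⟩ g') (Real.exp_pos _).le
end
end

section
/- Let G be a connected Lie group such that G ⊆ G_ℂ and the Lie algebra L(G) is compact. Then there exists a basis (V_n)_{n∈ℕ} of open, connected, relatively compact identity neighbourhoods V_n ⊆ G_ℂ such that closure(V_{n+1}) ⊆ V_n and gV_ng^{-1} = V_n for all n ∈ ℕ and g ∈ G; in addition one can achieve that for each n ∈ ℕ and each compact K ⊆ V_n, the set {gxg^{-1} : g ∈ G, x ∈ K} has compact closure contained in V_n. -/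
open Filter Topology Set MeasureTheory
open scoped Pointwise ENNReal

set_option linter.unusedSectionVars false

noncomputable section

section Incl

variable (X : Type*) [AddCommGroup X] [Module ℂ X] [TopologicalSpace X]
variable {Gc : Type*} [Group Gc] [TopologicalSpace Gc] [IsTopologicalGroup Gc]
  [ChartedSpace X Gc]
variable {E : Type*} [AddCommGroup E] [Module ℂ E] [TopologicalSpace E]
  [IsTopologicalAddGroup E] [ContinuousConstSMul ℂ E]

/-- The inclusion map `𝒜ₙ(G) → 𝒜(G)`. -/
def AnalU.incl {H : Subgroup Gc} {d : H → ℝ} {V : ℕ → Set Gc}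
    {hV : ∀ n, IsOpen (V n)} {hdec : ∀ n, V (n + 1) ⊆ V n} (n : ℕ)
    (γ : Anal X H d (V n) (hV n)) : AnalU X H d V hV hdec :=
  ⟨γ.1, Set.mem_iUnion.mpr ⟨n, γ.2⟩⟩

/-- The inclusion map `Eₙ → E^ω`. -/
def AnVecU.incl {H : Subgroup Gc} {π : H → E → E}
    {hπ : ∀ g : H, IsLinearMap ℂ (π g)} {S : ℕ → Set Gc} {hS : ∀ n, IsOpen (S n)}
    {hdec : ∀ n, S (n + 1) ⊆ S n} (n : ℕ) (v : AnVec X H π hπ (S n) (hS n)) :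
    AnVecU X H π hπ S hS hdec :=
  ⟨v.1, Set.mem_iUnion.mpr ⟨n, v.2⟩⟩

end Incl

/-- Formalization of the hypothesis that the Lie algebra `L(G)` of a connected
group `G ⊆ G_ℂ` is compact.  The (complexified) Lie algebra is modelled on the
chart space `X` of `G_ℂ`, with exponential map `expc` (a local homeomorphism at
`0`) and adjoint action `Ad` of `G` satisfying `exp (Ad g x) = g (exp x) g⁻¹`;
compactness of `L(G)` is expressed by an `Ad(G)`-invariant real inner product on
`X` (equivalently, for connected `G`, an inner product making each `e^{ad(x)}`
an isometry). -/
structure CompactLieAlgebraData (X : Type*) [AddCommGroup X] [Module ℂ X]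
    [Module ℝ X] [IsScalarTower ℝ ℂ X] [TopologicalSpace X]
    {Gc : Type*} [Group Gc] [TopologicalSpace Gc] (H : Subgroup Gc) where
  expc : X → Gc
  expc_zero : expc 0 = 1
  expc_cont : Continuous expc
  localHomeo : ∃ φ : OpenPartialHomeomorph X Gc, (0 : X) ∈ φ.source ∧
    φ.source ∈ 𝓝 (0 : X) ∧ ∀ x ∈ φ.source, φ x = expc x
  Ad : H → X ≃ₗ[ℂ] X
  ad_exp : ∀ (g : H) (x : X), expc (Ad g x) = (g : Gc) * expc x * (g : Gc)⁻¹
  inner : X → X → ℝ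
  inner_add : ∀ x y z, inner (x + y) z = inner x z + inner y z
  inner_smul : ∀ (c : ℝ) (x y : X), inner (c • x) y = c * inner x y
  inner_comm : ∀ x y, inner x y = inner y x
  inner_pos : ∀ x, x ≠ 0 → 0 < inner x x
  inner_invariant : ∀ (g : H) (x y : X), inner (Ad g x) (Ad g y) = inner x y

open scoped Manifold


theorem t2_of_charted_group {X : Type*} [TopologicalSpace X] [T2Space X]
    {Gc : Type*} [Group Gc] [TopologicalSpace Gc] [IsTopologicalGroup Gc]
    [ChartedSpace X Gc] : T2Space Gc := by
  apply IsTopologicalGroup.t2Space_of_one_sep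
  intro x hx
  set c := chartAt X (1 : Gc) with hc
  by_cases hxs : x ∈ c.source
  · have h1 : (1 : Gc) ∈ c.source := mem_chart_source X 1
    have hne : c 1 ≠ c x := fun h => hx (c.injOn h1 hxs h).symm
    refine ⟨c.source ∩ c ⁻¹' {c x}ᶜ,
      (c.continuousOn.isOpen_inter_preimage c.open_source
        isOpen_compl_singleton).mem_nhds ⟨h1, hne⟩, fun hmem => hmem.2 rfl⟩
  · exact ⟨c.source, c.open_source.mem_nhds (mem_chart_source X 1), hxs⟩

theorem quad_form_facts {kc : ℕ}
    (B : EuclideanSpace ℂ (Fin kc) → EuclideanSpace ℂ (Fin kc) → ℝ)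
    (hadd : ∀ x y z, B (x + y) z = B x z + B y z)
    (hsmul : ∀ (c : ℝ) x y, B (c • x) y = c * B x y)
    (hcomm : ∀ x y, B x y = B y x)
    (hpos : ∀ x, x ≠ 0 → 0 < B x x) :
    Continuous (fun x => B x x) ∧ ∃ m : ℝ, 0 < m ∧ ∀ x, m * ‖x‖ ^ 2 ≤ B x x := by
  have hB00 : B 0 0 = 0 := by
    have h := hsmul 0 0 0; rw [zero_smul] at h; simpa using h
  have hQsq : ∀ (c : ℝ) (y), B (c • y) (c • y) = c ^ 2 * B y y := by
    intro c y; rw [hsmul, hcomm, hsmul, hcomm]; ring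
  have hQcont : Continuous (fun x => B x x) := by
    let L : EuclideanSpace ℂ (Fin kc) →ₗ[ℝ] EuclideanSpace ℂ (Fin kc) →ₗ[ℝ] ℝ :=
      LinearMap.mk₂ ℝ B hadd hsmul
        (fun x y z => by rw [hcomm, hadd, hcomm y x, hcomm z x])
        (fun c x y => by rw [hcomm, hsmul, hcomm]; rfl)
    have hM : Continuous (LinearMap.toContinuousLinearMap.toLinearMap.comp L) :=
      LinearMap.continuous_of_finiteDimensional _
    exact hM.clm_apply continuous_id
  refine ⟨hQcont, ?_⟩
  rcases subsingleton_or_nontrivial (EuclideanSpace ℂ (Fin kc)) with hs | hn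
  · exact ⟨1, one_pos, fun x => by
      have hx : x = 0 := Subsingleton.elim x 0
      simp [hx, hB00]⟩
  · have hsph : IsCompact (Metric.sphere (0 : EuclideanSpace ℂ (Fin kc)) 1) :=
      isCompact_sphere 0 1
    have hne : (Metric.sphere (0 : EuclideanSpace ℂ (Fin kc)) 1).Nonempty :=
      NormedSpace.sphere_nonempty.mpr zero_le_one
    obtain ⟨u, hu, humin⟩ := hsph.exists_isMinOn hne hQcont.continuousOn
    have hun : ‖u‖ = 1 := by simpa using mem_sphere_zero_iff_norm.mp hu
    have hu0 : u ≠ 0 := by intro h; rw [h] at hun; simp at hun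
    refine ⟨B u u, hpos u hu0, fun x => ?_⟩
    rcases eq_or_ne x 0 with rfl | hx0
    · simp [hB00]
    · have hxpos : (0:ℝ) < ‖x‖ := norm_pos_iff.mpr hx0
      set u' := ‖x‖⁻¹ • x with hu'
      have hu'n : ‖u'‖ = 1 := by
        rw [hu', norm_smul]
        simp [abs_of_pos (inv_pos.mpr hxpos), inv_mul_cancel₀ hxpos.ne']
      have hmem : u' ∈ Metric.sphere (0 : EuclideanSpace ℂ (Fin kc)) 1 :=
        mem_sphere_zero_iff_norm.mpr hu'n
      have hxu : x = ‖x‖ • u' := by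
        rw [hu', smul_smul, mul_inv_cancel₀ hxpos.ne', one_smul]
      calc B u u * ‖x‖ ^ 2 ≤ B u' u' * ‖x‖ ^ 2 := by gcongr; exact humin hmem
        _ = ‖x‖ ^ 2 * B u' u' := by ring
        _ = B (‖x‖ • u') (‖x‖ • u') := (hQsq _ _).symm
        _ = B x x := by rw [← hxu]

/-- **Lemma.** Let `G ⊆ G_ℂ` be a connected Lie group whose Lie algebra `L(G)` is
compact.  Then there is a basis `(Vₙ)` of open, connected, relatively compact
identity neighbourhoods in `G_ℂ` with `closure (V (n+1)) ⊆ V n` and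
`g Vₙ g⁻¹ = Vₙ` for all `n` and `g ∈ G`; in addition one can achieve that for each
`n` and each compact `K ⊆ Vₙ` the set `{g x g⁻¹ : g ∈ G, x ∈ K}` has compact
closure contained in `Vₙ`. -/
theorem statement15
    {kc : ℕ} {Gc : Type*} [Group Gc] [TopologicalSpace Gc] [IsTopologicalGroup Gc]
    [ChartedSpace (EuclideanSpace ℂ (Fin kc)) Gc]
    [LieGroup 𝓘(ℂ, EuclideanSpace ℂ (Fin kc)) (⊤ : ℕ∞) Gc]
    (H : Subgroup Gc) [ConnectedSpace H]
    -- the Lie algebra of `G` is compact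
    (LG : CompactLieAlgebraData (EuclideanSpace ℂ (Fin kc)) H) :
    ∃ V : ℕ → Set Gc,
      (∀ n, IsOpen (V n)) ∧
      (∀ n, IsConnected (V n)) ∧
      (∀ n, IsCompact (closure (V n))) ∧
      (∀ n, (1 : Gc) ∈ V n) ∧
      (∀ n, closure (V (n + 1)) ⊆ V n) ∧
      -- `(Vₙ)` is a neighbourhood basis at `1`
      (∀ W ∈ 𝓝 (1 : Gc), ∃ n, V n ⊆ W) ∧
      -- conjugation invariance under `G`
      (∀ (n : ℕ) (g : H), (fun z => (g : Gc) * z * (g : Gc)⁻¹) '' V n = V n) ∧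
      -- compact closures of `G`-conjugates of compact subsets
      (∀ (n : ℕ) (K : Set Gc), K ⊆ V n → IsCompact K →
        IsCompact (closure {z : Gc | ∃ g : H, ∃ x ∈ K, z = (g : Gc) * x * (g : Gc)⁻¹}) ∧
        closure {z : Gc | ∃ g : H, ∃ x ∈ K, z = (g : Gc) * x * (g : Gc)⁻¹} ⊆ V n) := by
  haveI hT2 : T2Space Gc := t2_of_charted_group (X := EuclideanSpace ℂ (Fin kc))
  obtain ⟨φ, h0, hsrc, heq⟩ := LG.localHomeo
  obtain ⟨hQcont, m, hm, hmle⟩ := quad_form_facts LG.inner LG.inner_add LG.inner_smul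
    LG.inner_comm LG.inner_pos
  set Q : EuclideanSpace ℂ (Fin kc) → ℝ := fun x => LG.inner x x with hQdef
  have hQ0 : Q 0 = 0 := by
    have h := LG.inner_smul 0 0 0; rw [zero_smul] at h; simpa using h
  have hQnn : ∀ x, 0 ≤ Q x := by
    intro x
    rcases eq_or_ne x 0 with rfl | hx
    · rw [hQ0]
    · exact (LG.inner_pos x hx).le
  have hQsq : ∀ (c : ℝ) (y), Q (c • y) = c ^ 2 * Q y := by
    intro c y
    show LG.inner _ _ = _
    rw [LG.inner_smul, LG.inner_comm, LG.inner_smul, LG.inner_comm]; ring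
  obtain ⟨ε, hε, hball⟩ := Metric.mem_nhds_iff.mp hsrc
  set r : ℕ → ℝ := fun n => m * ε ^ 2 / 2 ^ n with hrdef
  have hrpos : ∀ n, 0 < r n := fun n => by positivity
  have hrdec : ∀ n, r (n + 1) < r n := by
    intro n
    apply div_lt_div_of_pos_left (by positivity) (by positivity)
    exact pow_lt_pow_right₀ one_lt_two (Nat.lt_succ_self n)
  have hrle : ∀ n, r n ≤ m * ε ^ 2 := by
    intro n
    rw [hrdef]
    exact div_le_self (by positivity) (one_le_pow₀ one_le_two)
  set Bq : ℝ → Set (EuclideanSpace ℂ (Fin kc)) := fun ρ => {x | Q x < ρ} with hBqdef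
  set cQ : ℝ → Set (EuclideanSpace ℂ (Fin kc)) := fun ρ => {x | Q x ≤ ρ} with hcQdef
  have hBop : ∀ ρ, IsOpen (Bq ρ) := fun ρ => isOpen_lt hQcont continuous_const
  have hBsub : ∀ n, Bq (r n) ⊆ Metric.ball 0 ε := by
    intro n x hx
    have h1 : m * ‖x‖ ^ 2 ≤ Q x := hmle x
    have h2 : Q x < m * ε ^ 2 := lt_of_lt_of_le hx (hrle n)
    have h3 : ‖x‖ ^ 2 < ε ^ 2 := by nlinarith
    have h4 : ‖x‖ < ε := by nlinarith [norm_nonneg x]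
    exact mem_ball_zero_iff.mpr h4
  have hBsrc : ∀ n, Bq (r n) ⊆ φ.source := fun n => (hBsub n).trans hball
  have hcQc : ∀ ρ, IsCompact (cQ ρ) := by
    intro ρ
    refine (isCompact_closedBall (0 : EuclideanSpace ℂ (Fin kc))
      (Real.sqrt (ρ / m))).of_isClosed_subset
      (isClosed_le hQcont continuous_const) ?_
    intro x hx
    have hx' : Q x ≤ ρ := hx
    have h1 : m * ‖x‖ ^ 2 ≤ Q x := hmle x
    have h2 : ‖x‖ ^ 2 ≤ ρ / m := by
      rw [le_div_iff₀ hm]; nlinarith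
    have h3 : ‖x‖ ≤ Real.sqrt (ρ / m) := by
      have := Real.sqrt_le_sqrt h2
      rwa [Real.sqrt_sq (norm_nonneg x)] at this
    exact mem_closedBall_zero_iff.mpr h3
  have h0mem : ∀ n, (0 : EuclideanSpace ℂ (Fin kc)) ∈ Bq (r n) := by
    intro n; show Q 0 < r n; rw [hQ0]; exact hrpos n
  have hφ1 : φ 0 = 1 := (heq 0 h0).trans LG.expc_zero
  set V : ℕ → Set Gc := fun n => LG.expc '' Bq (r n) with hVdef
  have himeq : ∀ n, V n = φ '' Bq (r n) := fun n =>
    Set.image_congr fun x hx => (heq x (hBsrc n hx)).symm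
  have hVopen : ∀ n, IsOpen (V n) := by
    intro n
    rw [himeq n]
    exact φ.isOpen_image_of_subset_source (hBop _) (hBsrc n)
  have hVtar : ∀ n, V n ⊆ φ.target := by
    intro n
    rw [himeq n]
    exact fun x ⟨y, hy, hyx⟩ => hyx ▸ φ.map_source (hBsrc n hy)
  have hclos : ∀ n, closure (V n) ⊆ LG.expc '' cQ (r n) := by
    intro n
    refine closure_minimal (Set.image_mono fun x hx =>
      (show Q x ≤ r n from le_of_lt hx)) ?_
    exact ((hcQc (r n)).image LG.expc_cont).isClosed
  have hcQB : ∀ n, cQ (r (n + 1)) ⊆ Bq (r n) := fun n x hx =>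
    lt_of_le_of_lt hx (hrdec n)
  refine ⟨V, hVopen, ?_, ?_, ?_, ?_, ?_, ?_, ?_⟩
  · -- connected
    intro n
    have hpc : IsPathConnected (Bq (r n)) := by
      refine ⟨0, h0mem n, fun {y} hy => ?_⟩
      refine ⟨⟨⟨fun t => (t : ℝ) • y, ?_⟩, ?_, ?_⟩, ?_⟩
      · exact (continuous_subtype_val.comp continuous_id).smul continuous_const
      · simp
      · simp
      · intro t
        show Q ((t : ℝ) • y) < r n
        rw [hQsq]
        have h1 : (t : ℝ) ^ 2 ≤ 1 := by
          have h2 := t.2.1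
          have h3 := t.2.2
          nlinarith
        have hy' : Q y < r n := hy
        nlinarith [hQnn y, hy', hrpos n, mul_le_of_le_one_left (hQnn y) h1]
    exact hpc.isConnected.image _ LG.expc_cont.continuousOn
  · -- relatively compact
    intro n
    exact ((hcQc (r n)).image LG.expc_cont).of_isClosed_subset isClosed_closure (hclos n)
  · -- 1 ∈ V n
    exact fun n => ⟨0, h0mem n, LG.expc_zero⟩
  · -- nested
    intro n
    refine (hclos (n + 1)).trans ?_
    exact Set.image_mono (hcQB n)
  · -- basis
    intro W hW
    have hc : ContinuousAt φ 0 := φ.continuousAt h0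
    have hpre : φ ⁻¹' W ∈ 𝓝 (0 : EuclideanSpace ℂ (Fin kc)) :=
      hc.preimage_mem_nhds (hφ1 ▸ hW)
    obtain ⟨ε', hε', hball'⟩ := Metric.mem_nhds_iff.mp hpre
    obtain ⟨n, hn⟩ := exists_pow_lt_of_lt_one
      (show (0 : ℝ) < m * ε' ^ 2 / (m * ε ^ 2) by positivity)
      (by norm_num : (1 / 2 : ℝ) < 1)
    have hrn : r n < m * ε' ^ 2 := by
      have h1 : r n = m * ε ^ 2 * (1 / 2 : ℝ) ^ n := by
        show m * ε ^ 2 / 2 ^ n = m * ε ^ 2 * ((1 : ℝ) / 2) ^ n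
        rw [div_pow, one_pow, mul_one_div]
      have h2 : m * ε ^ 2 * (1 / 2 : ℝ) ^ n < m * ε ^ 2 * (m * ε' ^ 2 / (m * ε ^ 2)) :=
        mul_lt_mul_of_pos_left hn (by positivity)
      have h3 : m * ε ^ 2 * (m * ε' ^ 2 / (m * ε ^ 2)) = m * ε' ^ 2 := by
        field_simp
      rw [h1]; rw [h3] at h2; exact h2
    refine ⟨n, ?_⟩
    rintro _ ⟨x, hx, rfl⟩
    have hx' : Q x < r n := hx
    have h1 : m * ‖x‖ ^ 2 ≤ Q x := hmle x
    have h2 : Q x < m * ε' ^ 2 := lt_trans hx' hrn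
    have h3 : ‖x‖ ^ 2 < ε' ^ 2 := by nlinarith
    have h4 : ‖x‖ < ε' := by nlinarith [norm_nonneg x]
    have h6 : φ x ∈ W := hball' (mem_ball_zero_iff.mpr h4)
    rwa [heq x (hBsrc n hx)] at h6
  · -- conjugation invariance
    intro n g
    have hAdQ : ∀ y, Q (LG.Ad g y) = Q y := fun y => LG.inner_invariant g y y
    have hAdim : (LG.Ad g) '' Bq (r n) = Bq (r n) := by
      apply Set.Subset.antisymm
      · rintro _ ⟨y, hy, rfl⟩
        show Q (LG.Ad g y) < r n
        rw [hAdQ]; exact hy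
      · intro x hx
        refine ⟨(LG.Ad g).symm x, ?_, (LG.Ad g).apply_symm_apply x⟩
        show Q ((LG.Ad g).symm x) < r n
        have h := hAdQ ((LG.Ad g).symm x)
        rw [(LG.Ad g).apply_symm_apply] at h
        rw [← h]; exact hx
    calc (fun z => (g : Gc) * z * (g : Gc)⁻¹) '' V n
        = ((fun z => (g : Gc) * z * (g : Gc)⁻¹) ∘ LG.expc) '' Bq (r n) := by
          rw [hVdef, ← Set.image_comp]
      _ = (LG.expc ∘ (LG.Ad g)) '' Bq (r n) :=
          Set.image_congr fun y _ => (LG.ad_exp g y).symm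
      _ = LG.expc '' ((LG.Ad g) '' Bq (r n)) := Set.image_comp _ _ _
      _ = V n := by rw [hAdim]
  · -- compact conjugate closures
    intro n K hKV hK
    set C := {z : Gc | ∃ g : H, ∃ x ∈ K, z = (g : Gc) * x * (g : Gc)⁻¹} with hCdef
    rcases K.eq_empty_or_nonempty with rfl | hKne
    · have hCe : C = ∅ := by
        ext z; simp [hCdef]
      rw [hCe, closure_empty]
      exact ⟨isCompact_empty, Set.empty_subset _⟩
    · have htar : K ⊆ φ.target := hKV.trans (hVtar n)
      have hKim : K ⊆ φ '' Bq (r n) := by rw [← himeq n]; exact hKV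
      set L := φ.symm '' K with hLdef
      have hLsub : L ⊆ Bq (r n) := by
        rintro _ ⟨x, hx, rfl⟩
        obtain ⟨y, hy, rfl⟩ := hKim hx
        rw [φ.left_inv (hBsrc n hy)]
        exact hy
      have hLcomp : IsCompact L :=
        hK.image_of_continuousOn (φ.continuousOn_symm.mono htar)
      have hLne : L.Nonempty := hKne.image _
      obtain ⟨y0, hy0, hmax⟩ := hLcomp.exists_isMaxOn hLne hQcont.continuousOn
      have hslt : Q y0 < r n := hLsub hy0
      have hCsub : C ⊆ LG.expc '' cQ (Q y0) := by
        rintro z ⟨g, x, hx, rfl⟩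
        have hyL : φ.symm x ∈ L := ⟨x, hx, rfl⟩
        have hyQ : Q (φ.symm x) ≤ Q y0 := hmax hyL
        have hxeq : x = LG.expc (φ.symm x) := by
          rw [← heq _ (hBsrc n (hLsub hyL)), φ.right_inv (htar hx)]
        refine ⟨LG.Ad g (φ.symm x), ?_, ?_⟩
        · show Q (LG.Ad g (φ.symm x)) ≤ Q y0
          rw [show Q (LG.Ad g (φ.symm x)) = Q (φ.symm x) from
            LG.inner_invariant g _ _]
          exact hyQ
        · rw [LG.ad_exp g (φ.symm x), ← hxeq]
      have hKc : IsCompact (LG.expc '' cQ (Q y0)) := (hcQc _).image LG.expc_cont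
      have hCl : closure C ⊆ LG.expc '' cQ (Q y0) :=
        closure_minimal hCsub hKc.isClosed
      have hfin : LG.expc '' cQ (Q y0) ⊆ V n := by
        rw [hVdef]
        exact Set.image_mono fun x hx => lt_of_le_of_lt hx hslt
      exact ⟨hKc.of_isClosed_subset isClosed_closure hCl, hCl.trans hfin⟩
end
end
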